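/- arXiv:2202.02435 — 13 statements merged into one kernel-verified Lean document; each statement's English description precedes it below -/
import Mathlib

section
/- Suppose p : [0,T] × ℝ^d → (0,∞) is continuous and, for each t ∈ [0,T], p(t,·) is a density of the pushforward of μ₀ under Φ(t,·), i.e. for every Borel set A ⊆ ℝ^d one has μ₀(Φ(t,·)⁻¹(A)) = ∫_A p(t,y) dy. Then for every x ∈ ℝ^d the function t ↦ log p(t, Φ(t,x)) is differentiable on [0,T] with derivative equal to −∑_{k=1}^d (∂f_k/∂y_k)(t, Φ(t,x)); that is, along the solution trajectory y(t) = Φ(t,x), (d/dt) log p(t, y(t)) = −div f(t, y(t)). (Instantaneous change of variables.) -/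
open MeasureTheory

noncomputable def detCM (d : ℕ) :
    ContinuousMultilinearMap ℝ (fun _ : Fin d => (Fin d → ℝ)) ℝ :=
  MultilinearMap.mkContinuous
    (Matrix.detRowAlternating : (Fin d → ℝ) [⋀^Fin d]→ₗ[ℝ] ℝ).toMultilinearMap
    (Nat.factorial d) <| by
  intro m
  have h1 : ‖(Matrix.detRowAlternating (R := ℝ) (n := Fin d)).toMultilinearMap m‖
      = |Matrix.det (Matrix.of m)| := rfl
  rw [h1, Matrix.det_apply]
  refine le_trans (Finset.abs_sum_le_sum_abs _ _) ?_
  have hcard : (Finset.univ : Finset (Equiv.Perm (Fin d))).card = Nat.factorial d := by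
    simp [Finset.card_univ, Fintype.card_perm]
  calc ∑ σ : Equiv.Perm (Fin d), |Equiv.Perm.sign σ • ∏ i, Matrix.of m (σ i) i|
      ≤ ∑ _σ : Equiv.Perm (Fin d), ∏ i, ‖m i‖ := by
        refine Finset.sum_le_sum fun σ _ => ?_
        rw [show |Equiv.Perm.sign σ • ∏ i, Matrix.of m (σ i) i| = |∏ i, m (σ i) i| by
          rcases Int.units_eq_one_or (Equiv.Perm.sign σ) with h | h <;> simp [h]]
        rw [Finset.abs_prod]
        have : ∏ i, |m (σ i) i| ≤ ∏ i, ‖m (σ i)‖ := by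
          refine Finset.prod_le_prod (fun i _ => abs_nonneg _) fun i _ => ?_
          exact norm_le_pi_norm (m (σ i)) i
        refine this.trans ?_
        rw [Equiv.prod_comp σ (fun i => ‖m i‖)]
      _ = (Nat.factorial d : ℝ) * ∏ i, ‖m i‖ := by
        rw [Finset.sum_const, hcard, nsmul_eq_mul]

lemma detCM_apply (d : ℕ) (m : Fin d → Fin d → ℝ) : detCM d m = Matrix.det (Matrix.of m) := rfl

/-- Liouville-type identity: `∑ i, det (update M i ((A*M) i)) = trace A * det M`. -/
lemma sum_det_update (d : ℕ) (A M : Matrix (Fin d) (Fin d) ℝ) :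
    ∑ i, detCM d (Function.update (M : Fin d → Fin d → ℝ) i ((A * M) i)) =
      Matrix.trace A * M.det := by
  have key : ∀ i, detCM d (Function.update (M : Fin d → Fin d → ℝ) i ((A * M) i))
      = A i i * M.det := by
    intro i
    have hrow : (A * M) i = ∑ j, A i j • (M j : Fin d → ℝ) := by
      funext k
      simp [Matrix.mul_apply, Finset.sum_apply]
    rw [hrow]
    have hsum : detCM d (Function.update (M : Fin d → Fin d → ℝ) i (∑ j, A i j • (M j : Fin d → ℝ)))
        = ∑ j, detCM d (Function.update (M : Fin d → Fin d → ℝ) i (A i j • (M j : Fin d → ℝ))) :=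
      (detCM d).toMultilinearMap.map_update_sum Finset.univ i _ _
    rw [hsum]
    have : ∀ j, detCM d (Function.update (M : Fin d → Fin d → ℝ) i (A i j • M j))
        = A i j * detCM d (Function.update (M : Fin d → Fin d → ℝ) i (M j)) := by
      intro j
      erw [(detCM d).map_update_smul]
      simp
    simp_rw [this]
    rw [Finset.sum_eq_single i]
    · erw [Function.update_eq_self]
      rfl
    · intro j _ hj
      have : detCM d (Function.update (M : Fin d → Fin d → ℝ) i (M j)) = 0 := by
        have := (Matrix.detRowAlternating (R := ℝ) (n := Fin d)).map_eq_zero_of_eq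
          (Function.update (M : Fin d → Fin d → ℝ) i (M j)) (i := i) (j := j)
          (by erw [Function.update_self, Function.update_of_ne hj]) (Ne.symm hj)
        exact this
      rw [this, mul_zero]
    · simp
  simp_rw [key]
  rw [← Finset.sum_mul]
  rfl

/-- Derivative of the determinant along a curve satisfying a linear ODE. -/
lemma det_hasDerivWithinAt (d : ℕ) {M : ℝ → (Fin d → Fin d → ℝ)}
    {A : Matrix (Fin d) (Fin d) ℝ} {s : Set ℝ} {t : ℝ}
    (hM : HasDerivWithinAt M ((A * Matrix.of (M t) : Matrix (Fin d) (Fin d) ℝ) :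
      Fin d → Fin d → ℝ) s t) :
    HasDerivWithinAt (fun u => Matrix.det (Matrix.of (M u)))
      (Matrix.trace A * (Matrix.of (M t)).det) s t := by
  have h := ((detCM d).hasFDerivAt (M t)).comp_hasDerivWithinAt t hM
  have hval : ((detCM d).linearDeriv (M t)) ((A * Matrix.of (M t) : Matrix (Fin d) (Fin d) ℝ) :
      Fin d → Fin d → ℝ) = Matrix.trace A * (Matrix.of (M t)).det := by
    erw [ContinuousMultilinearMap.linearDeriv_apply]
    exact sum_det_update d A (Matrix.of (M t))
  rw [hval] at h
  exact h


set_option maxHeartbeats 2000000 in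
/-- **Instantaneous change of variables.** Let `Φ` be a C² flow on `[0,T] × ℝ^d` of a C¹
vector field `f`, such that each `Φ(t,·)` is a bijection with everywhere nonzero spatial
Jacobian determinant. Let `μ₀` be the probability measure with continuous positive density
`p₀`, and suppose `p(t,·)` is a continuous positive density for the pushforward of `μ₀`
under `Φ(t,·)`. Then along each trajectory `t ↦ Φ(t,x)`,
`(d/dt) log p(t, Φ(t,x)) = − div f(t, Φ(t,x))`. -/
theorem instantaneous_change_of_variables
    (T : ℝ) (hT : 0 < T) (d : ℕ)
    (f : ℝ → (Fin d → ℝ) → (Fin d → ℝ))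
    (hf : ContDiff ℝ 1 (Function.uncurry f))
    (Φ : ℝ → (Fin d → ℝ) → (Fin d → ℝ))
    (hΦ : ContDiffOn ℝ 2 (Function.uncurry Φ) (Set.Icc 0 T ×ˢ Set.univ))
    (hΦ0 : ∀ x, Φ 0 x = x)
    (hflow : ∀ t ∈ Set.Icc (0:ℝ) T, ∀ x,
      HasDerivWithinAt (fun s => Φ s x) (f t (Φ t x)) (Set.Icc 0 T) t)
    (hbij : ∀ t ∈ Set.Icc (0:ℝ) T, Function.Bijective (Φ t))
    (hjac : ∀ t ∈ Set.Icc (0:ℝ) T, ∀ x, (fderiv ℝ (Φ t) x).det ≠ 0)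
    (p₀ : (Fin d → ℝ) → ℝ)
    (hp₀pos : ∀ y, 0 < p₀ y) (hp₀cont : Continuous p₀)
    (hp₀prob : ∫ y, p₀ y = 1)
    (p : ℝ → (Fin d → ℝ) → ℝ)
    (hppos : ∀ t ∈ Set.Icc (0:ℝ) T, ∀ y, 0 < p t y)
    (hpcont : ContinuousOn (Function.uncurry p) (Set.Icc 0 T ×ˢ Set.univ))
    (hdensity : ∀ t ∈ Set.Icc (0:ℝ) T, ∀ A : Set (Fin d → ℝ), MeasurableSet A →
      (volume.withDensity fun y => ENNReal.ofReal (p₀ y)) (Φ t ⁻¹' A)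
        = ∫⁻ y in A, ENNReal.ofReal (p t y)) :
    ∀ x : Fin d → ℝ, ∀ t ∈ Set.Icc (0:ℝ) T,
      HasDerivWithinAt (fun s => Real.log (p s (Φ s x)))
        (-(∑ k, fderiv ℝ (fun y => f t y k) (Φ t x) (Pi.single k 1)))
        (Set.Icc 0 T) t := by
  classical
  set S : Set (ℝ × (Fin d → ℝ)) := Set.Icc (0:ℝ) T ×ˢ Set.univ with hS_def
  set F : ℝ × (Fin d → ℝ) → (Fin d → ℝ) := Function.uncurry Φ with hF_def
  have hS_ud : UniqueDiffOn ℝ S := (uniqueDiffOn_Icc hT).prod uniqueDiffOn_univ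
  have hS_conv : Convex ℝ S := (convex_Icc 0 T).prod convex_univ
  have hS_int : interior S = Set.Ioo (0:ℝ) T ×ˢ Set.univ := by
    rw [hS_def, interior_prod_eq, interior_Icc, interior_univ]
  have hne : (interior S).Nonempty := by
    rw [hS_int]
    exact (Set.nonempty_Ioo.2 hT).prod Set.univ_nonempty
  have hmem : ∀ s ∈ Set.Icc (0:ℝ) T, ∀ y, (s, y) ∈ S := by
    intro s hs y; exact ⟨hs, Set.mem_univ y⟩
  -- each Φ s is C²
  have hΦs : ∀ s ∈ Set.Icc (0:ℝ) T, ContDiff ℝ 2 (Φ s) := by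
    intro s hs
    rw [← contDiffOn_univ]
    have : ContDiffOn ℝ 2 (F ∘ fun y => (s, y)) Set.univ :=
      hΦ.comp ((contDiff_const.prodMk contDiff_id).contDiffOn) (fun y _ => hmem s hs y)
    exact this
  -- full spatial derivative within S
  set D : ℝ × (Fin d → ℝ) → (ℝ × (Fin d → ℝ)) →L[ℝ] (Fin d → ℝ) :=
    fderivWithin ℝ F S with hD_def
  have hFd : ∀ z ∈ S, HasFDerivWithinAt F (D z) S z := by
    intro z hz
    exact ((hΦ.differentiableOn (by norm_num)) z hz).hasFDerivWithinAt
  -- relation between spatial fderiv of Φ s and D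
  have hJrel : ∀ s ∈ Set.Icc (0:ℝ) T, ∀ y : Fin d → ℝ,
      fderiv ℝ (Φ s) y = (D (s, y)).comp (ContinuousLinearMap.inr ℝ ℝ (Fin d → ℝ)) := by
    intro s hs y
    have h1 : HasFDerivAt (fun y' : Fin d → ℝ => (s, y'))
        (ContinuousLinearMap.inr ℝ ℝ (Fin d → ℝ)) y := hasFDerivAt_prodMk_right s y
    have h2 : HasFDerivWithinAt (Φ s)
        ((D (s, y)).comp (ContinuousLinearMap.inr ℝ ℝ (Fin d → ℝ))) Set.univ y :=
      (hFd (s, y) (hmem s hs y)).comp y h1.hasFDerivWithinAt (fun y' _ => hmem s hs y')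
    rw [hasFDerivWithinAt_univ] at h2
    exact h2.fderiv
  -- time derivative of F within S is f
  have hTrel : ∀ s ∈ Set.Icc (0:ℝ) T, ∀ y : Fin d → ℝ,
      D (s, y) (1, 0) = f s (Φ s y) := by
    intro s hs y
    have h1 : HasDerivWithinAt (fun u : ℝ => (u, y)) ((1:ℝ), (0 : Fin d → ℝ))
        (Set.Icc 0 T) s := ((hasDerivAt_id s).prodMk (hasDerivAt_const s y)).hasDerivWithinAt
    have h2 : HasDerivWithinAt (fun u => Φ u y) (D (s, y) (1, 0)) (Set.Icc 0 T) s :=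
      by have := (hFd (s, y) (hmem s hs y)).comp_hasDerivWithinAt s h1 (fun u hu => hmem u hu y); exact this
    have hud : UniqueDiffWithinAt ℝ (Set.Icc (0:ℝ) T) s := uniqueDiffOn_Icc hT s hs
    rw [← h2.derivWithin hud, (hflow s hs y).derivWithin hud]
  intro x t ht
  -- second derivative
  set D2 : (ℝ × (Fin d → ℝ)) →L[ℝ] (ℝ × (Fin d → ℝ)) →L[ℝ] (Fin d → ℝ) :=
    fderivWithin ℝ D S (t, x) with hD2_def
  have hD1 : ContDiffOn ℝ 1 D S := hΦ.fderivWithin hS_ud (by norm_num)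
  have hD2d : HasFDerivWithinAt D D2 S (t, x) :=
    ((hD1.differentiableOn (by norm_num)) (t, x) (hmem t ht x)).hasFDerivWithinAt
  have hsymm : ∀ v w, D2 v w = D2 w v := by
    intro v w
    have hder : ∀ z ∈ interior S, HasFDerivAt F (D z) z := by
      intro z hz
      exact (hFd z (interior_subset hz)).hasFDerivAt (mem_interior_iff_mem_nhds.1 hz)
    exact hS_conv.second_derivative_within_at_symmetric hne hder (hmem t ht x)
      (hD2d.mono interior_subset) v w
  -- A = spatial derivative of the vector field at the current point
  set A : (Fin d → ℝ) →L[ℝ] (Fin d → ℝ) := fderiv ℝ (fun y => f t y) (Φ t x) with hA_def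
  set J : ℝ → (Fin d → ℝ) →L[ℝ] (Fin d → ℝ) := fun s => fderiv ℝ (Φ s) x with hJ_def
  have hft : Differentiable ℝ (fun y => f t y) := by
    have : ContDiff ℝ 1 (Function.uncurry f ∘ fun y => ((t:ℝ), y)) :=
      hf.comp (contDiff_const.prodMk contDiff_id)
    exact this.differentiable one_ne_zero
  -- time derivative of the Jacobian: J' = A ∘ J
  -- full derivative of uncurry f at the current point
  set Df : (ℝ × (Fin d → ℝ)) →L[ℝ] (Fin d → ℝ) :=
    fderiv ℝ (Function.uncurry f) (t, Φ t x) with hDf_def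
  have hA_eq : A = Df.comp (ContinuousLinearMap.inr ℝ ℝ (Fin d → ℝ)) := by
    have h1 : HasFDerivAt (Function.uncurry f) Df (t, Φ t x) :=
      (hf.differentiable one_ne_zero (t, Φ t x)).hasFDerivAt
    have h2 : HasFDerivAt (fun y : Fin d → ℝ => ((t:ℝ), y))
        (ContinuousLinearMap.inr ℝ ℝ (Fin d → ℝ)) (Φ t x) := hasFDerivAt_prodMk_right t (Φ t x)
    exact (h1.comp (Φ t x) h2).fderiv
  have hJd : HasDerivWithinAt J (A.comp (J t)) (Set.Icc 0 T) t := by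
    -- derivative of s ↦ D (s, x)
    have hsx : HasDerivWithinAt (fun s => D (s, x)) (D2 (1, 0)) (Set.Icc 0 T) t := by
      have h1 : HasDerivWithinAt (fun u : ℝ => (u, x)) ((1:ℝ), (0 : Fin d → ℝ))
          (Set.Icc 0 T) t := ((hasDerivAt_id t).prodMk (hasDerivAt_const t x)).hasDerivWithinAt
      exact hD2d.comp_hasDerivWithinAt t h1 (fun u hu => hmem u hu x)
    -- compose with precomposition by inr
    have hcomp : HasDerivWithinAt
        (fun s => (D (s, x)).comp (ContinuousLinearMap.inr ℝ ℝ (Fin d → ℝ)))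
        ((D2 (1, 0)).comp (ContinuousLinearMap.inr ℝ ℝ (Fin d → ℝ))) (Set.Icc 0 T) t := by
      have := hsx.clm_comp (hasDerivWithinAt_const t (Set.Icc (0:ℝ) T)
        (ContinuousLinearMap.inr ℝ ℝ (Fin d → ℝ)))
      simpa using this
    have hJd0 : HasDerivWithinAt J
        ((D2 (1, 0)).comp (ContinuousLinearMap.inr ℝ ℝ (Fin d → ℝ))) (Set.Icc 0 T) t :=
      hcomp.congr (fun s hs => hJrel s hs x) (hJrel t ht x)
    -- identify the derivative
    have hvalue : (D2 (1, 0)).comp (ContinuousLinearMap.inr ℝ ℝ (Fin d → ℝ))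
        = A.comp (J t) := by
      -- derivative of z ↦ D z (1,0) within S
      set ev : ((ℝ × (Fin d → ℝ)) →L[ℝ] (Fin d → ℝ)) →L[ℝ] (Fin d → ℝ) :=
        ContinuousLinearMap.apply ℝ (Fin d → ℝ) ((1:ℝ), (0 : Fin d → ℝ)) with hev_def
      have hg : HasFDerivWithinAt (fun z => D z (1, 0)) (ev.comp D2) S (t, x) :=
        ev.hasFDerivAt.comp_hasFDerivWithinAt (t, x) hD2d
      -- derivative of z ↦ f z.1 (F z) within S
      have hG : HasFDerivWithinAt (fun z : ℝ × (Fin d → ℝ) => (z.1, F z))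
          ((ContinuousLinearMap.fst ℝ ℝ (Fin d → ℝ)).prod (D (t, x))) S (t, x) :=
        (hasFDerivAt_fst.hasFDerivWithinAt).prodMk (hFd (t, x) (hmem t ht x))
      have hh : HasFDerivWithinAt (fun z : ℝ × (Fin d → ℝ) => Function.uncurry f (z.1, F z))
          (Df.comp ((ContinuousLinearMap.fst ℝ ℝ (Fin d → ℝ)).prod (D (t, x)))) S (t, x) := by
        have h1 : HasFDerivAt (Function.uncurry f) Df ((t:ℝ), Φ t x) :=
          (hf.differentiable one_ne_zero (t, Φ t x)).hasFDerivAt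
        exact h1.comp_hasFDerivWithinAt (t, x) hG
      -- the two functions agree on S
      have heq : ∀ z ∈ S, D z (1, 0) = Function.uncurry f (z.1, F z) := by
        intro z hz
        exact hTrel z.1 hz.1 z.2
      have hg' : HasFDerivWithinAt (fun z => D z (1, 0))
          (Df.comp ((ContinuousLinearMap.fst ℝ ℝ (Fin d → ℝ)).prod (D (t, x)))) S (t, x) :=
        hh.congr heq (heq (t, x) (hmem t ht x))
      have huniq : ev.comp D2
          = Df.comp ((ContinuousLinearMap.fst ℝ ℝ (Fin d → ℝ)).prod (D (t, x))) :=
        (hS_ud (t, x) (hmem t ht x)).eq hg hg'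
      -- now evaluate
      ext v
      have e1 : ((D2 (1, 0)).comp (ContinuousLinearMap.inr ℝ ℝ (Fin d → ℝ))) v
          = D2 ((0 : ℝ), v) ((1:ℝ), (0 : Fin d → ℝ)) := by
        simp only [ContinuousLinearMap.comp_apply, ContinuousLinearMap.inr_apply]
        rw [hsymm ((1:ℝ), (0 : Fin d → ℝ)) ((0:ℝ), v)]
      have e2 : D2 ((0 : ℝ), v) ((1:ℝ), (0 : Fin d → ℝ))
          = (ev.comp D2) ((0 : ℝ), v) := rfl
      have e3 : (Df.comp ((ContinuousLinearMap.fst ℝ ℝ (Fin d → ℝ)).prod (D (t, x))))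
          ((0 : ℝ), v) = Df ((0:ℝ), D (t, x) ((0:ℝ), v)) := by
        simp [ContinuousLinearMap.prod_apply]
      have e4 : D (t, x) ((0:ℝ), v) = J t v := by
        show D (t, x) ((0:ℝ), v) = fderiv ℝ (Φ t) x v
        rw [hJrel t ht x]
        rfl
      rw [e1, e2, huniq, e3, e4, hA_eq]
      rfl
    rw [← hvalue]
    exact hJd0
  -- matrix versions
  set Mm : ℝ → (Fin d → Fin d → ℝ) := fun s => fun i j => J s (Pi.single j 1) i with hMm_def
  set Am : Matrix (Fin d) (Fin d) ℝ := Matrix.of (fun i j => A (Pi.single j 1) i) with hAm_def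
  have hdetM : ∀ s, (Matrix.of (Mm s)).det = (J s).det := by
    intro s
    have hM : Matrix.of (Mm s) = LinearMap.toMatrix'
        ((J s : (Fin d → ℝ) →L[ℝ] (Fin d → ℝ)) : (Fin d → ℝ) →ₗ[ℝ] (Fin d → ℝ)) := by
      ext i j
      rw [LinearMap.toMatrix'_apply]
      show J s (Pi.single j 1) i = J s (Pi.single j 1) i
      have hsingle : (Pi.single j 1 : Fin d → ℝ) = fun j' => if j' = j then 1 else 0 := by
        funext j'
        simp [Pi.single_apply]
      rw [hsingle]
    rw [hM, LinearMap.det_toMatrix']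
  have hMd : HasDerivWithinAt Mm ((Am * Matrix.of (Mm t) : Matrix (Fin d) (Fin d) ℝ) :
      Fin d → Fin d → ℝ) (Set.Icc 0 T) t := by
    have hentry : ∀ i j : Fin d, HasDerivWithinAt (fun s => J s (Pi.single j 1) i)
        ((A.comp (J t)) (Pi.single j 1) i) (Set.Icc 0 T) t := by
      intro i j
      have h1 := (ContinuousLinearMap.apply ℝ (Fin d → ℝ)
          (Pi.single j 1 : Fin d → ℝ)).hasFDerivAt.comp_hasDerivWithinAt t hJd
      have h2 := (ContinuousLinearMap.proj (R := ℝ) (φ := fun _ : Fin d => ℝ)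
          i).hasFDerivAt.comp_hasDerivWithinAt t h1
      exact h2
    have hpi : HasDerivWithinAt Mm (fun i j => (A.comp (J t)) (Pi.single j 1) i)
        (Set.Icc 0 T) t :=
      hasDerivWithinAt_pi.2 fun i => hasDerivWithinAt_pi.2 fun j => hentry i j
    have hval : (fun i j => (A.comp (J t)) (Pi.single j 1) i)
        = ((Am * Matrix.of (Mm t) : Matrix (Fin d) (Fin d) ℝ) : Fin d → Fin d → ℝ) := by
      funext i j
      have hw : (J t (Pi.single j 1) : Fin d → ℝ)
          = ∑ k, (J t (Pi.single j 1) k) • (Pi.single k 1 : Fin d → ℝ) := by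
        funext m
        simp [Finset.sum_apply, Pi.single_apply]
      show A (J t (Pi.single j 1)) i = _
      rw [hw]
      rw [map_sum]
      have : ∀ k : Fin d, (A ((J t (Pi.single j 1) k) • (Pi.single k 1 : Fin d → ℝ)))
          = (J t (Pi.single j 1) k) • A (Pi.single k 1) := fun k => A.map_smul _ _
      simp_rw [this]
      simp only [Matrix.mul_apply, Finset.sum_apply, Pi.smul_apply, smul_eq_mul]
      refine Finset.sum_congr rfl fun k _ => ?_
      show (J t (Pi.single j 1) k) * A (Pi.single k 1) i = Am i k * Mm t k j
      rw [hAm_def, hMm_def]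
      simp [mul_comm]
    rw [← hval]
    exact hpi
  have hDd : HasDerivWithinAt (fun s => (J s).det)
      (Matrix.trace Am * (J t).det) (Set.Icc 0 T) t := by
    have h := det_hasDerivWithinAt d hMd
    rw [hdetM t] at h
    exact h.congr (fun s _ => (hdetM s).symm) ((hdetM t).symm)
  have hDnz : ∀ s ∈ Set.Icc (0:ℝ) T, (J s).det ≠ 0 := fun s hs => hjac s hs x
  -- the density identity
  have hkey : ∀ s ∈ Set.Icc (0:ℝ) T, ∀ y : Fin d → ℝ,
      p₀ y = |(fderiv ℝ (Φ s) y).det| * p s (Φ s y) := by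
    intro s hs y
    have hΦc : Continuous (Φ s) := (hΦs s hs).continuous
    have hfdc : Continuous fun z => fderiv ℝ (Φ s) z :=
      (hΦs s hs).continuous_fderiv (by norm_num)
    have hdetc : Continuous fun z => (fderiv ℝ (Φ s) z).det :=
      ContinuousLinearMap.continuous_det.comp hfdc
    have hpsc : Continuous (p s) := by
      have h1 : ContinuousOn (fun z : Fin d → ℝ => Function.uncurry p (s, z)) Set.univ :=
        hpcont.comp ((continuous_const.prodMk continuous_id).continuousOn)
          (fun z _ => hmem s hs z)
      rw [← continuousOn_univ]
      exact h1
    have hinj : Function.Injective (Φ s) := (hbij s hs).1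
    have hme : MeasurableEmbedding (Φ s) := hΦc.measurable.measurableEmbedding hinj
    have hdiff : ∀ z ∈ (Set.univ : Set (Fin d → ℝ)), HasFDerivWithinAt (Φ s)
        (fderiv ℝ (Φ s) z) Set.univ z := fun z _ =>
      (((hΦs s hs).differentiable (by norm_num)) z).hasFDerivAt.hasFDerivWithinAt
    -- equality of set-lintegrals for every measurable set
    have hprod : (fun z => ENNReal.ofReal |(fderiv ℝ (Φ s) z).det|
        * ENNReal.ofReal (p s (Φ s z)))
        = fun z => ENNReal.ofReal (|(fderiv ℝ (Φ s) z).det| * p s (Φ s z)) := by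
      funext z
      rw [← ENNReal.ofReal_mul (abs_nonneg _)]
    have hcv : ∀ B : Set (Fin d → ℝ), MeasurableSet B →
        ∫⁻ z in B, ENNReal.ofReal (p₀ z)
          = ∫⁻ z in B, ENNReal.ofReal (|(fderiv ℝ (Φ s) z).det| * p s (Φ s z)) := by
      intro B hB
      have himg : MeasurableSet (Φ s '' B) := hme.measurableSet_image.2 hB
      have h1 := hdensity s hs (Φ s '' B) himg
      rw [Set.preimage_image_eq B hinj, withDensity_apply _ hB] at h1
      have h2 := lintegral_image_eq_lintegral_abs_det_fderiv_mul volume hB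
        (fun z _ => ((((hΦs s hs).differentiable (by norm_num)) z).hasFDerivAt).hasFDerivWithinAt)
        (hinj.injOn) (fun z => ENNReal.ofReal (p s z))
      refine (h1.trans h2).trans ?_
      exact lintegral_congr fun z => congrFun hprod z
    have hmeas1 : Measurable fun z => ENNReal.ofReal (p₀ z) :=
      (ENNReal.measurable_ofReal).comp hp₀cont.measurable
    have hmeas2 : Measurable fun z =>
        ENNReal.ofReal (|(fderiv ℝ (Φ s) z).det| * p s (Φ s z)) :=
      (ENNReal.measurable_ofReal).comp ((hdetc.abs.mul (hpsc.comp hΦc)).measurable)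
    have hae := ae_eq_of_forall_setLIntegral_eq_of_sigmaFinite hmeas1 hmeas2
      (fun B hB _ => hcv B hB)
    have hcont1 : Continuous fun z => ENNReal.ofReal (p₀ z) :=
      ENNReal.continuous_ofReal.comp hp₀cont
    have hcont2 : Continuous fun z =>
        ENNReal.ofReal (|(fderiv ℝ (Φ s) z).det| * p s (Φ s z)) :=
      ENNReal.continuous_ofReal.comp (hdetc.abs.mul (hpsc.comp hΦc))
    have heq := (Continuous.ae_eq_iff_eq volume hcont1 hcont2).1 hae
    have hy := congrFun heq y
    have hy' : ENNReal.ofReal (p₀ y)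
        = ENNReal.ofReal (|(fderiv ℝ (Φ s) y).det| * p s (Φ s y)) := hy
    have h0 : (0:ℝ) ≤ |(fderiv ℝ (Φ s) y).det| * p s (Φ s y) :=
      mul_nonneg (abs_nonneg _) (le_of_lt (hppos s hs (Φ s y)))
    exact (ENNReal.ofReal_eq_ofReal_iff (le_of_lt (hp₀pos y)) h0).1 hy'
  -- trace identity
  have htrace : Matrix.trace Am
      = ∑ k, fderiv ℝ (fun y => f t y k) (Φ t x) (Pi.single k 1) := by
    rw [Matrix.trace]
    refine Finset.sum_congr rfl fun k _ => ?_
    have hcomp : fderiv ℝ (fun y => f t y k) (Φ t x)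
        = (ContinuousLinearMap.proj (R := ℝ) (φ := fun _ : Fin d => ℝ) k).comp A := by
      have h1 : HasFDerivAt (fun y => f t y) A (Φ t x) := (hft (Φ t x)).hasFDerivAt
      have h2 := ((ContinuousLinearMap.proj (R := ℝ) (φ := fun _ : Fin d => ℝ) k).hasFDerivAt
        (x := f t (Φ t x))).comp (Φ t x) h1
      exact h2.fderiv
    rw [hcomp]
    rfl
  -- final assembly
  have hlog : HasDerivWithinAt (fun s => Real.log (p₀ x) - Real.log ((J s).det))
      (-(Matrix.trace Am)) (Set.Icc 0 T) t := by
    have h1 : HasDerivWithinAt (fun s => Real.log ((J s).det))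
        (Matrix.trace Am * (J t).det / (J t).det) (Set.Icc 0 T) t :=
      hDd.log (hDnz t ht)
    rw [mul_div_assoc, div_self (hDnz t ht), mul_one] at h1
    simpa using h1.const_sub (Real.log (p₀ x))
  have hlogeq : ∀ s ∈ Set.Icc (0:ℝ) T,
      Real.log (p s (Φ s x)) = Real.log (p₀ x) - Real.log ((J s).det) := by
    intro s hs
    have hk := hkey s hs x
    have habs : |(J s).det| ≠ 0 := abs_ne_zero.2 (hDnz s hs)
    have hps : p s (Φ s x) = p₀ x / |(J s).det| := by
      rw [hk]
      field_simp
      rfl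
    rw [hps, Real.log_div (ne_of_gt (hp₀pos x)) habs, Real.log_abs]
  rw [← htrace]
  exact hlog.congr (fun s hs => hlogeq s hs) (hlogeq t ht)
end

section
/- Let T > 0 and let a < b < c be real numbers. There do not exist: a function f : ℝ × ℝ → ℝ that is continuous in its first argument and uniformly Lipschitz in its second argument, differentiable functions y_a, y_b, y_c : [0,T] → ℝ with y_a(0) = a, y_b(0) = b, y_c(0) = c and y'(t) = f(t, y(t)) for each of them on [0,T], and an affine map ℓ : ℝ → ℝ, such that ℓ(y_a(T)) < 0, ℓ(y_c(T)) < 0 and ℓ(y_b(T)) > 0. (An unaugmented one-dimensional neural ODE followed by an affine readout cannot linearly separate {a, c} from {b}.) -/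
open Set

/-- Comparison: solutions of the same Lipschitz ODE preserve initial order. -/
lemma ode_comparison (T : ℝ) (f : ℝ → ℝ → ℝ) (C : ℝ) (hC : 0 < C)
    (hlip : ∀ t y₁ y₂, |f t y₁ - f t y₂| ≤ C * |y₁ - y₂|)
    (y z : ℝ → ℝ)
    (hy : ∀ t ∈ Set.Icc (0:ℝ) T, HasDerivWithinAt y (f t (y t)) (Set.Icc 0 T) t)
    (hz : ∀ t ∈ Set.Icc (0:ℝ) T, HasDerivWithinAt z (f t (z t)) (Set.Icc 0 T) t)
    (h0 : y 0 < z 0) : ∀ t ∈ Set.Icc (0:ℝ) T, y t ≤ z t := by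
  have hlipW : ∀ t, LipschitzOnWith C.toNNReal (f t) Set.univ := by
    intro t
    rw [lipschitzOnWith_univ]
    intro y₁ y₂
    rw [edist_dist, edist_dist, Real.dist_eq, Real.dist_eq]
    have := hlip t y₁ y₂
    rw [show ((C.toNNReal : NNReal) : ENNReal) = ENNReal.ofReal C from rfl,
      ← ENNReal.ofReal_mul hC.le]
    exact ENNReal.ofReal_le_ofReal this
  by_contra h
  push_neg at h
  obtain ⟨t, ht, hlt⟩ := h
  have ht0 : 0 < t := by
    rcases lt_or_eq_of_le ht.1 with h' | h'
    · exact h'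
    · exact absurd h0 (by rw [← h'] at hlt; linarith)
  have hsub : Set.Icc (0:ℝ) t ⊆ Set.Icc 0 T := Set.Icc_subset_Icc le_rfl ht.2
  have hcy : ContinuousOn y (Set.Icc 0 t) :=
    fun s hs => ((hy s (hsub hs)).continuousWithinAt).mono hsub
  have hcz : ContinuousOn z (Set.Icc 0 t) :=
    fun s hs => ((hz s (hsub hs)).continuousWithinAt).mono hsub
  -- IVT: there is s ∈ [0,t] with y s = z s
  have hivt : ∃ s ∈ Set.Icc (0:ℝ) t, (y - z) s = 0 := by
    have := intermediate_value_Icc ht0.le (hcy.sub hcz)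
    have hmem : (0:ℝ) ∈ Set.Icc ((y - z) 0) ((y - z) t) := by
      constructor <;> simp <;> linarith
    obtain ⟨s, hs, hs0⟩ := this hmem
    exact ⟨s, hs, hs0⟩
  obtain ⟨s, hs, hseq⟩ := hivt
  have hseq' : y s = z s := by simpa [sub_eq_zero] using hseq
  have hs0 : 0 < s := by
    rcases lt_or_eq_of_le hs.1 with h' | h'
    · exact h'
    · exact absurd h0 (by rw [← h'] at hseq'; linarith)
  have hsT : s ≤ T := le_trans hs.2 ht.2
  -- backward uniqueness on [0, s]
  have hderiv : ∀ (u : ℝ → ℝ), (∀ r ∈ Set.Icc (0:ℝ) T,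
      HasDerivWithinAt u (f r (u r)) (Set.Icc 0 T) r) →
      ∀ r ∈ Set.Ioc (0:ℝ) s, HasDerivWithinAt u (f r (u r)) (Set.Iic r) r := by
    intro u hu r hr
    have hrT : r ∈ Set.Icc (0:ℝ) T := ⟨hr.1.le, le_trans hr.2 hsT⟩
    refine (hu r hrT).mono_of_mem_nhdsWithin ?_
    have : Set.Ioi (0:ℝ) ∈ nhdsWithin r (Set.Iic r) :=
      nhdsWithin_le_nhds (Ioi_mem_nhds hr.1)
    filter_upwards [this, self_mem_nhdsWithin] with x hx1 hx2
    exact ⟨hx1.le, le_trans hx2 (le_trans hr.2 hsT)⟩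
  have hsubs : Set.Icc (0:ℝ) s ⊆ Set.Icc 0 T := Set.Icc_subset_Icc le_rfl hsT
  have huniq := ODE_solution_unique_of_mem_Icc_left (K := C.toNNReal)
    (v := f) (s := fun _ => (Set.univ : Set ℝ)) (fun t _ => hlipW t)
    (fun r hr => ((hy r (hsubs hr)).continuousWithinAt).mono hsubs)
    (hderiv y hy) (fun _ _ => Set.mem_univ _)
    (fun r hr => ((hz r (hsubs hr)).continuousWithinAt).mono hsubs)
    (hderiv z hz) (fun _ _ => Set.mem_univ _) hseq'
  have := huniq (Set.mem_Icc.mpr ⟨le_rfl, hs0.le⟩)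
  linarith

/-- **An unaugmented one-dimensional neural ODE followed by an affine readout cannot
linearly separate `{a, c}` from `{b}`** when `a < b < c`: there is no time-dependent vector
field (continuous in time, uniformly Lipschitz in space), solutions started at `a`, `b`, `c`,
and affine map `ℓ(x) = w x + v` with `ℓ(y_a(T)) < 0`, `ℓ(y_c(T)) < 0` and `ℓ(y_b(T)) > 0`. -/
theorem no_affine_separation_of_unaugmented_node
    (T : ℝ) (hT : 0 < T) (a b c : ℝ) (hab : a < b) (hbc : b < c) :
    ¬ ∃ (f : ℝ → ℝ → ℝ) (ya yb yc : ℝ → ℝ) (w v : ℝ),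
      (∀ y, Continuous fun t => f t y) ∧
      (∃ C > 0, ∀ t y₁ y₂, |f t y₁ - f t y₂| ≤ C * |y₁ - y₂|) ∧
      ya 0 = a ∧ yb 0 = b ∧ yc 0 = c ∧
      (∀ t ∈ Set.Icc (0:ℝ) T, HasDerivWithinAt ya (f t (ya t)) (Set.Icc 0 T) t) ∧
      (∀ t ∈ Set.Icc (0:ℝ) T, HasDerivWithinAt yb (f t (yb t)) (Set.Icc 0 T) t) ∧
      (∀ t ∈ Set.Icc (0:ℝ) T, HasDerivWithinAt yc (f t (yc t)) (Set.Icc 0 T) t) ∧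
      w * ya T + v < 0 ∧ w * yc T + v < 0 ∧ 0 < w * yb T + v := by
  rintro ⟨f, ya, yb, yc, w, v, _hcont, ⟨C, hC, hlip⟩, ha0, hb0, hc0, hya, hyb, hyc,
    hA, hCn, hB⟩
  have hTm : T ∈ Set.Icc (0:ℝ) T := ⟨hT.le, le_rfl⟩
  have h1 : ya T ≤ yb T :=
    ode_comparison T f C hC hlip ya yb hya hyb (by rw [ha0, hb0]; exact hab) T hTm
  have h2 : yb T ≤ yc T :=
    ode_comparison T f C hC hlip yb yc hyb hyc (by rw [hb0, hc0]; exact hbc) T hTm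
  rcases le_or_gt w 0 with hw | hw
  · nlinarith
  · nlinarith
end

section
/- Fix T > 0 and d, d_l, d_o ∈ ℕ with d_l ≥ d + d_o. For every continuous F : ℝ^d → ℝ^{d_o}, every compact K ⊆ ℝ^d and every ε > 0, there exist a Lipschitz continuous function f : ℝ × ℝ^{d_l} → ℝ^{d_l}, an affine map ℓ₁ : ℝ^d → ℝ^{d_l} and an affine map ℓ₂ : ℝ^{d_l} → ℝ^{d_o} such that for every x ∈ K, the (unique) differentiable solution y_x : [0,T] → ℝ^{d_l} of y_x(0) = ℓ₁(x), y_x'(t) = f(t, y_x(t)) for t ∈ [0,T] satisfies ‖F(x) − ℓ₂(y_x(T))‖ < ε. (Augmented neural ODEs with Lipschitz vector fields, composed with affine maps, are universal approximators of continuous functions, uniformly on compact sets.) -/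
open Set Metric Real

section ApproxAux

lemma euclid_abs_coord_le {n : ℕ} (v : EuclideanSpace ℝ (Fin n)) (j : Fin n) :
    |v j| ≤ ‖v‖ := by
  rw [EuclideanSpace.norm_eq, ← Real.sqrt_sq_eq_abs]
  apply Real.sqrt_le_sqrt
  have := Finset.single_le_sum (f := fun i => (v i)^2) (fun i _ => sq_nonneg _)
    (Finset.mem_univ j)
  simpa [sq_abs] using this

end ApproxAux
lemma lipschitz_approx_on_compact {d dO : ℕ}
    (F : EuclideanSpace ℝ (Fin d) → EuclideanSpace ℝ (Fin dO)) (hF : Continuous F)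
    (K : Set (EuclideanSpace ℝ (Fin d))) (hK : IsCompact K) (ε : ℝ) (hε : 0 < ε) :
    ∃ (C : NNReal) (G : EuclideanSpace ℝ (Fin d) → EuclideanSpace ℝ (Fin dO)),
      LipschitzWith C G ∧ ∀ x ∈ K, ‖F x - G x‖ < ε := by
  rcases K.eq_empty_or_nonempty with rfl | hne
  · exact ⟨0, fun _ => 0, LipschitzWith.const 0, by simp⟩
  haveI : Nonempty K := hne.to_subtype
  -- bound on F over K
  obtain ⟨M₀, hM₀⟩ := hK.exists_bound_of_continuousOn hF.continuousOn
  set M : ℝ := max M₀ 0 with hM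
  have hMnn : 0 ≤ M := le_max_right _ _
  have hMb : ∀ x ∈ K, ∀ j, |F x j| ≤ M := fun x hx j =>
    (euclid_abs_coord_le (F x) j).trans ((hM₀ x hx).trans (le_max_left _ _))
  -- choose the coordinatewise accuracy
  set ε' : ℝ := ε / (Real.sqrt dO + 1) with hε'def
  have hsq : (0:ℝ) < Real.sqrt dO + 1 :=
    lt_of_lt_of_le one_pos (by nlinarith [Real.sqrt_nonneg (dO:ℝ)])
  have hε' : 0 < ε' := div_pos hε hsq
  -- uniform continuity
  obtain ⟨δ, hδ, hδ'⟩ := (Metric.uniformContinuousOn_iff.1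
    (hK.uniformContinuousOn_of_continuous hF.continuousOn)) ε' hε'
  set L : ℝ := max 1 ((2*M+1)/δ) with hLdef
  have hL1 : (1:ℝ) ≤ L := le_max_left _ _
  have hL0 : (0:ℝ) ≤ L := zero_le_one.trans hL1
  have hLδ : 2*M+1 ≤ L * δ := by
    calc 2*M+1 = ((2*M+1)/δ) * δ := by field_simp
    _ ≤ L * δ := by
        apply mul_le_mul_of_nonneg_right (le_max_right _ _) hδ.le
  -- the inf-convolution
  set g : EuclideanSpace ℝ (Fin d) → Fin dO → ℝ :=
    fun x j => ⨅ y : K, (F y j + L * dist x y) with hgdef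
  have hbdd : ∀ (x : EuclideanSpace ℝ (Fin d)) (j : Fin dO),
      BddBelow (Set.range fun y : K => F (y:_) j + L * dist x (y : EuclideanSpace ℝ (Fin d))) := by
    intro x j
    refine ⟨-M, ?_⟩
    rintro r ⟨y, rfl⟩
    have h1 : -M ≤ F (y:_) j := neg_le_of_abs_le (hMb _ y.2 j)
    have h2 : (0:ℝ) ≤ dist x (y : EuclideanSpace ℝ (Fin d)) := dist_nonneg
    dsimp only
    nlinarith
  have hg_le : ∀ x ∈ K, ∀ j, g x j ≤ F x j := by
    intro x hx j
    have := ciInf_le (hbdd x j) (⟨x, hx⟩ : K)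
    simpa using this
  have hg_ge : ∀ x ∈ K, ∀ j, F x j - ε' ≤ g x j := by
    intro x hx j
    refine le_ciInf fun y => ?_
    rcases lt_or_ge (dist x y) δ with h | h
    · have h2 : dist (F x) (F y) < ε' := hδ' x hx y y.2 h
      have h3 : |F x j - F y j| ≤ dist (F x) (F y) := by
        have := euclid_abs_coord_le (F x - F y) j
        simpa [dist_eq_norm] using this
      have := abs_sub_le_iff.1 h3
      nlinarith [dist_nonneg (x := x) (y := (y : EuclideanSpace ℝ (Fin d)))]
    · have h1 : -M ≤ F (y:_) j := neg_le_of_abs_le (hMb _ y.2 j)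
      have h2 : F x j ≤ M := le_of_abs_le (hMb _ hx j)
      have h3 : L * δ ≤ L * dist x y := mul_le_mul_of_nonneg_left h hL0
      nlinarith
  have hg_lip : ∀ j x x', g x j ≤ g x' j + L * dist x x' := by
    intro j x x'
    rw [← sub_le_iff_le_add]
    refine le_ciInf fun y => ?_
    have h1 : g x j ≤ F (y:_) j + L * dist x y := ciInf_le (hbdd x j) y
    have h2 : dist x y ≤ dist x x' + dist x' y := dist_triangle _ _ _
    nlinarith
  have hg_dist : ∀ j x x', |g x j - g x' j| ≤ L * dist x x' := by
    intro j x x'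
    rw [abs_sub_le_iff]
    constructor
    · have := hg_lip j x x'; linarith
    · have := hg_lip j x' x; rw [dist_comm] at this; linarith
  set G : EuclideanSpace ℝ (Fin d) → EuclideanSpace ℝ (Fin dO) :=
    fun x => (WithLp.equiv 2 (Fin dO → ℝ)).symm (g x) with hGdef
  have hGapp : ∀ x j, G x j = g x j := fun x j => rfl
  have key : ∀ (u v : EuclideanSpace ℝ (Fin dO)) (r : ℝ), 0 ≤ r →
      (∀ j, |u j - v j| ≤ r) → ‖u - v‖ ≤ Real.sqrt dO * r := by
    intro u v r hr h
    rw [EuclideanSpace.norm_eq]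
    have : ∑ i, ‖(u - v) i‖^2 ≤ ∑ _i : Fin dO, r^2 := by
      apply Finset.sum_le_sum
      intro i _
      have : ‖(u-v) i‖ = |u i - v i| := by
        simp [Real.norm_eq_abs]
      rw [this]
      exact pow_le_pow_left₀ (abs_nonneg _) (h i) 2
    calc Real.sqrt (∑ i, ‖(u - v) i‖^2) ≤ Real.sqrt (∑ _i : Fin dO, r^2) :=
          Real.sqrt_le_sqrt this
      _ = Real.sqrt ((dO:ℝ) * r^2) := by simp [Finset.sum_const, mul_comm]
      _ = Real.sqrt dO * r := by
          rw [Real.sqrt_mul (Nat.cast_nonneg _), Real.sqrt_sq hr]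
  refine ⟨(Real.sqrt dO * L).toNNReal, G, ?_, ?_⟩
  · apply LipschitzWith.of_dist_le_mul
    intro x x'
    rw [Real.coe_toNNReal _ (by positivity)]
    have : dist (G x) (G x') = ‖G x - G x'‖ := dist_eq_norm _ _
    rw [this]
    have := key (G x) (G x') (L * dist x x') (by positivity)
      (fun j => by rw [hGapp, hGapp]; exact hg_dist j x x')
    calc ‖G x - G x'‖ ≤ Real.sqrt dO * (L * dist x x') := this
      _ = Real.sqrt dO * L * dist x x' := by ring
  · intro x hx
    have hcoord : ∀ j, |F x j - G x j| ≤ ε' := by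
      intro j
      rw [hGapp, abs_sub_le_iff]
      exact ⟨by have := hg_ge x hx j; linarith, by have := hg_le x hx j; linarith⟩
    have := key (F x) (G x) ε' hε'.le hcoord
    calc ‖F x - G x‖ ≤ Real.sqrt dO * ε' := this
      _ < (Real.sqrt dO + 1) * ε' := by nlinarith
      _ = ε := by rw [hε'def]; field_simp
noncomputable section NeuralODEAux

def neuralProj (d dl : ℕ) (hd : d ≤ dl) :
    EuclideanSpace ℝ (Fin dl) →ₗ[ℝ] EuclideanSpace ℝ (Fin d) where
  toFun w := (WithLp.equiv 2 (Fin d → ℝ)).symm fun i => w (Fin.castLE hd i)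
  map_add' w v := by ext i; simp
  map_smul' c w := by ext i; simp

def neuralInj1 (d dl : ℕ) :
    EuclideanSpace ℝ (Fin d) →ₗ[ℝ] EuclideanSpace ℝ (Fin dl) where
  toFun x := (WithLp.equiv 2 (Fin dl → ℝ)).symm fun j =>
    if h : (j : ℕ) < d then x ⟨j, h⟩ else 0
  map_add' w v := by ext j; by_cases h : (j:ℕ) < d <;> simp [h]
  map_smul' c w := by ext j; by_cases h : (j:ℕ) < d <;> simp [h]

def neuralInj2 (d dO dl : ℕ) :
    EuclideanSpace ℝ (Fin dO) →ₗ[ℝ] EuclideanSpace ℝ (Fin dl) where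
  toFun z := (WithLp.equiv 2 (Fin dl → ℝ)).symm fun j =>
    if h : (j : ℕ) - d < dO ∧ d ≤ (j : ℕ) then z ⟨(j : ℕ) - d, h.1⟩ else 0
  map_add' w v := by ext j; by_cases h : ((j:ℕ) - d < dO ∧ d ≤ (j:ℕ)) <;> simp [h]
  map_smul' c w := by ext j; by_cases h : ((j:ℕ) - d < dO ∧ d ≤ (j:ℕ)) <;> simp [h]

def neuralRead (d dO dl : ℕ) (h : d + dO ≤ dl) :
    EuclideanSpace ℝ (Fin dl) →ₗ[ℝ] EuclideanSpace ℝ (Fin dO) where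
  toFun w := (WithLp.equiv 2 (Fin dO → ℝ)).symm fun k => w ⟨d + (k : ℕ), by omega⟩
  map_add' w v := by ext k; simp
  map_smul' c w := by ext k; simp

variable {d dO dl : ℕ}

lemma neuralProj_inj1 (hd : d ≤ dl) (x : EuclideanSpace ℝ (Fin d)) :
    neuralProj d dl hd (neuralInj1 d dl x) = x := by
  ext i
  simp [neuralProj, neuralInj1, i.2]

lemma neuralProj_inj2 (hd : d ≤ dl) (z : EuclideanSpace ℝ (Fin dO)) :
    neuralProj d dl hd (neuralInj2 d dO dl z) = 0 := by
  ext i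
  have : ¬ (d ≤ ((Fin.castLE hd i) : ℕ)) := by
    have := i.2; simp only [Fin.coe_castLE]; omega
  simp [neuralProj, neuralInj2, this]

lemma neuralRead_inj1 (h : d + dO ≤ dl) (x : EuclideanSpace ℝ (Fin d)) :
    neuralRead d dO dl h (neuralInj1 d dl x) = 0 := by
  ext k
  have : ¬ (d + (k:ℕ) < d) := by omega
  simp [neuralRead, neuralInj1, this]

lemma neuralRead_inj2 (h : d + dO ≤ dl) (z : EuclideanSpace ℝ (Fin dO)) :
    neuralRead d dO dl h (neuralInj2 d dO dl z) = z := by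
  ext k
  have h1 : d + (k:ℕ) - d < dO ∧ d ≤ d + (k:ℕ) := ⟨by omega, by omega⟩
  simp only [neuralRead, neuralInj2, LinearMap.coe_mk, AddHom.coe_mk,
    WithLp.equiv_symm_apply, WithLp.ofLp_toLp]
  rw [dif_pos h1]
  exact congrArg z (Fin.ext (by simp))

end NeuralODEAux

/-- **Universal approximation with augmented neural ODEs (Lipschitz vector fields).**
For `d_l ≥ d + d_o`, every continuous `F : ℝ^d → ℝ^{d_o}` can be approximated uniformly on
a compact set, to accuracy `ε`, by a model consisting of an affine lift `ℓ₁ : ℝ^d → ℝ^{d_l}`,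
the time-`T` solution map of an ODE with Lipschitz vector field
`f : ℝ × ℝ^{d_l} → ℝ^{d_l}`, and an affine readout `ℓ₂ : ℝ^{d_l} → ℝ^{d_o}`. -/
theorem augmented_neural_ode_universal_approximation
    (T : ℝ) (hT : 0 < T) (d dl dO : ℕ) (hdl : d + dO ≤ dl)
    (F : EuclideanSpace ℝ (Fin d) → EuclideanSpace ℝ (Fin dO)) (hF : Continuous F)
    (K : Set (EuclideanSpace ℝ (Fin d))) (hK : IsCompact K) (ε : ℝ) (hε : 0 < ε) :
    ∃ (f : ℝ → EuclideanSpace ℝ (Fin dl) → EuclideanSpace ℝ (Fin dl)) (C : NNReal)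
      (ℓ₁ : EuclideanSpace ℝ (Fin d) →ᵃ[ℝ] EuclideanSpace ℝ (Fin dl))
      (ℓ₂ : EuclideanSpace ℝ (Fin dl) →ᵃ[ℝ] EuclideanSpace ℝ (Fin dO)),
      LipschitzWith C (Function.uncurry f) ∧
      (∀ x ∈ K, ∃ y : ℝ → EuclideanSpace ℝ (Fin dl),
        y 0 = ℓ₁ x ∧
        ∀ t ∈ Set.Icc (0:ℝ) T, HasDerivWithinAt y (f t (y t)) (Set.Icc 0 T) t) ∧
      ∀ x ∈ K, ∀ y : ℝ → EuclideanSpace ℝ (Fin dl),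
        y 0 = ℓ₁ x →
        (∀ t ∈ Set.Icc (0:ℝ) T, HasDerivWithinAt y (f t (y t)) (Set.Icc 0 T) t) →
        ‖F x - ℓ₂ (y T)‖ < ε := by
  obtain ⟨CG, G, hG, hGK⟩ := lipschitz_approx_on_compact F hF K hK ε hε
  have hd : d ≤ dl := le_trans (Nat.le_add_right d dO) hdl
  set P := neuralProj d dl hd with hP
  set J := neuralInj2 d dO dl with hJ
  set I1 := neuralInj1 d dl with hI1
  set R := neuralRead d dO dl hdl with hR
  set Pc := LinearMap.toContinuousLinearMap P with hPc
  set Jc := LinearMap.toContinuousLinearMap J with hJc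
  set f : ℝ → EuclideanSpace ℝ (Fin dl) → EuclideanSpace ℝ (Fin dl) :=
    fun _ w => T⁻¹ • Jc (G (Pc w)) with hf
  have hlip0 : LipschitzWith (‖T⁻¹‖₊ * (‖Jc‖₊ * (CG * ‖Pc‖₊)))
      (fun w => T⁻¹ • Jc (G (Pc w))) :=
    (lipschitzWith_smul T⁻¹).comp (Jc.lipschitz.comp (hG.comp Pc.lipschitz))
  -- the explicit solution
  set ysol : EuclideanSpace ℝ (Fin d) → ℝ → EuclideanSpace ℝ (Fin dl) :=
    fun x t => I1 x + (t * T⁻¹) • J (G x) with hysol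
  have hPcP : ∀ w, Pc w = P w := fun w => rfl
  have hJcJ : ∀ z, Jc z = J z := fun z => rfl
  have hfval : ∀ x t, f t (ysol x t) = T⁻¹ • J (G x) := by
    intro x t
    have hproj : Pc (ysol x t) = x := by
      rw [hPcP, hysol]
      simp only [hP, hI1, hJ, map_add, map_smul, neuralProj_inj1, neuralProj_inj2, smul_zero, add_zero]
    rw [hf]
    simp only [hproj, hJcJ]
  have hy0 : ∀ x, ysol x 0 = I1 x := by
    intro x; rw [hysol]; simp
  have hderiv : ∀ x, ∀ t ∈ Set.Icc (0:ℝ) T,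
      HasDerivWithinAt (ysol x) (f t (ysol x t)) (Set.Icc 0 T) t := by
    intro x t _
    rw [hfval]
    have h1 : HasDerivAt (fun s : ℝ => (s * T⁻¹) • J (G x)) (T⁻¹ • J (G x)) t :=
      (hasDerivAt_mul_const T⁻¹).smul_const (J (G x))
    exact ((h1.const_add (I1 x)).hasDerivWithinAt)
  -- uniqueness of solutions
  have huniq : ∀ x, ∀ y : ℝ → EuclideanSpace ℝ (Fin dl),
      y 0 = I1 x →
      (∀ t ∈ Set.Icc (0:ℝ) T, HasDerivWithinAt y (f t (y t)) (Set.Icc 0 T) t) →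
      y T = ysol x T := by
    intro x y hy0' hy'
    have hEq : Set.EqOn y (ysol x) (Set.Icc 0 T) := by
      apply ODE_solution_unique_of_mem_Icc_right
        (v := f) (s := fun _ => Set.univ) (K := ‖T⁻¹‖₊ * (‖Jc‖₊ * (CG * ‖Pc‖₊)))
        (fun t _ => hlip0.lipschitzOnWith)
        (fun t ht => (hy' t ht).continuousWithinAt)
        (fun t ht => (hy' t ⟨ht.1, ht.2.le⟩).mono_of_mem_nhdsWithin
          (Filter.mem_of_superset (Icc_mem_nhdsGE_of_mem ⟨le_rfl, ht.2⟩)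
            (Set.Icc_subset_Icc ht.1 le_rfl)))
        (fun t _ => Set.mem_univ _)
        (fun t ht => (hderiv x t ht).continuousWithinAt)
        (fun t ht => (hderiv x t ⟨ht.1, ht.2.le⟩).mono_of_mem_nhdsWithin
          (Filter.mem_of_superset (Icc_mem_nhdsGE_of_mem ⟨le_rfl, ht.2⟩)
            (Set.Icc_subset_Icc ht.1 le_rfl)))
        (fun t _ => Set.mem_univ _)
        (by rw [hy0', hy0])
    exact hEq (Set.right_mem_Icc.2 hT.le)
  have hread : ∀ x, R (ysol x T) = G x := by
    intro x
    rw [hysol]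
    simp only [hR, hI1, hJ, map_add, map_smul, neuralRead_inj1, neuralRead_inj2, zero_add]
    rw [mul_inv_cancel₀ hT.ne', one_smul]
  refine ⟨f, ‖T⁻¹‖₊ * (‖Jc‖₊ * (CG * ‖Pc‖₊)) * 1, I1.toAffineMap, R.toAffineMap,
    hlip0.comp LipschitzWith.prod_snd, ?_, ?_⟩
  · intro x hx
    exact ⟨ysol x, by simpa using hy0 x, hderiv x⟩
  · intro x hx y hy0' hy'
    have h1 : y T = ysol x T := huniq x y (by simpa using hy0') hy'
    have h2 : (R.toAffineMap : _ → _) (y T) = G x := by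
      rw [h1]
      simpa using hread x
    rw [h2]
    exact hGK x hx
end

section
/- Fix T > 0 and d, d_o ∈ ℕ. There exists a family of continuous functions f_m : ℝ^m → ℝ^m, one for each m ∈ ℕ, such that: (i) for every m and every initial value y₀ ∈ ℝ^m, the initial value problem y(0) = y₀, y'(t) = f_m(y(t)) for t ∈ [0,T] has a unique differentiable solution; and (ii) for every continuous F : ℝ^d → ℝ^{d_o}, every compact K ⊆ ℝ^d and every ε > 0, there exist m ∈ ℕ, an affine map ℓ₁ : ℝ^d → ℝ^m and an affine map ℓ₂ : ℝ^m → ℝ^{d_o} such that for every x ∈ K, the unique solution y_x of y_x(0) = ℓ₁(x), y_x'(t) = f_m(y_x(t)) satisfies ‖F(x) − ℓ₂(y_x(T))‖ < ε. (Augmented neural ODEs are universal approximators even when the vector field in each dimension is a single fixed continuous function, i.e. not itself a universal approximator.) -/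
open Set

namespace NeuralODEAux

/-- The fixed vector field in dimension `m`: coordinates below `m/2` (and a possible
leftover odd coordinate) are constant; coordinate `m/2 + i` (for `i < m/2`) evolves as
`v' = u * v` where `u` is coordinate `i`. -/
noncomputable def vecField (m : ℕ) (y : EuclideanSpace ℝ (Fin m)) :
    EuclideanSpace ℝ (Fin m) :=
  WithLp.toLp 2 <| fun j : Fin m =>
    if h : m / 2 ≤ j.val ∧ j.val < 2 * (m / 2) then
      y ⟨j.val - m / 2, lt_of_le_of_lt (Nat.sub_le _ _) j.isLt⟩ * y j
    else 0

/-- Explicit solution formula. -/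
noncomputable def solFormula (m : ℕ) (y₀ : EuclideanSpace ℝ (Fin m)) (t : ℝ) :
    EuclideanSpace ℝ (Fin m) :=
  WithLp.toLp 2 <| fun j : Fin m =>
    if h : m / 2 ≤ j.val ∧ j.val < 2 * (m / 2) then
      y₀ j * Real.exp (y₀ ⟨j.val - m / 2, lt_of_le_of_lt (Nat.sub_le _ _) j.isLt⟩ * t)
    else y₀ j

lemma vecField_continuous (m : ℕ) : Continuous (vecField m) := by
  have h : Continuous (fun y : EuclideanSpace ℝ (Fin m) => (vecField m y : Fin m → ℝ)) := by
    apply continuous_pi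
    intro j
    unfold vecField
    by_cases h : m / 2 ≤ j.val ∧ j.val < 2 * (m / 2) <;> simp only [h, dif_pos, dif_neg,
      not_false_iff, WithLp.ofLp_toLp, PiLp.toLp_apply]
    · exact ((EuclideanSpace.proj (𝕜 := ℝ) _).continuous).mul ((EuclideanSpace.proj j).continuous)
    · exact continuous_const
  have h2 := ((PiLp.continuousLinearEquiv 2 ℝ (fun _ : Fin m => ℝ)).symm.continuous).comp h
  exact h2

lemma comp_proj {m : ℕ} {y : ℝ → EuclideanSpace ℝ (Fin m)} {v : EuclideanSpace ℝ (Fin m)}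
    {s : Set ℝ} {t : ℝ} (h : HasDerivWithinAt y v s t) (j : Fin m) :
    HasDerivWithinAt (fun τ => y τ j) (v j) s t :=
 by
  have h2 := (EuclideanSpace.proj (𝕜 := ℝ) j).hasFDerivAt.comp_hasDerivWithinAt t h
  exact h2

lemma assemble {m : ℕ} {y : ℝ → EuclideanSpace ℝ (Fin m)} {v : EuclideanSpace ℝ (Fin m)}
    {s : Set ℝ} {t : ℝ} (h : ∀ j, HasDerivWithinAt (fun τ => y τ j) (v j) s t) :
    HasDerivWithinAt y v s t := by
  have hp : HasDerivWithinAt (fun τ => (fun j => y τ j : Fin m → ℝ)) (fun j => v j) s t :=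
    hasDerivWithinAt_pi.2 h
  have h2 := ((PiLp.continuousLinearEquiv 2 ℝ (fun _ : Fin m => ℝ)).symm.toContinuousLinearMap
    |>.hasFDerivAt.comp_hasDerivWithinAt t hp)
  exact h2

lemma solFormula_hasDerivAt (m : ℕ) (y₀ : EuclideanSpace ℝ (Fin m))
    {s : Set ℝ} (t : ℝ) :
    HasDerivWithinAt (solFormula m y₀) (vecField m (solFormula m y₀ t)) s t := by
  apply assemble
  intro j
  by_cases h : m / 2 ≤ j.val ∧ j.val < 2 * (m / 2)
  · set i : Fin m := ⟨j.val - m / 2, lt_of_le_of_lt (Nat.sub_le _ _) j.isLt⟩ with hi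
    have hiu : ¬ (m / 2 ≤ i.val ∧ i.val < 2 * (m / 2)) := by
      simp only [hi]
      omega
    have hfun : (fun τ => solFormula m y₀ τ j) = fun τ => y₀ j * Real.exp (y₀ i * τ) := by
      funext τ
      simp [solFormula, h, hi]
    have hval : vecField m (solFormula m y₀ t) j
        = y₀ i * (y₀ j * Real.exp (y₀ i * t)) := by
      simp [vecField, solFormula, h, hiu, hi]
      intro h1 _; exfalso; omega
    rw [hfun, hval]
    have hd := (((hasDerivAt_id t).const_mul (y₀ i)).exp).const_mul (y₀ j)
    simp only [id_eq, mul_one] at hd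
    have heq : y₀ j * (Real.exp (y₀ i * t) * y₀ i) = y₀ i * (y₀ j * Real.exp (y₀ i * t)) := by
      ring
    rw [heq] at hd
    exact hd.hasDerivWithinAt
  · have hfun : (fun τ => solFormula m y₀ τ j) = fun _ => y₀ j := by
      funext τ
      simp [solFormula, h]
    have hval : vecField m (solFormula m y₀ t) j = 0 := by simp [vecField, h]
    rw [hfun, hval]
    exact (hasDerivAt_const t _).hasDerivWithinAt

lemma solFormula_zero (m : ℕ) (y₀ : EuclideanSpace ℝ (Fin m)) :
    solFormula m y₀ 0 = y₀ := by
  ext j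
  by_cases h : m / 2 ≤ j.val ∧ j.val < 2 * (m / 2) <;> simp [solFormula, h]

/-- Any solution on `[0,T]` is given by the explicit formula. -/
lemma sol_unique (m : ℕ) {T : ℝ} (hT : 0 ≤ T) (y : ℝ → EuclideanSpace ℝ (Fin m))
    (hy : ∀ t ∈ Icc (0:ℝ) T, HasDerivWithinAt y (vecField m (y t)) (Icc 0 T) t) :
    ∀ t ∈ Icc (0:ℝ) T, y t = solFormula m (y 0) t := by
  have h0 : (0:ℝ) ∈ Icc (0:ℝ) T := ⟨le_refl _, hT⟩
  -- constancy of the coordinates not in the `v` range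
  have hu : ∀ (j : Fin m), ¬ (m / 2 ≤ j.val ∧ j.val < 2 * (m / 2)) →
      ∀ t ∈ Icc (0:ℝ) T, y t j = y 0 j := by
    intro j hj t ht
    have hder : ∀ τ ∈ Icc (0:ℝ) T,
        HasDerivWithinAt (fun σ => y σ j) ((fun _ : ℝ => (0:ℝ)) τ) (Icc 0 T) τ := by
      intro τ hτ
      have := comp_proj (hy τ hτ) j
      simpa [vecField, hj] using this
    have hb : ∀ τ ∈ Icc (0:ℝ) T, ‖(fun _ : ℝ => (0:ℝ)) τ‖ ≤ 0 := by
      intro τ _; simp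
    have := (convex_Icc (0:ℝ) T).norm_image_sub_le_of_norm_hasDerivWithin_le hder hb h0 ht
    rw [zero_mul] at this
    have := norm_le_zero_iff.mp this
    exact sub_eq_zero.mp this
  intro t ht
  ext j
  by_cases h : m / 2 ≤ j.val ∧ j.val < 2 * (m / 2)
  · set i : Fin m := ⟨j.val - m / 2, lt_of_le_of_lt (Nat.sub_le _ _) j.isLt⟩ with hi
    have hiu : ¬ (m / 2 ≤ i.val ∧ i.val < 2 * (m / 2)) := by
      simp only [hi]; omega
    have hci := hu i hiu
    set c : ℝ := y 0 i with hc
    -- the auxiliary function is constant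
    have hder : ∀ τ ∈ Icc (0:ℝ) T,
        HasDerivWithinAt (fun σ => y σ j * Real.exp (-(c * σ)))
          ((fun _ : ℝ => (0:ℝ)) τ) (Icc 0 T) τ := by
      intro τ hτ
      have h1 : HasDerivWithinAt (fun σ => y σ j) (c * y τ j) (Icc 0 T) τ := by
        have := comp_proj (hy τ hτ) j
        have hval : vecField m (y τ) j = c * y τ j := by
          have hv2 : vecField m (y τ) j = y τ i * y τ j := by
            simp only [vecField, PiLp.toLp_apply]
            rw [dif_pos h]
          rw [hv2, hci τ hτ]
        rwa [hval] at this
      have h2 : HasDerivAt (fun σ : ℝ => Real.exp (-(c * σ)))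
          (Real.exp (-(c * τ)) * (-c)) τ := by
        have := (((hasDerivAt_id τ).const_mul c).neg).exp
        simpa using this
      have h3 := h1.mul h2.hasDerivWithinAt
      have heq : c * y τ j * Real.exp (-(c * τ)) + y τ j * (Real.exp (-(c * τ)) * (-c))
          = 0 := by ring
      rwa [heq] at h3
    have hb : ∀ τ ∈ Icc (0:ℝ) T, ‖(fun _ : ℝ => (0:ℝ)) τ‖ ≤ 0 := by intro τ _; simp
    have hcst := (convex_Icc (0:ℝ) T).norm_image_sub_le_of_norm_hasDerivWithin_le hder hb h0 ht
    rw [zero_mul] at hcst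
    have hcst := sub_eq_zero.mp (norm_le_zero_iff.mp hcst)
    -- hcst : y t j * exp (-(c*t)) = y 0 j * exp 0
    have hexp : Real.exp (-(c * t)) * Real.exp (c * t) = 1 := by
      rw [← Real.exp_add]; simp
    have : y t j = y 0 j * Real.exp (c * t) := by
      have h4 := congrArg (fun z => z * Real.exp (c * t)) hcst
      simp only at h4
      rw [mul_assoc, hexp, mul_one] at h4
      simpa using h4
    simp only [solFormula, h, dif_pos, PiLp.toLp_apply]
    rw [← hi, ← hc]
    exact this
  · have := hu j h t ht
    simp only [solFormula, h, dif_neg, not_false_iff, PiLp.toLp_apply]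
    exact this

section SW

variable {d : ℕ} (K : Set (EuclideanSpace ℝ (Fin d)))

/-- The exponential of an affine functional, restricted to `K`, as a continuous map. -/
noncomputable def expFn (w : Fin d → ℝ) (b : ℝ) : C(K, ℝ) :=
  ⟨fun p => Real.exp ((∑ i, w i * (p : EuclideanSpace ℝ (Fin d)) i) + b), by
    apply Real.continuous_exp.comp
    apply Continuous.add _ continuous_const
    apply continuous_finset_sum
    intro i _
    exact continuous_const.mul ((EuclideanSpace.proj i).continuous.comp
      continuous_subtype_val)⟩

/-- The exponentials of affine functionals form a submonoid of `C(K, ℝ)`. -/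
noncomputable def expSubmonoid : Submonoid C(K, ℝ) where
  carrier := {g | ∃ w b, g = expFn K w b}
  one_mem' := ⟨0, 0, by ext p; simp [expFn]⟩
  mul_mem' := by
    rintro a b ⟨w1, b1, rfl⟩ ⟨w2, b2, rfl⟩
    refine ⟨w1 + w2, b1 + b2, ?_⟩
    ext p
    simp only [expFn, ContinuousMap.mul_apply, ContinuousMap.coe_mk, ← Real.exp_add]
    congr 1
    simp only [Pi.add_apply, add_mul, Finset.sum_add_distrib]
    ring

lemma approx (hK : IsCompact K) (G : EuclideanSpace ℝ (Fin d) → ℝ) (hG : Continuous G)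
    {δ : ℝ} (hδ : 0 < δ) :
    ∃ (n : ℕ) (coef : Fin n → ℝ) (w : Fin n → Fin d → ℝ) (b : Fin n → ℝ),
      ∀ x ∈ K, |G x - ∑ k, coef k * Real.exp ((∑ i, w k i * x i) + b k)| < δ := by
  haveI : CompactSpace K := isCompact_iff_compactSpace.mp hK
  set A := Algebra.adjoin ℝ ((expSubmonoid K : Submonoid C(K, ℝ)) : Set C(K, ℝ)) with hA
  have hsep : A.SeparatesPoints := by
    rintro ⟨x, hx⟩ ⟨z, hz⟩ hxz
    have hne : ∃ i, x i ≠ z i := by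
      by_contra hc
      push_neg at hc
      exact hxz (Subtype.ext (PiLp.ext fun i => hc i))
    obtain ⟨i, hi⟩ := hne
    refine ⟨_, ⟨expFn K (Pi.single i 1) 0, Algebra.subset_adjoin ⟨Pi.single i 1, 0, rfl⟩,
      rfl⟩, ?_⟩
    have hxv : ∀ v : EuclideanSpace ℝ (Fin d),
        (∑ l, (Pi.single i (1:ℝ) : Fin d → ℝ) l * v l) + 0 = v i := by
      intro v
      simp [Pi.single_apply, ite_mul, Finset.sum_ite_eq', Finset.mem_univ]
    simp only [expFn, ContinuousMap.coe_mk]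
    rw [hxv x, hxv z]
    exact fun hcon => hi (Real.exp_injective hcon)
  have htop := ContinuousMap.subalgebra_topologicalClosure_eq_top_of_separatesPoints A hsep
  set g0 : C(K, ℝ) := ⟨fun p => G p, hG.comp continuous_subtype_val⟩ with hg0
  have hmem : g0 ∈ closure (A : Set C(K, ℝ)) := by
    have : g0 ∈ A.topologicalClosure := by rw [htop]; trivial
    rwa [← Subalgebra.topologicalClosure_coe]
  rw [Metric.mem_closure_iff] at hmem
  obtain ⟨g, hgA, hdist⟩ := hmem δ hδ
  have hspan : g ∈ Submodule.span ℝ ((expSubmonoid K : Submonoid C(K, ℝ)) : Set C(K, ℝ)) := by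
    have h1 : g ∈ Subalgebra.toSubmodule A := hgA
    rw [hA, Algebra.adjoin_eq_span, Submonoid.closure_eq] at h1
    exact h1
  rw [Submodule.mem_span_set'] at hspan
  obtain ⟨n, coefs, elems, hsum⟩ := hspan
  have hex : ∀ k : Fin n, ∃ w b, (elems k : C(K, ℝ)) = expFn K w b := fun k => (elems k).2
  choose w b hwb using hex
  refine ⟨n, coefs, w, b, ?_⟩
  intro x hx
  have h2 : (∑ k, coefs k * Real.exp ((∑ i, w k i * x i) + b k)) = g ⟨x, hx⟩ := by
    rw [← hsum, ContinuousMap.sum_apply]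
    refine Finset.sum_congr rfl fun k _ => ?_
    rw [ContinuousMap.smul_apply, hwb k]
    simp [expFn, smul_eq_mul]
  have h3 : |G x - g ⟨x, hx⟩| ≤ dist g0 g := by
    have h4 := ContinuousMap.dist_apply_le_dist (f := g0) (g := g) ⟨x, hx⟩
    rw [Real.dist_eq] at h4
    exact h4
  rw [h2]
  calc |G x - g ⟨x, hx⟩| ≤ dist g0 g := h3
    _ < δ := hdist

end SW

section Net

/-- Index of the `v`-coordinate attached to the pair `(c, k)`. -/
def vidx (dO N : ℕ) (c : Fin dO) (k : Fin N) : Fin (2 * (dO * N)) :=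
  ⟨dO * N + (finProdFinEquiv (c, k)).val, by
    have := (finProdFinEquiv (c, k)).isLt; omega⟩

/-- Linear part of the input lift. -/
noncomputable def liftLin (T : ℝ) (d dO N : ℕ) (w' : Fin dO → Fin N → Fin d → ℝ) :
    EuclideanSpace ℝ (Fin d) →ₗ[ℝ] EuclideanSpace ℝ (Fin (2 * (dO * N))) where
  toFun x := WithLp.toLp 2 <| fun j : Fin (2 * (dO * N)) =>
    if h : j.val < dO * N then
      (∑ i, w' (finProdFinEquiv.symm (⟨j.val, h⟩ : Fin (dO * N))).1
          (finProdFinEquiv.symm (⟨j.val, h⟩ : Fin (dO * N))).2 i * x i) / T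
    else 0
  map_add' x y := by
    ext j
    by_cases h : j.val < dO * N
    · simp only [h, dif_pos, PiLp.add_apply, PiLp.toLp_apply]
      rw [← add_div, ← Finset.sum_add_distrib]
      congr 1
      exact Finset.sum_congr rfl fun i _ => by ring
    · simp [h]
  map_smul' a x := by
    ext j
    by_cases h : j.val < dO * N
    · simp only [h, dif_pos, PiLp.smul_apply, PiLp.toLp_apply, smul_eq_mul, RingHom.id_apply]
      have hs : ∀ W : Fin d → ℝ, (∑ i, W i * (a * x i)) = a * ∑ i, W i * x i := by
        intro W
        rw [Finset.mul_sum]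
        exact Finset.sum_congr rfl fun i _ => by ring
      rw [hs, mul_div_assoc]
    · simp [h]

/-- Constant part of the input lift. -/
noncomputable def liftBase (T : ℝ) (dO N : ℕ) (b' : Fin dO → Fin N → ℝ) :
    EuclideanSpace ℝ (Fin (2 * (dO * N))) :=
  WithLp.toLp 2 <| fun j : Fin (2 * (dO * N)) =>
    if h : j.val < dO * N then
      b' (finProdFinEquiv.symm (⟨j.val, h⟩ : Fin (dO * N))).1
        (finProdFinEquiv.symm (⟨j.val, h⟩ : Fin (dO * N))).2 / T
    else 1

/-- The affine input lift. -/
noncomputable def liftAff (T : ℝ) (d dO N : ℕ) (w' : Fin dO → Fin N → Fin d → ℝ)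
    (b' : Fin dO → Fin N → ℝ) :
    EuclideanSpace ℝ (Fin d) →ᵃ[ℝ] EuclideanSpace ℝ (Fin (2 * (dO * N))) where
  toFun x := liftLin T d dO N w' x + liftBase T dO N b'
  linear := liftLin T d dO N w'
  map_vadd' p v := by
    simp only [vadd_eq_add, map_add]
    abel

/-- The affine readout. -/
noncomputable def readout (dO N : ℕ) (coef' : Fin dO → Fin N → ℝ) :
    EuclideanSpace ℝ (Fin (2 * (dO * N))) →ᵃ[ℝ] EuclideanSpace ℝ (Fin dO) :=
  LinearMap.toAffineMap
  { toFun := fun z => WithLp.toLp 2 <| fun c : Fin dO => ∑ k : Fin N, coef' c k * z (vidx dO N c k)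
    map_add' := by
      intro z₁ z₂
      ext c
      show ∑ k : Fin N, coef' c k * (z₁ + z₂) (vidx dO N c k) = _
      rw [show (WithLp.toLp 2 (fun c : Fin dO => ∑ k : Fin N, coef' c k * z₁ (vidx dO N c k))
          + WithLp.toLp 2 (fun c : Fin dO => ∑ k : Fin N, coef' c k * z₂ (vidx dO N c k))
          : EuclideanSpace ℝ (Fin dO)) c
          = (∑ k : Fin N, coef' c k * z₁ (vidx dO N c k))
            + ∑ k : Fin N, coef' c k * z₂ (vidx dO N c k) from rfl]
      rw [← Finset.sum_add_distrib]
      refine Finset.sum_congr rfl fun k _ => ?_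
      rw [PiLp.add_apply]
      ring
    map_smul' := by
      intro a z
      ext c
      show ∑ k : Fin N, coef' c k * (a • z) (vidx dO N c k)
          = a * ∑ k : Fin N, coef' c k * z (vidx dO N c k)
      rw [Finset.mul_sum]
      refine Finset.sum_congr rfl fun k _ => ?_
      rw [PiLp.smul_apply, smul_eq_mul]
      ring }

lemma liftAff_apply_ge (T : ℝ) (d dO N : ℕ) (w' : Fin dO → Fin N → Fin d → ℝ)
    (b' : Fin dO → Fin N → ℝ) (x : EuclideanSpace ℝ (Fin d)) (j : Fin (2 * (dO * N)))
    (h : ¬ j.val < dO * N) :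
    liftAff T d dO N w' b' x j = 1 := by
  show liftLin T d dO N w' x j + liftBase T dO N b' j = 1
  rw [show liftLin T d dO N w' x j = 0 from by simp [liftLin, h],
    show liftBase T dO N b' j = 1 from by simp [liftBase, h]]
  norm_num

lemma liftAff_apply_lt (T : ℝ) (d dO N : ℕ) (w' : Fin dO → Fin N → Fin d → ℝ)
    (b' : Fin dO → Fin N → ℝ) (x : EuclideanSpace ℝ (Fin d)) (j : Fin (2 * (dO * N)))
    (h : j.val < dO * N) :
    liftAff T d dO N w' b' x j
      = ((∑ i, w' (finProdFinEquiv.symm (⟨j.val, h⟩ : Fin (dO * N))).1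
          (finProdFinEquiv.symm (⟨j.val, h⟩ : Fin (dO * N))).2 i * x i)
        + b' (finProdFinEquiv.symm (⟨j.val, h⟩ : Fin (dO * N))).1
          (finProdFinEquiv.symm (⟨j.val, h⟩ : Fin (dO * N))).2) / T := by
  show liftLin T d dO N w' x j + liftBase T dO N b' j = _
  rw [show liftLin T d dO N w' x j = _ from by
      simp only [liftLin, LinearMap.coe_mk, AddHom.coe_mk, PiLp.toLp_apply]; exact dif_pos h,
    show liftBase T dO N b' j = _ from by simp only [liftBase, PiLp.toLp_apply]; exact dif_pos h,
    add_div]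

/-- The value of the (unique) solution at time `T`, at the coordinate `vidx c k`. -/
lemma sol_value (T : ℝ) (d dO N : ℕ) (w' : Fin dO → Fin N → Fin d → ℝ)
    (b' : Fin dO → Fin N → ℝ) (hT : T ≠ 0) (x : EuclideanSpace ℝ (Fin d))
    (c : Fin dO) (k : Fin N) :
    solFormula (2 * (dO * N)) (liftAff T d dO N w' b' x) T (vidx dO N c k)
      = Real.exp ((∑ i, w' c k i * x i) + b' c k) := by
  have hm2 : 2 * (dO * N) / 2 = dO * N := Nat.mul_div_cancel_left _ (by norm_num)
  have he := (finProdFinEquiv (c, k)).isLt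
  have hcond : 2 * (dO * N) / 2 ≤ (vidx dO N c k).val
      ∧ (vidx dO N c k).val < 2 * (2 * (dO * N) / 2) := by
    rw [hm2]
    refine ⟨Nat.le_add_right _ _, ?_⟩
    show dO * N + (finProdFinEquiv (c, k)).val < 2 * (dO * N)
    omega
  rw [solFormula, PiLp.toLp_apply]
  rw [dif_pos hcond]
  set ju : Fin (2 * (dO * N)) :=
    ⟨(vidx dO N c k).val - 2 * (dO * N) / 2,
      lt_of_le_of_lt (Nat.sub_le _ _) (vidx dO N c k).isLt⟩ with hju
  have hjuval : ju.val = (finProdFinEquiv (c, k)).val := by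
    simp only [hju, hm2]
    show dO * N + (finProdFinEquiv (c, k)).val - (dO * N) = _
    omega
  have hjult : ju.val < dO * N := by rw [hjuval]; exact he
  have hdec : (⟨ju.val, hjult⟩ : Fin (dO * N)) = finProdFinEquiv (c, k) :=
    Fin.ext hjuval
  have hu : liftAff T d dO N w' b' x ju
      = ((∑ i, w' c k i * x i) + b' c k) / T := by
    rw [liftAff_apply_lt T d dO N w' b' x ju hjult, hdec, Equiv.symm_apply_apply]
  have hv : liftAff T d dO N w' b' x (vidx dO N c k) = 1 := by
    apply liftAff_apply_ge
    show ¬ dO * N + (finProdFinEquiv (c, k)).val < dO * N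
    omega
  rw [hv, hu, one_mul]
  congr 1
  field_simp

end Net

end NeuralODEAux

/-- **Augmented neural ODEs are universal approximators even when the vector field is not.**
There is a fixed family of continuous autonomous vector fields `f m : ℝ^m → ℝ^m`, one for
each dimension `m`, whose initial value problems on `[0,T]` have (existing and unique)
solutions, such that every continuous `F : ℝ^d → ℝ^{d_o}` can be approximated uniformly on
any compact set to any accuracy by an affine lift into some `ℝ^m`, the time-`T` solution map
of `y' = f m (y)`, and an affine readout. -/
theorem augmented_neural_ode_universal_with_fixed_vector_fields
    (T : ℝ) (hT : 0 < T) (d dO : ℕ) :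
    ∃ f : (m : ℕ) → EuclideanSpace ℝ (Fin m) → EuclideanSpace ℝ (Fin m),
      (∀ m, Continuous (f m)) ∧
      (∀ (m : ℕ) (y₀ : EuclideanSpace ℝ (Fin m)), ∃ y : ℝ → EuclideanSpace ℝ (Fin m),
        y 0 = y₀ ∧
        ∀ t ∈ Set.Icc (0:ℝ) T, HasDerivWithinAt y (f m (y t)) (Set.Icc 0 T) t) ∧
      (∀ (m : ℕ) (y z : ℝ → EuclideanSpace ℝ (Fin m)),
        y 0 = z 0 →
        (∀ t ∈ Set.Icc (0:ℝ) T, HasDerivWithinAt y (f m (y t)) (Set.Icc 0 T) t) →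
        (∀ t ∈ Set.Icc (0:ℝ) T, HasDerivWithinAt z (f m (z t)) (Set.Icc 0 T) t) →
        ∀ t ∈ Set.Icc (0:ℝ) T, y t = z t) ∧
      ∀ F : EuclideanSpace ℝ (Fin d) → EuclideanSpace ℝ (Fin dO), Continuous F →
        ∀ K : Set (EuclideanSpace ℝ (Fin d)), IsCompact K →
          ∀ ε : ℝ, 0 < ε →
            ∃ (m : ℕ) (ℓ₁ : EuclideanSpace ℝ (Fin d) →ᵃ[ℝ] EuclideanSpace ℝ (Fin m))
              (ℓ₂ : EuclideanSpace ℝ (Fin m) →ᵃ[ℝ] EuclideanSpace ℝ (Fin dO)),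
              ∀ x ∈ K, ∀ y : ℝ → EuclideanSpace ℝ (Fin m),
                y 0 = ℓ₁ x →
                (∀ t ∈ Set.Icc (0:ℝ) T, HasDerivWithinAt y (f m (y t)) (Set.Icc 0 T) t) →
                ‖F x - ℓ₂ (y T)‖ < ε := by
  refine ⟨NeuralODEAux.vecField, NeuralODEAux.vecField_continuous, ?_, ?_, ?_⟩
  · -- existence of solutions
    intro m y₀
    exact ⟨NeuralODEAux.solFormula m y₀, NeuralODEAux.solFormula_zero m y₀,
      fun t _ => NeuralODEAux.solFormula_hasDerivAt m y₀ t⟩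
  · -- uniqueness of solutions
    intro m y z h0 hy hz t ht
    rw [NeuralODEAux.sol_unique m hT.le y hy t ht, NeuralODEAux.sol_unique m hT.le z hz t ht, h0]
  · -- universal approximation
    intro F hF K hK ε hε
    set δ : ℝ := ε / ((dO : ℝ) + 1) with hδdef
    have hδ : 0 < δ := by positivity
    have happ : ∀ c : Fin dO, ∃ (n : ℕ) (coef : Fin n → ℝ) (w : Fin n → Fin d → ℝ)
        (b : Fin n → ℝ), ∀ x ∈ K,
          |F x c - ∑ k, coef k * Real.exp ((∑ i, w k i * x i) + b k)| < δ := by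
      intro c
      have hcont : Continuous (fun x' => F x' c) := by
        have := (EuclideanSpace.proj (𝕜 := ℝ) c).continuous.comp hF
        exact this
      exact NeuralODEAux.approx K hK (fun x' => F x' c) hcont hδ
    choose n coef w b hcwb using happ
    set N : ℕ := Finset.univ.sup n with hN
    have hnN : ∀ c, n c ≤ N := fun c => Finset.le_sup (Finset.mem_univ c)
    set coef' : Fin dO → Fin N → ℝ :=
      fun c k => if h : (k : ℕ) < n c then coef c ⟨k, h⟩ else 0 with hcoef'
    set w' : Fin dO → Fin N → Fin d → ℝ :=
      fun c k => if h : (k : ℕ) < n c then w c ⟨k, h⟩ else 0 with hw'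
    set b' : Fin dO → Fin N → ℝ :=
      fun c k => if h : (k : ℕ) < n c then b c ⟨k, h⟩ else 0 with hb'
    have hpad : ∀ c : Fin dO, ∀ x ∈ K,
        |F x c - ∑ k : Fin N, coef' c k * Real.exp ((∑ i, w' c k i * x i) + b' c k)| < δ := by
      intro c x hx
      have hkey : ∀ (g : ℕ → ℝ), (∀ j, n c ≤ j → g j = 0) →
          ∑ k : Fin N, g k.val = ∑ k : Fin (n c), g k.val := by
        intro g hg
        rw [Fin.sum_univ_eq_sum_range g N, Fin.sum_univ_eq_sum_range g (n c)]
        symm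
        apply Finset.sum_subset (Finset.range_subset_range.2 (hnN c))
        intro j _ hnj
        exact hg j (by simpa using hnj)
      set g : ℕ → ℝ := fun j => if h : j < n c then
          coef c ⟨j, h⟩ * Real.exp ((∑ i, w c ⟨j, h⟩ i * x i) + b c ⟨j, h⟩) else 0 with hgdef
      have h1 : ∑ k : Fin N, coef' c k * Real.exp ((∑ i, w' c k i * x i) + b' c k)
          = ∑ k : Fin N, g k.val := by
        refine Finset.sum_congr rfl fun k _ => ?_
        by_cases h : (k : ℕ) < n c
        · simp only [hcoef', hw', hb', hgdef]
          rw [dif_pos h, dif_pos h, dif_pos h, dif_pos h]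
        · simp only [hcoef', hw', hb', hgdef]
          rw [dif_neg h, zero_mul, dif_neg h]
      have h2 : ∑ k : Fin (n c), g k.val
          = ∑ k : Fin (n c), coef c k * Real.exp ((∑ i, w c k i * x i) + b c k) := by
        refine Finset.sum_congr rfl fun k _ => ?_
        simp only [hgdef]
        rw [dif_pos k.isLt]
      have h3 : ∀ j, n c ≤ j → g j = 0 := by
        intro j hj
        simp only [hgdef]
        rw [dif_neg (by omega)]
      rw [h1, hkey g h3, h2]
      exact hcwb c x hx
    refine ⟨2 * (dO * N), NeuralODEAux.liftAff T d dO N w' b',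
      NeuralODEAux.readout dO N coef', ?_⟩
    intro x hx y hy0 hy
    have hyT : y T = NeuralODEAux.solFormula (2 * (dO * N))
        (NeuralODEAux.liftAff T d dO N w' b' x) T := by
      have := NeuralODEAux.sol_unique (2 * (dO * N)) hT.le y hy T ⟨hT.le, le_refl T⟩
      rwa [hy0] at this
    have hread : ∀ z : EuclideanSpace ℝ (Fin (2 * (dO * N))),
        NeuralODEAux.readout dO N coef' z
          = (WithLp.toLp 2 (fun c => ∑ k : Fin N, coef' c k * z (NeuralODEAux.vidx dO N c k))
            : EuclideanSpace ℝ (Fin dO)) := fun z => rfl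
    have hD : ∀ c : Fin dO,
        |(F x - NeuralODEAux.readout dO N coef' (y T)) c| < δ := by
      intro c
      have hc1 : (F x - NeuralODEAux.readout dO N coef' (y T)) c
          = F x c - ∑ k : Fin N, coef' c k * (y T) (NeuralODEAux.vidx dO N c k) := by
        rw [PiLp.sub_apply, hread, PiLp.toLp_apply]
      have hc2 : ∀ k : Fin N, (y T) (NeuralODEAux.vidx dO N c k)
          = Real.exp ((∑ i, w' c k i * x i) + b' c k) := by
        intro k
        rw [hyT]
        exact NeuralODEAux.sol_value T d dO N w' b' hT.ne' x c k
      rw [hc1]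
      rw [Finset.sum_congr rfl fun k _ => by rw [hc2 k]]
      exact hpad c x hx
    -- conclude with the Euclidean norm estimate
    rcases Nat.eq_zero_or_pos dO with hdO | hdO
    · rw [EuclideanSpace.norm_eq]
      subst hdO
      simp only [Finset.univ_eq_empty, Finset.sum_empty, Real.sqrt_zero]
      exact hε
    · haveI : Nonempty (Fin dO) := Fin.pos_iff_nonempty.mp hdO
      rw [EuclideanSpace.norm_eq]
      have hsum : (∑ c, ‖(F x - NeuralODEAux.readout dO N coef' (y T)) c‖ ^ 2)
          < (dO : ℝ) * δ ^ 2 := by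
        have hlt : ∀ c ∈ Finset.univ,
            ‖(F x - NeuralODEAux.readout dO N coef' (y T)) c‖ ^ 2 < δ ^ 2 := by
          intro c _
          rw [Real.norm_eq_abs]
          have := hD c
          nlinarith [abs_nonneg ((F x - NeuralODEAux.readout dO N coef' (y T)) c)]
        have := Finset.sum_lt_sum_of_nonempty Finset.univ_nonempty hlt
        simpa [Finset.card_univ, mul_comm] using this
      have hs1 : Real.sqrt (∑ c, ‖(F x - NeuralODEAux.readout dO N coef' (y T)) c‖ ^ 2)
          < Real.sqrt ((dO : ℝ) * δ ^ 2) :=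
        Real.sqrt_lt_sqrt (by positivity) hsum
      have hs2 : Real.sqrt ((dO : ℝ) * δ ^ 2) ≤ ε := by
        rw [Real.sqrt_mul (by positivity), Real.sqrt_sq hδ.le]
        have hle : Real.sqrt (dO : ℝ) ≤ (dO : ℝ) + 1 := by
          have h4 : ((dO : ℝ)) ≤ ((dO : ℝ) + 1) ^ 2 := by nlinarith [Nat.cast_nonneg (α := ℝ) dO]
          have := Real.sqrt_le_sqrt h4
          rwa [Real.sqrt_sq (by positivity)] at this
        have h5 : Real.sqrt (dO : ℝ) * δ ≤ ((dO : ℝ) + 1) * δ :=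
          mul_le_mul_of_nonneg_right hle hδ.le
        have h6 : ((dO : ℝ) + 1) * δ = ε := by
          rw [hδdef]
          field_simp
        linarith
      linarith
end

section
/- Let d ∈ ℕ, let D ∈ ℝ^{d×d} be a diagonal matrix with strictly positive diagonal entries, and let W ∈ ℝ^{d×d} be antisymmetric (Wᵀ = −W). Then every complex eigenvalue of the product DW is purely imaginary: for every μ in the spectrum of the complexification of DW, the real part of μ is zero. -/
/-- **The product of a positive diagonal matrix and an antisymmetric matrix has purely
imaginary spectrum.** If `D = diagonal dv` with `dv i > 0` for all `i` and `Wᵀ = −W`, then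
every complex eigenvalue of the complexification of `D * W` has zero real part. -/
theorem diagonal_mul_antisymmetric_spectrum_purely_imaginary
    (d : ℕ) (dv : Fin d → ℝ) (hdv : ∀ i, 0 < dv i)
    (W : Matrix (Fin d) (Fin d) ℝ) (hW : W.transpose = -W) :
    ∀ μ ∈ spectrum ℂ ((Matrix.diagonal dv * W).map fun x : ℝ => (x : ℂ)), μ.re = 0 := by
  intro μ hμ
  set s : Fin d → ℂ := fun i => (Real.sqrt (dv i) : ℂ) with hs
  set S : Matrix (Fin d) (Fin d) ℂ := Matrix.diagonal s with hSdef
  set Sinv : Matrix (Fin d) (Fin d) ℂ := Matrix.diagonal (fun i => (s i)⁻¹) with hSinvdef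
  have hsne : ∀ i, s i ≠ 0 := by
    intro i
    simp only [hs, ne_eq, Complex.ofReal_eq_zero]
    exact (Real.sqrt_pos.mpr (hdv i)).ne'
  have hSS : S * Sinv = 1 := by
    rw [hSdef, hSinvdef, Matrix.diagonal_mul_diagonal, ← Matrix.diagonal_one]
    have h : (fun i => s i * (s i)⁻¹) = fun _ : Fin d => (1 : ℂ) :=
      funext fun i => mul_inv_cancel₀ (hsne i)
    rw [h]
  have hSS' : Sinv * S = 1 := by
    rw [hSdef, hSinvdef, Matrix.diagonal_mul_diagonal, ← Matrix.diagonal_one]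
    have h : (fun i => (s i)⁻¹ * s i) = fun _ : Fin d => (1 : ℂ) :=
      funext fun i => inv_mul_cancel₀ (hsne i)
    rw [h]
  set u : (Matrix (Fin d) (Fin d) ℂ)ˣ := ⟨S, Sinv, hSS, hSS'⟩ with hu
  set Wc : Matrix (Fin d) (Fin d) ℂ := W.map (fun x : ℝ => (x : ℂ)) with hWc
  set M : Matrix (Fin d) (Fin d) ℂ := S * Wc * S with hM
  -- the complexified D*W is conjugate to M
  have hconj : (Matrix.diagonal dv * W).map (fun x : ℝ => (x : ℂ)) = (u : Matrix (Fin d) (Fin d) ℂ) * M * ((u⁻¹ : (Matrix (Fin d) (Fin d) ℂ)ˣ) : Matrix (Fin d) (Fin d) ℂ) := by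
    have hmap : (Matrix.diagonal dv * W).map (fun x : ℝ => (x : ℂ))
        = Matrix.diagonal (fun i => (dv i : ℂ)) * Wc := by
      ext i j
      simp [Matrix.diagonal_mul, Matrix.map_apply, hWc]
    have hD : Matrix.diagonal (fun i => (dv i : ℂ)) = S * S := by
      rw [hSdef, Matrix.diagonal_mul_diagonal]
      have h : (fun i => s i * s i) = fun i => (dv i : ℂ) := by
        funext i
        show (Real.sqrt (dv i) : ℂ) * (Real.sqrt (dv i) : ℂ) = (dv i : ℂ)
        norm_cast
        exact Real.mul_self_sqrt (hdv i).le
      rw [h]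
    show _ = S * M * Sinv
    rw [hmap, hD, hM]
    simp only [mul_assoc]
    rw [hSS, mul_one]
  rw [hconj, spectrum.units_conjugate] at hμ
  -- M is skew-adjoint
  have hSstar : S.conjTranspose = S := by
    rw [hSdef, Matrix.diagonal_conjTranspose]
    have h : (star s) = s := by
      funext i
      simp [hs, Pi.star_apply, RCLike.star_def]
    rw [h]
  have hWstar : Wc.conjTranspose = -Wc := by
    ext i j
    have h := congrFun (congrFun hW i) j
    simp only [Matrix.transpose_apply, Matrix.neg_apply] at h
    simp [hWc, Matrix.conjTranspose_apply, Matrix.map_apply, h]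
  have hMskew : M.conjTranspose = -M := by
    rw [hM, Matrix.conjTranspose_mul, Matrix.conjTranspose_mul, hSstar, hWstar]
    simp only [neg_mul, mul_neg, mul_assoc]
  -- I • M is self-adjoint
  have hsa : IsSelfAdjoint (Complex.I • M) := by
    rw [IsSelfAdjoint, star_smul]
    show (starRingEnd ℂ Complex.I) • M.conjTranspose = _
    rw [hMskew, Complex.conj_I, neg_smul, smul_neg, neg_neg]
  have hmem : Complex.I * μ ∈ spectrum ℂ (Complex.I • M) := by
    set v : ℂˣ := Units.mk0 Complex.I Complex.I_ne_zero with hv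
    have h1 : Complex.I • M = v • M := rfl
    rw [h1, spectrum.unit_smul_eq_smul]
    exact ⟨μ, hμ, rfl⟩
  have hsa2 : IsSelfAdjoint (Matrix.toEuclideanCLM (𝕜 := ℂ) (n := Fin d) (Complex.I • M)) := by
    rw [IsSelfAdjoint, ← map_star, hsa]
  have hmem2 : Complex.I * μ ∈
      spectrum ℂ (Matrix.toEuclideanCLM (𝕜 := ℂ) (n := Fin d) (Complex.I • M)) := by
    rwa [AlgEquiv.spectrum_eq (Matrix.toEuclideanCLM (𝕜 := ℂ) (n := Fin d))]
  have hre := hsa2.mem_spectrum_eq_re hmem2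
  have him : (Complex.I * μ).im = 0 := by rw [hre]; simp
  simpa [Complex.mul_im] using him
end

section
/- Let T > 0, let p ∈ ℕ (the hidden dimension) and m ∈ ℕ with m ≥ 1 (the control dimension). Let h : ℝ^p × ℝ^m → ℝ^p be Lipschitz continuous and ξ : ℝ^m → ℝ^p be continuous. Then there exist a Lipschitz continuous f : ℝ^{p+m} → ℝ^{(p+m) × m} and a continuous ζ : ℝ^m → ℝ^{p+m} such that: for every continuously differentiable x : [0,T] → ℝ^{m−1}, writing x̂(t) = (t, x(t)) ∈ ℝ^m, and for every differentiable z : [0,T] → ℝ^{p+m} with z(0) = ζ(x̂(0)) and z'(t) = f(z(t)) · x̂'(t) for all t, and every differentiable y : [0,T] → ℝ^p with y(0) = ξ(x̂(0)) and y'(t) = h(y(t), x̂(t)) for all t, the first p coordinates of z(t) equal y(t) for all t ∈ [0,T]. (Every ODE of the form y' = h(y(t), x(t)) is represented exactly by a controlled differential equation of the form z' = f(z(t)) dx̂(t).) -/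
open Set

namespace CDEAux

variable {p m : ℕ}

/-- The CDE vector field building block: `v ↦ (v 0 • c, v)`. -/
noncomputable def fmap (c : Fin p → ℝ) :
    (Fin (m + 1) → ℝ) →L[ℝ] (Fin (p + (m + 1)) → ℝ) :=
  LinearMap.mkContinuous
    { toFun := fun v => Fin.append (fun i => v 0 * c i) v
      map_add' := fun v w => by
        funext k
        refine Fin.addCases (fun i => ?_) (fun j => ?_) k <;>
          simp [Fin.append_left, Fin.append_right] <;> ring
      map_smul' := fun a v => by
        funext k
        refine Fin.addCases (fun i => ?_) (fun j => ?_) k <;>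
          simp [Fin.append_left, Fin.append_right] <;> ring }
    (‖c‖ + 1)
    (by
      intro v
      rw [pi_norm_le_iff_of_nonneg (by positivity)]
      intro k
      refine Fin.addCases (fun i => ?_) (fun j => ?_) k
      · simp only [LinearMap.coe_mk, AddHom.coe_mk, Fin.append_left]
        calc ‖v 0 * c i‖ = ‖v 0‖ * ‖c i‖ := norm_mul _ _
        _ ≤ ‖v‖ * ‖c‖ := mul_le_mul (norm_le_pi_norm v 0) (norm_le_pi_norm c i)
            (norm_nonneg _) (norm_nonneg _)
        _ ≤ (‖c‖ + 1) * ‖v‖ := by nlinarith [norm_nonneg v, norm_nonneg c]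
      · simp only [LinearMap.coe_mk, AddHom.coe_mk, Fin.append_right]
        calc ‖v j‖ ≤ ‖v‖ := norm_le_pi_norm v j
        _ ≤ (‖c‖ + 1) * ‖v‖ := by nlinarith [norm_nonneg v, norm_nonneg c])

@[simp] lemma fmap_apply_left (c : Fin p → ℝ) (v : Fin (m + 1) → ℝ) (i : Fin p) :
    fmap c v (Fin.castAdd (m + 1) i) = v 0 * c i := by
  simp [fmap, LinearMap.mkContinuous_apply, Fin.append_left]

@[simp] lemma fmap_apply_right (c : Fin p → ℝ) (v : Fin (m + 1) → ℝ) (j : Fin (m + 1)) :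
    fmap c v (Fin.natAdd p j) = v j := by
  simp [fmap, LinearMap.mkContinuous_apply, Fin.append_right]

lemma fmap_sub_norm (c c' : Fin p → ℝ) : ‖fmap (m := m) c - fmap c'‖ ≤ ‖c - c'‖ := by
  refine ContinuousLinearMap.opNorm_le_bound _ (norm_nonneg _) fun v => ?_
  rw [pi_norm_le_iff_of_nonneg (by positivity)]
  intro k
  rw [ContinuousLinearMap.sub_apply, Pi.sub_apply]
  refine Fin.addCases (fun i => ?_) (fun j => ?_) k
  · rw [fmap_apply_left, fmap_apply_left, ← mul_sub]
    calc ‖v 0 * (c i - c' i)‖ = ‖v 0‖ * ‖c i - c' i‖ := norm_mul _ _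
    _ ≤ ‖v‖ * ‖c - c'‖ := mul_le_mul (norm_le_pi_norm v 0) (norm_le_pi_norm (c - c') i)
        (norm_nonneg _) (norm_nonneg _)
    _ = ‖c - c'‖ * ‖v‖ := mul_comm _ _
  · rw [fmap_apply_right, fmap_apply_right, sub_self, norm_zero]
    positivity

end CDEAux

/-- **Every ODE of the form `y' = h(y(t), x̂(t))` is represented exactly by a CDE
`z' = f(z(t)) dx̂(t)`.** Here the hidden dimension is `p`, the control dimension is `m + 1`
(covering all control dimensions `≥ 1`), time is included as the first channel of the
control `x̂(t) = (t, x(t))`, the CDE vector field `f : ℝ^{p+(m+1)} → ℝ^{(p+(m+1)) × (m+1)}`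
is encoded as a map into linear maps, and the first `p` coordinates of the CDE solution `z`
recover the ODE solution `y`. -/
theorem ode_represented_by_cde
    (T : ℝ) (hT : 0 < T) (p m : ℕ)
    (h : (Fin p → ℝ) → (Fin (m + 1) → ℝ) → (Fin p → ℝ)) (Ch : NNReal)
    (hh : LipschitzWith Ch (Function.uncurry h))
    (ξ : (Fin (m + 1) → ℝ) → (Fin p → ℝ)) (hξ : Continuous ξ) :
    ∃ (f : (Fin (p + (m + 1)) → ℝ) → (Fin (m + 1) → ℝ) →L[ℝ] (Fin (p + (m + 1)) → ℝ))
      (Cf : NNReal) (ζ : (Fin (m + 1) → ℝ) → Fin (p + (m + 1)) → ℝ),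
      LipschitzWith Cf f ∧ Continuous ζ ∧
      ∀ x x' : ℝ → Fin m → ℝ,
        (∀ t ∈ Set.Icc (0:ℝ) T, HasDerivWithinAt x (x' t) (Set.Icc 0 T) t) →
        ContinuousOn x' (Set.Icc (0:ℝ) T) →
        ∀ z : ℝ → Fin (p + (m + 1)) → ℝ,
          z 0 = ζ (Fin.cons (0:ℝ) (x 0)) →
          (∀ t ∈ Set.Icc (0:ℝ) T,
            HasDerivWithinAt z (f (z t) (Fin.cons (1:ℝ) (x' t))) (Set.Icc 0 T) t) →
          ∀ y : ℝ → Fin p → ℝ,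
            y 0 = ξ (Fin.cons (0:ℝ) (x 0)) →
            (∀ t ∈ Set.Icc (0:ℝ) T,
              HasDerivWithinAt y (h (y t) (Fin.cons t (x t))) (Set.Icc 0 T) t) →
            ∀ t ∈ Set.Icc (0:ℝ) T, ∀ i : Fin p, z t (Fin.castAdd (m + 1) i) = y t i := by
  classical
  set front : (Fin (p + (m + 1)) → ℝ) → Fin p → ℝ :=
    fun w i => w (Fin.castAdd (m + 1) i) with hfront
  set back : (Fin (p + (m + 1)) → ℝ) → Fin (m + 1) → ℝ :=
    fun w j => w (Fin.natAdd p j) with hback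
  set f : (Fin (p + (m + 1)) → ℝ) → (Fin (m + 1) → ℝ) →L[ℝ] (Fin (p + (m + 1)) → ℝ) :=
    fun w => CDEAux.fmap (h (front w) (back w)) with hfdef
  set ζ : (Fin (m + 1) → ℝ) → Fin (p + (m + 1)) → ℝ :=
    fun a => Fin.append (ξ a) a with hζdef
  have hflip : LipschitzWith Ch f := by
    refine LipschitzWith.of_dist_le_mul fun w w' => ?_
    rw [dist_eq_norm]
    have e : f w - f w' = CDEAux.fmap (h (front w) (back w)) -
        CDEAux.fmap (h (front w') (back w')) := rfl
    rw [e]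
    calc ‖_‖ ≤ ‖h (front w) (back w) - h (front w') (back w')‖ := CDEAux.fmap_sub_norm _ _
    _ = dist (Function.uncurry h (front w, back w)) (Function.uncurry h (front w', back w')) := by
        rw [dist_eq_norm]; rfl
    _ ≤ Ch * dist (front w, back w) (front w', back w') := hh.dist_le_mul _ _
    _ ≤ Ch * dist w w' := by
        refine mul_le_mul_of_nonneg_left ?_ Ch.coe_nonneg
        rw [Prod.dist_eq]
        refine max_le ?_ ?_
        · exact (dist_pi_le_iff dist_nonneg).2 fun i => dist_le_pi_dist w w' _
        · exact (dist_pi_le_iff dist_nonneg).2 fun j => dist_le_pi_dist w w' _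
  refine ⟨f, Ch, ζ, hflip, ?_, ?_⟩
  · -- continuity of ζ
    apply continuous_pi
    intro k
    refine Fin.addCases (fun i => ?_) (fun j => ?_) k
    · simp only [hζdef, Fin.append_left]
      exact (continuous_apply i).comp hξ
    · simp only [hζdef, Fin.append_right]
      exact continuous_apply j
  intro x x' hx hx' z hz0 hz y hy0 hy
  -- bound on the control derivative
  obtain ⟨C, hC⟩ : ∃ C, ∀ t ∈ Icc (0:ℝ) T, ‖(Fin.cons (1:ℝ) (x' t) : Fin (m+1) → ℝ)‖ ≤ C := by
    refine isCompact_Icc.exists_bound_of_continuousOn (f := fun t => (Fin.cons (1:ℝ) (x' t) : Fin (m+1) → ℝ)) ?_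
    apply continuousOn_pi.2
    intro j
    refine Fin.cases ?_ (fun k => ?_) j
    · simpa using continuousOn_const (c := (1:ℝ))
    · simp only [Fin.cons_succ]
      exact (continuous_apply k).comp_continuousOn hx'
  set M : ℝ := max C 0 with hM
  have hM0 : 0 ≤ M := le_max_right _ _
  have hCM : ∀ t ∈ Icc (0:ℝ) T, ‖(Fin.cons (1:ℝ) (x' t) : Fin (m+1) → ℝ)‖ ≤ M :=
    fun t ht => (hC t ht).trans (le_max_left _ _)
  set clamp : ℝ → ℝ := fun t => max 0 (min t T) with hclampdef
  have hclamp_mem : ∀ t, clamp t ∈ Icc (0:ℝ) T := by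
    intro t
    exact ⟨le_max_left _ _, max_le hT.le (min_le_right _ _)⟩
  have hclamp_eq : ∀ t ∈ Icc (0:ℝ) T, clamp t = t := by
    intro t ht
    simp only [hclampdef]
    rw [min_eq_left ht.2, max_eq_right ht.1]
  set v : ℝ → (Fin (p + (m + 1)) → ℝ) → (Fin (p + (m + 1)) → ℝ) :=
    fun t w => f w (Fin.cons (1:ℝ) (x' (clamp t))) with hvdef
  set K : NNReal := Ch * M.toNNReal with hK
  have hv : ∀ t, LipschitzWith K (v t) := by
    intro t
    refine LipschitzWith.of_dist_le_mul fun w w' => ?_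
    have key : dist (v t w) (v t w') ≤ ‖f w - f w'‖ * ‖(Fin.cons (1:ℝ) (x' (clamp t)) : Fin (m+1) → ℝ)‖ := by
      rw [dist_eq_norm]
      exact (f w - f w').le_opNorm _
    have h1 : ‖f w - f w'‖ ≤ Ch * dist w w' := by
      rw [← dist_eq_norm]; exact hflip.dist_le_mul _ _
    have h2 : ‖(Fin.cons (1:ℝ) (x' (clamp t)) : Fin (m+1) → ℝ)‖ ≤ M := hCM _ (hclamp_mem t)
    have hKcoe : (K : ℝ) = Ch * M := by
      simp [hK, Real.coe_toNNReal _ hM0]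
    calc dist (v t w) (v t w') ≤ ‖f w - f w'‖ * ‖(Fin.cons (1:ℝ) (x' (clamp t)) : Fin (m+1) → ℝ)‖ := key
    _ ≤ (Ch * dist w w') * M :=
        mul_le_mul h1 h2 (norm_nonneg _) (by positivity)
    _ = (K : ℝ) * dist w w' := by rw [hKcoe]; ring
  -- the candidate full solution
  set g : ℝ → Fin (p + (m + 1)) → ℝ :=
    fun t => Fin.append (y t) (Fin.cons t (x t)) with hgdef
  have hfrontg : ∀ t, front (g t) = y t := by
    intro t; funext i; exact Fin.append_left _ _ _
  have hbackg : ∀ t, back (g t) = Fin.cons t (x t) := by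
    intro t; funext j; exact Fin.append_right _ _ _
  have hg0 : z 0 = g 0 := by
    rw [hz0]
    show Fin.append (ξ (Fin.cons 0 (x 0))) (Fin.cons 0 (x 0))
      = Fin.append (y 0) (Fin.cons 0 (x 0))
    rw [hy0]
  have hvg : ∀ t ∈ Icc (0:ℝ) T, v t (g t)
      = Fin.append (h (y t) (Fin.cons t (x t))) (Fin.cons (1:ℝ) (x' t)) := by
    intro t ht
    funext k
    refine Fin.addCases (fun i => ?_) (fun j => ?_) k
    · show CDEAux.fmap (h (front (g t)) (back (g t))) _ (Fin.castAdd (m+1) i) = _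
      rw [CDEAux.fmap_apply_left, Fin.append_left, hfrontg, hbackg, Fin.cons_zero, one_mul]
    · show CDEAux.fmap (h (front (g t)) (back (g t))) _ (Fin.natAdd p j) = _
      rw [CDEAux.fmap_apply_right, Fin.append_right, hclamp_eq t ht]
  have hgIcc : ∀ t ∈ Icc (0:ℝ) T, HasDerivWithinAt g (v t (g t)) (Icc 0 T) t := by
    intro t ht
    rw [hvg t ht]
    refine hasDerivWithinAt_pi.2 fun k => ?_
    refine Fin.addCases (fun i => ?_) (fun j => ?_) k
    · have e1 : (fun s => g s (Fin.castAdd (m + 1) i)) = fun s => y s i :=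
        funext fun s => Fin.append_left _ _ _
      have e2 : Fin.append (h (y t) (Fin.cons t (x t))) (Fin.cons (1:ℝ) (x' t))
          (Fin.castAdd (m + 1) i) = h (y t) (Fin.cons t (x t)) i := Fin.append_left _ _ _
      rw [e1, e2]
      exact hasDerivWithinAt_pi.1 (hy t ht) i
    · have e2 : Fin.append (h (y t) (Fin.cons t (x t))) (Fin.cons (1:ℝ) (x' t))
          (Fin.natAdd p j) = (Fin.cons (1:ℝ) (x' t) : Fin (m+1) → ℝ) j := Fin.append_right _ _ _
      have e1 : (fun s => g s (Fin.natAdd p j))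
          = fun s => (Fin.cons s (x s) : Fin (m+1) → ℝ) j :=
        funext fun s => Fin.append_right _ _ _
      rw [e1, e2]
      refine Fin.cases ?_ (fun k' => ?_) j
      · simp only [Fin.cons_zero]
        exact (hasDerivWithinAt_id t _)
      · simp only [Fin.cons_succ]
        exact hasDerivWithinAt_pi.1 (hx t ht) k'
  have hzv : ∀ t ∈ Icc (0:ℝ) T, HasDerivWithinAt z (v t (z t)) (Icc 0 T) t := by
    intro t ht
    have : v t (z t) = f (z t) (Fin.cons (1:ℝ) (x' t)) := by
      rw [hvdef]; simp only []; rw [hclamp_eq t ht]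
    rw [this]
    exact hz t ht
  have hzc : ContinuousOn z (Icc 0 T) := fun t ht => (hzv t ht).continuousWithinAt
  have hgc : ContinuousOn g (Icc 0 T) := fun t ht => (hgIcc t ht).continuousWithinAt
  have huniq : EqOn z g (Icc 0 T) := by
    refine ODE_solution_unique hv hzc ?_ hgc ?_ hg0
    · intro t ht
      exact (hzv t (Ico_subset_Icc_self ht)).mono_of_mem_nhdsWithin (Icc_mem_nhdsGE_of_mem ht)
    · intro t ht
      exact (hgIcc t (Ico_subset_Icc_self ht)).mono_of_mem_nhdsWithin (Icc_mem_nhdsGE_of_mem ht)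
  intro t ht i
  rw [huniq ht]
  exact Fin.append_left _ _ _
end

section
/- Let T > 0. There do not exist a Lipschitz continuous function h : ℝ × ℝ² → ℝ and a continuous function ξ : ℝ² → ℝ such that for every continuously differentiable x : [0,T] → ℝ and every differentiable y : [0,T] → ℝ with y(0) = ξ(0, x(0)) and y'(t) = h(y(t), (t, x(t))) for all t ∈ [0,T], one has y(t) = x(t) − x(0) for all t ∈ [0,T]. (The increment map x ↦ (t ↦ x(t) − x(0)), which is exactly computed by a controlled differential equation, cannot be represented by any ODE of the form y' = h(y(t), (t, x(t))); hence controlled differential equations are strictly more expressive than such ODE models.) -/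
open Set

/-- Trivial derivative within a set not having the point in its closure. -/
lemma hasDerivWithinAt_of_nmem_closure' {f : ℝ → ℝ} {f' : ℝ} {s : Set ℝ} {x : ℝ}
    (h : x ∉ closure s) : HasDerivWithinAt f f' s x :=
  hasDerivWithinAt_iff_hasFDerivWithinAt.2 (HasFDerivWithinAt.of_notMem_closure h)

/-- Gluing two ODE solutions on adjacent intervals. -/
lemma glue_ode_sol {v : ℝ → ℝ → ℝ} {y z : ℝ → ℝ} {a0 a b : ℝ}
    (h0a : a0 ≤ a) (hab : a ≤ b)
    (hy : ∀ t ∈ Icc a0 a, HasDerivWithinAt y (v t (y t)) (Icc a0 a) t)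
    (hz : ∀ t ∈ Icc a b, HasDerivWithinAt z (v t (z t)) (Icc a b) t)
    (hza : z a = y a) :
    ∀ t ∈ Icc a0 b,
      HasDerivWithinAt (fun s => if s ≤ a then y s else z s)
        (v t ((fun s => if s ≤ a then y s else z s) t)) (Icc a0 b) t := by
  set w : ℝ → ℝ := fun s => if s ≤ a then y s else z s with hw
  have hw1 : ∀ s ∈ Icc a0 a, w s = y s := fun s hs => if_pos hs.2
  have hw2 : ∀ s ∈ Icc a b, w s = z s := by
    intro s hs
    by_cases hsa : s ≤ a
    · have : s = a := le_antisymm hsa hs.1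
      simp [hw, hsa, this, hza]
    · simp [hw, hsa]
  have D1 : ∀ t : ℝ, HasDerivWithinAt w (v t (w t)) (Icc a0 a) t := by
    intro t
    by_cases ht : t ∈ Icc a0 a
    · have hwt : w t = y t := hw1 t ht
      rw [show w t = y t from hwt]
      exact (hy t ht).congr hw1 hwt
    · exact hasDerivWithinAt_of_nmem_closure' (by rwa [isClosed_Icc.closure_eq])
  have D2 : ∀ t : ℝ, HasDerivWithinAt w (v t (w t)) (Icc a b) t := by
    intro t
    by_cases ht : t ∈ Icc a b
    · have hwt : w t = z t := hw2 t ht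
      rw [show w t = z t from hwt]
      exact (hz t ht).congr hw2 hwt
    · exact hasDerivWithinAt_of_nmem_closure' (by rwa [isClosed_Icc.closure_eq])
  intro t _
  rw [← Icc_union_Icc_eq_Icc h0a hab]
  exact (D1 t).union (D2 t)

/-- Global existence on `[0, T]` for a time-dependent globally Lipschitz vector field. -/
lemma exists_global_sol (v : ℝ → ℝ → ℝ) (C : NNReal)
    (hl : ∀ t, LipschitzWith C (v t)) (hc : Continuous (Function.uncurry v))
    (y₀ T : ℝ) (hT : 0 ≤ T) :
    ∃ y : ℝ → ℝ, y 0 = y₀ ∧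
      ∀ t ∈ Icc (0:ℝ) T, HasDerivWithinAt y (v t (y t)) (Icc 0 T) t := by
  obtain ⟨n0, hn0⟩ := exists_nat_ge (2 * (C : ℝ) * T)
  set n : ℕ := n0 + 1 with hn
  have hnpos : (0:ℝ) < n := by positivity
  set δ : ℝ := T / n with hδdef
  have hδ : 0 ≤ δ := div_nonneg hT hnpos.le
  have hCδ : (C : ℝ) * δ ≤ 1 / 2 := by
    rw [hδdef, show (C : ℝ) * (T / (n:ℝ)) = (C : ℝ) * T / (n:ℝ) by ring,
      div_le_div_iff₀ hnpos (by norm_num : (0:ℝ) < 2)]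
    have : 2 * (C : ℝ) * T ≤ n := le_trans hn0 (by exact_mod_cast Nat.le_succ n0)
    linarith
  have main : ∀ k : ℕ, ∃ y : ℝ → ℝ, y 0 = y₀ ∧
      ∀ t ∈ Icc (0:ℝ) (k * δ), HasDerivWithinAt y (v t (y t)) (Icc 0 (k * δ)) t := by
    intro k
    induction k with
    | zero =>
      refine ⟨fun _ => y₀, rfl, ?_⟩
      intro t ht
      simp only [Nat.cast_zero, zero_mul, Icc_self, mem_singleton_iff] at ht
      subst ht
      simp only [Nat.cast_zero, zero_mul, Icc_self]
      rw [hasDerivWithinAt_iff_isLittleO, nhdsWithin_singleton, Asymptotics.isLittleO_pure]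
      simp
    | succ k ih =>
      obtain ⟨y, hy0, hy⟩ := ih
      set a : ℝ := k * δ with hadef
      set b : ℝ := a + δ with hbdef
      have ha : 0 ≤ a := by positivity
      have hab : a ≤ b := by simp [hbdef, hδ]
      set x₀ : ℝ := y a with hx₀
      have hcont0 : Continuous fun t : ℝ => v t x₀ :=
        hc.comp (continuous_id.prodMk continuous_const)
      obtain ⟨M, hM⟩ := (isCompact_Icc : IsCompact (Icc a b)).exists_bound_of_continuousOn
        hcont0.continuousOn
      set M₀ : ℝ := max M 0 with hM₀def
      have hM₀ : 0 ≤ M₀ := le_max_right _ _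
      set R : ℝ := 2 * M₀ * δ with hRdef
      have hR : 0 ≤ R := by positivity
      have hpl : IsPicardLindelof v (tmin := a) (tmax := b) ⟨a, left_mem_Icc.2 hab⟩ x₀ ⟨R, hR⟩ 0
          ⟨M₀ + C * R, by positivity⟩ C := by
        refine ⟨fun t _ => (hl t).lipschitzOnWith,
          fun x _ => (hc.comp (continuous_id.prodMk continuous_const)).continuousOn,
          ?_, ?_⟩
        · intro t ht x hx
          have h1 : dist (v t x) (v t x₀) ≤ (C : ℝ) * R :=
            le_trans ((hl t).dist_le_mul x x₀)
              (mul_le_mul_of_nonneg_left (Metric.mem_closedBall.mp hx) C.2)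
          have h2 : ‖v t x₀‖ ≤ M₀ := le_trans (hM t ht) (le_max_left _ _)
          have h3 : ‖v t x‖ - ‖v t x₀‖ ≤ ‖v t x - v t x₀‖ := norm_sub_norm_le _ _
          rw [dist_eq_norm] at h1
          change ‖v t x‖ ≤ M₀ + C * R
          linarith
        · change (M₀ + C * R) * max (b - a) (a - a) ≤ R - ((0 : NNReal) : ℝ)
          rw [NNReal.coe_zero, sub_zero]
          have hmax : max (b - a) (a - a) = δ := by
            simp [hbdef, sub_self, max_eq_left hδ]
          rw [hmax, hRdef]
          have hMδ : 0 ≤ M₀ * δ := mul_nonneg hM₀ hδ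
          nlinarith [mul_nonneg (mul_nonneg hM₀ hδ) hδ]
      obtain ⟨z, hz0, hz⟩ := hpl.exists_eq_forall_mem_Icc_hasDerivWithinAt₀
      refine ⟨fun s => if s ≤ a then y s else z s, by simp [ha, hy0], ?_⟩
      have hks : ((k + 1 : ℕ) : ℝ) * δ = b := by
        rw [hbdef, hadef]; push_cast; ring
      rw [hks]
      exact glue_ode_sol ha hab hy hz (hz0.trans rfl)
  obtain ⟨y, hy0, hy⟩ := main n
  have : (n : ℝ) * δ = T := by
    rw [hδdef]; field_simp
  rw [this] at hy
  exact ⟨y, hy0, hy⟩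

/-- **CDEs are strictly more expressive than ODE models of the form `y' = h(y(t), (t, x(t)))`.**
No Lipschitz `h : ℝ × ℝ² → ℝ` and continuous initial map `ξ : ℝ² → ℝ` can make every solution
of `y(0) = ξ(0, x(0))`, `y'(t) = h(y(t), (t, x(t)))` compute the increment `x(t) − x(0)` of
every continuously differentiable control `x`. -/
theorem no_ode_model_computes_increments
    (T : ℝ) (hT : 0 < T) :
    ¬ ∃ (h : ℝ → ℝ × ℝ → ℝ) (C : NNReal) (ξ : ℝ × ℝ → ℝ),
      LipschitzWith C (Function.uncurry h) ∧ Continuous ξ ∧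
      ∀ x x' : ℝ → ℝ,
        (∀ t ∈ Set.Icc (0:ℝ) T, HasDerivWithinAt x (x' t) (Set.Icc 0 T) t) →
        ContinuousOn x' (Set.Icc (0:ℝ) T) →
        ∀ y : ℝ → ℝ,
          y 0 = ξ (0, x 0) →
          (∀ t ∈ Set.Icc (0:ℝ) T, HasDerivWithinAt y (h (y t) (t, x t)) (Set.Icc 0 T) t) →
          ∀ t ∈ Set.Icc (0:ℝ) T, y t = x t - x 0 := by
  rintro ⟨h, C, ξ, hlip, hcont, H⟩
  have huc : Continuous (Function.uncurry h) := hlip.continuous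
  -- Step 1: for each constant control `c`, any solution is `0`; hence `h 0 (t, c) = 0`.
  have step1 : ∀ c : ℝ, (∀ t ∈ Icc (0:ℝ) T, h 0 (t, c) = 0) ∧ ξ (0, c) = 0 := by
    intro c
    set v : ℝ → ℝ → ℝ := fun t y => h y (t, c) with hv
    have hvl : ∀ t, LipschitzWith C (v t) := by
      intro t
      have : LipschitzWith 1 (fun y : ℝ => (y, ((t, c) : ℝ × ℝ))) := by
        have := (LipschitzWith.prodMk_right ((t, c) : ℝ × ℝ) : LipschitzWith 1
          (fun y : ℝ => (y, ((t, c) : ℝ × ℝ))))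
        exact this
      have := hlip.comp this; rw [mul_one] at this; exact this
    have hvc : Continuous (Function.uncurry v) := by
      show Continuous fun p : ℝ × ℝ => Function.uncurry h (p.2, (p.1, c))
      exact huc.comp ((continuous_snd).prodMk ((continuous_fst).prodMk continuous_const))
    obtain ⟨y, hy0, hy⟩ := exists_global_sol v C hvl hvc (ξ (0, c)) T hT.le
    have hzero : ∀ t ∈ Icc (0:ℝ) T, y t = 0 := by
      have := H (fun _ => c) (fun _ => 0)
        (fun t _ => hasDerivWithinAt_const t _ c) continuousOn_const y hy0 hy
      simpa using this
    constructor
    · intro t ht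
      have h1 : HasDerivWithinAt y (h (y t) (t, c)) (Icc 0 T) t := hy t ht
      have h2 : HasDerivWithinAt y 0 (Icc 0 T) t :=
        (hasDerivWithinAt_const t _ (0:ℝ)).congr hzero (hzero t ht)
      have hu : UniqueDiffWithinAt ℝ (Icc (0:ℝ) T) t := uniqueDiffOn_Icc hT t ht
      have := (h1.derivWithin hu).symm.trans (h2.derivWithin hu)
      rwa [hzero t ht] at this
    · rw [← hy0]
      exact hzero 0 (left_mem_Icc.2 hT.le)
  -- Step 2: with `x = id`, `y = 0` is a solution, so `0 = T`.
  have hx0 : ξ (0, (0:ℝ)) = 0 := (step1 0).2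
  have key := H id (fun _ => 1) (fun t _ => (hasDerivWithinAt_id t _))
    continuousOn_const (fun _ => 0) (by simpa using hx0.symm) ?_ T
    (right_mem_Icc.2 hT.le)
  · simp at key
    exact hT.ne' key.symm
  · intro t ht
    have : h 0 (t, t) = 0 := (step1 t).1 t ht
    simp only [id_eq, this]
    exact hasDerivWithinAt_const t _ 0
end

section
/- Let T > 0, let f : ℝ × ℝ^d → ℝ^d be continuously differentiable, and let Φ : ℝ × ℝ^d → ℝ^d be twice continuously differentiable with Φ(0,x) = x for all x and ∂Φ/∂t(t,x) = f(t, Φ(t,x)) for all (t,x). Let L : ℝ^d → ℝ be continuously differentiable. Fix x₀ ∈ ℝ^d and write y(t) = Φ(t, x₀). Suppose a : [0,T] → ℝ^d is differentiable with terminal condition a(T) = ∇L(y(T)) and a'(t) = −((∂f/∂y)(t, y(t)))ᵀ a(t) for all t ∈ [0,T], where (∂f/∂y)(t,y) ∈ ℝ^{d×d} is the Jacobian of f in its second argument. Then a(0) equals the gradient at x₀ of the map x ↦ L(Φ(T, x)), i.e. a(0) = ∇(L ∘ Φ(T,·))(x₀). (The continuous adjoint equations, solved backwards in time from the terminal gradient,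 compute the gradient of a terminal loss with respect to the initial condition of the ODE.) -/
private lemma adjoint_sum_cancel {d : ℕ} (M : Fin d → Fin d → ℝ) (p q : Fin d → ℝ) :
    ∑ k, ((-∑ j, M k j * p j) * q k + p k * ∑ j, q j * M j k) = 0 := by
  rw [Finset.sum_add_distrib]
  have h1 : ∑ k, (-∑ j, M k j * p j) * q k = -∑ k, ∑ j, M k j * p j * q k := by
    rw [← Finset.sum_neg_distrib]
    refine Finset.sum_congr rfl fun k _ => ?_
    rw [neg_mul, Finset.sum_mul]
  have h2 : ∑ k, p k * ∑ j, q j * M j k = ∑ k, ∑ j, M k j * p j * q k := by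
    simp_rw [Finset.mul_sum]
    rw [Finset.sum_comm]
    refine Finset.sum_congr rfl fun k _ => Finset.sum_congr rfl fun j _ => ?_
    ring
  rw [h1, h2, neg_add_cancel]

/-- **The continuous adjoint method computes the gradient of a terminal loss.** Let `Φ` be a
C² flow of a C¹ vector field `f` on `ℝ^d`, let `L : ℝ^d → ℝ` be C¹, write `y(t) = Φ(t, x₀)`,
and suppose `a : [0,T] → ℝ^d` solves the adjoint equation
`a'(t) = −((∂f/∂y)(t, y(t)))ᵀ a(t)` backwards from `a(T) = ∇L(y(T))`. Then
`a(0) = ∇(L ∘ Φ(T,·))(x₀)`. -/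
theorem continuous_adjoint_computes_gradient
    (T : ℝ) (hT : 0 < T) (d : ℕ)
    (f : ℝ → (Fin d → ℝ) → (Fin d → ℝ))
    (hf : ContDiff ℝ 1 (Function.uncurry f))
    (Φ : ℝ → (Fin d → ℝ) → (Fin d → ℝ))
    (hΦ : ContDiff ℝ 2 (Function.uncurry Φ))
    (hΦ0 : ∀ x, Φ 0 x = x)
    (hflow : ∀ (t : ℝ) (x : Fin d → ℝ), HasDerivAt (fun s => Φ s x) (f t (Φ t x)) t)
    (L : (Fin d → ℝ) → ℝ) (hL : ContDiff ℝ 1 L)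
    (x₀ : Fin d → ℝ)
    (a : ℝ → Fin d → ℝ)
    (haT : ∀ i, a T i = fderiv ℝ L (Φ T x₀) (Pi.single i 1))
    (ha : ∀ t ∈ Set.Icc (0:ℝ) T,
      HasDerivWithinAt a
        (fun i => -∑ k, fderiv ℝ (fun y => f t y k) (Φ t x₀) (Pi.single i 1) * a t k)
        (Set.Icc 0 T) t) :
    ∀ i, a 0 i = fderiv ℝ (fun x => L (Φ T x)) x₀ (Pi.single i 1) := by
  intro i
  set ψ : ℝ × (Fin d → ℝ) → (Fin d → ℝ) := Function.uncurry Φ with hψdef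
  have hψdiff : Differentiable ℝ ψ := hΦ.differentiable two_ne_zero
  have hF : ContDiff ℝ 1 (fderiv ℝ ψ) := by
    have : ContDiff ℝ (1+1) ψ := by norm_num; exact hΦ
    exact (contDiff_succ_iff_fderiv.mp this).2.2
  have hFdiff : Differentiable ℝ (fderiv ℝ ψ) := hF.differentiable one_ne_zero
  have hft : ∀ t, Differentiable ℝ (f t) := by
    intro t
    have := (hf.differentiable one_ne_zero).comp
      ((differentiable_const t).prodMk differentiable_id : Differentiable ℝ (fun y : Fin d → ℝ => (t, y)))
    exact this
  set e : Fin d → ℝ := Pi.single i 1 with he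
  set v : ℝ → Fin d → ℝ := fun t => fderiv ℝ ψ (t, x₀) (0, e) with hvdef
  -- partial derivative in x
  have hpart : ∀ (t : ℝ) (x : Fin d → ℝ), HasFDerivAt (fun x' => Φ t x')
      ((fderiv ℝ ψ (t, x)).comp (ContinuousLinearMap.inr ℝ ℝ (Fin d → ℝ))) x := by
    intro t x
    exact (hψdiff (t, x)).hasFDerivAt.comp x (hasFDerivAt_prodMk_right t x)
  -- time derivative identity
  have hflowfd : ∀ (t : ℝ) (x : Fin d → ℝ), fderiv ℝ ψ (t, x) (1, 0) = f t (Φ t x) := by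
    intro t x
    have h1 : HasDerivAt (fun s => ψ (s, x)) (fderiv ℝ ψ (t, x) (1, 0)) t := by
      have hcurve : HasDerivAt (fun s : ℝ => (s, x)) ((1 : ℝ), (0 : Fin d → ℝ)) t :=
        (hasDerivAt_id t).prodMk (hasDerivAt_const t x)
      exact (hψdiff (t, x)).hasFDerivAt.comp_hasDerivAt t hcurve
    exact h1.unique (hflow t x)
  -- the variational equation
  have hv : ∀ t : ℝ, HasDerivAt v (fderiv ℝ (f t) (Φ t x₀) (v t)) t := by
    intro t
    have hcurve : HasDerivAt (fun s : ℝ => (s, x₀)) ((1 : ℝ), (0 : Fin d → ℝ)) t :=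
      (hasDerivAt_id t).prodMk (hasDerivAt_const t x₀)
    have h1 : HasDerivAt (fun s => fderiv ℝ ψ (s, x₀)) (fderiv ℝ (fderiv ℝ ψ) (t, x₀) (1, 0)) t :=
      (hFdiff (t, x₀)).hasFDerivAt.comp_hasDerivAt t hcurve
    have h2 : HasDerivAt v (fderiv ℝ (fderiv ℝ ψ) (t, x₀) (1, 0) (0, e)) t := by
      have := h1.clm_apply (hasDerivAt_const t (((0 : ℝ), e) : ℝ × (Fin d → ℝ)))
      simpa using this
    have hsym : fderiv ℝ (fderiv ℝ ψ) (t, x₀) (1, 0) (0, e)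
        = fderiv ℝ (fderiv ℝ ψ) (t, x₀) (0, e) (1, 0) :=
      (hΦ.contDiffAt.isSymmSndFDerivAt (by simp)) _ _
    rw [hsym] at h2
    -- now identify the mixed second derivative with the linearized vector field
    set c : ℝ → Fin d → ℝ := fun s => x₀ + s • e with hcdef
    have hc : HasDerivAt c e 0 := by
      have := ((hasDerivAt_id (0:ℝ)).smul_const e).const_add x₀
      simpa [hcdef] using this
    have hc0 : c 0 = x₀ := by simp [hcdef]
    have hcc : HasDerivAt (fun s => ((t, c s) : ℝ × (Fin d → ℝ))) ((0 : ℝ), e) 0 :=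
      (hasDerivAt_const 0 t).prodMk hc
    have hL1 : HasDerivAt (fun s => fderiv ℝ ψ (t, c s) (1, 0))
        (fderiv ℝ (fderiv ℝ ψ) (t, x₀) (0, e) (1, 0)) 0 := by
      have ha1 : HasDerivAt (fun s => fderiv ℝ ψ (t, c s))
          (fderiv ℝ (fderiv ℝ ψ) (t, x₀) (0, e)) 0 := by
        have hF0 : HasFDerivAt (fderiv ℝ ψ) (fderiv ℝ (fderiv ℝ ψ) (t, x₀)) (t, c 0) := by
          rw [hc0]; exact (hFdiff (t, x₀)).hasFDerivAt
        have := hF0.comp_hasDerivAt 0 hcc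
        simpa [Function.comp_def] using this
      have := ha1.clm_apply (hasDerivAt_const 0 (((1:ℝ), (0 : Fin d → ℝ)) : ℝ × (Fin d → ℝ)))
      simpa [hc0] using this
    have hR1 : HasDerivAt (fun s => f t (Φ t (c s))) (fderiv ℝ (f t) (Φ t x₀) (v t)) 0 := by
      have hphi : HasDerivAt (fun s => Φ t (c s)) (v t) 0 := by
        have hp0 : HasFDerivAt (fun x' => Φ t x')
            ((fderiv ℝ ψ (t, x₀)).comp (ContinuousLinearMap.inr ℝ ℝ (Fin d → ℝ))) (c 0) := by
          rw [hc0]; exact hpart t x₀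
        have := hp0.comp_hasDerivAt 0 hc
        simpa [hvdef, Function.comp_def] using this
      have hf0 : HasFDerivAt (f t) (fderiv ℝ (f t) (Φ t x₀)) (Φ t (c 0)) := by
        rw [hc0]; exact ((hft t) (Φ t x₀)).hasFDerivAt
      exact hf0.comp_hasDerivAt 0 hphi
    have heqfun : (fun s => fderiv ℝ ψ (t, c s) (1, 0)) = (fun s => f t (Φ t (c s))) := by
      funext s; exact hflowfd t (c s)
    rw [heqfun] at hL1
    have hkey : fderiv ℝ (fderiv ℝ ψ) (t, x₀) (0, e) (1, 0) = fderiv ℝ (f t) (Φ t x₀) (v t) :=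
      hL1.unique hR1
    rw [hkey] at h2
    exact h2
  -- expansion of vectors in the standard basis
  have hw : ∀ w : Fin d → ℝ, w = ∑ j, (w j) • (Pi.single j 1 : Fin d → ℝ) := by
    intro w
    rw [← Finset.univ_sum_single w]
    refine Finset.sum_congr rfl fun j _ => ?_
    funext l
    by_cases h : l = j <;> simp [h, Pi.single_apply]
  -- coordinate form of the derivative of f
  have hcoord : ∀ (t : ℝ) (w : Fin d → ℝ) (k : Fin d),
      fderiv ℝ (fun y => f t y k) (Φ t x₀) w = fderiv ℝ (f t) (Φ t x₀) w k := by
    intro t w k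
    have hp : HasFDerivAt (fun y => f t y k)
        ((ContinuousLinearMap.proj (R := ℝ) (φ := fun _ : Fin d => ℝ) k).comp
          (fderiv ℝ (f t) (Φ t x₀))) (Φ t x₀) :=
      (ContinuousLinearMap.proj (R := ℝ) (φ := fun _ : Fin d => ℝ) k).hasFDerivAt.comp
        (Φ t x₀) ((hft t) (Φ t x₀)).hasFDerivAt
    rw [hp.fderiv]
    rfl
  have hvk : ∀ (t : ℝ) (k : Fin d),
      fderiv ℝ (f t) (Φ t x₀) (v t) k
        = ∑ j, fderiv ℝ (fun y => f t y k) (Φ t x₀) (Pi.single j 1) * v t j := by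
    intro t k
    conv_lhs => rw [hw (v t)]
    rw [map_sum, Finset.sum_apply]
    refine Finset.sum_congr rfl fun j _ => ?_
    rw [map_smul, hcoord]
    simp [mul_comm]
  -- the conserved pairing
  set g : ℝ → ℝ := fun t => ∑ k, a t k * v t k with hgdef
  have hg : ∀ t ∈ Set.Icc (0:ℝ) T, HasDerivWithinAt g 0 (Set.Icc (0:ℝ) T) t := by
    intro t ht
    have hak := hasDerivWithinAt_pi.mp (ha t ht)
    have hvt := hasDerivAt_pi.mp (hv t)
    have hsum : HasDerivWithinAt g
        (∑ k, ((-∑ j, fderiv ℝ (fun y => f t y j) (Φ t x₀) (Pi.single k 1) * a t j)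
            * v t k + a t k * (fderiv ℝ (f t) (Φ t x₀) (v t) k))) (Set.Icc (0:ℝ) T) t := by
      refine HasDerivWithinAt.fun_sum fun k _ => ?_
      exact HasDerivWithinAt.mul (by simpa using hak k) ((hvt k).hasDerivWithinAt)
    have hzero : (∑ k, ((-∑ j, fderiv ℝ (fun y => f t y j) (Φ t x₀) (Pi.single k 1) * a t j)
            * v t k + a t k * (fderiv ℝ (f t) (Φ t x₀) (v t) k))) = 0 := by
      have := adjoint_sum_cancel
        (fun k j => fderiv ℝ (fun y => f t y j) (Φ t x₀) (Pi.single k 1)) (a t) (v t)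
      rw [← this]
      refine Finset.sum_congr rfl fun k _ => ?_
      rw [hvk t k]
      congr 1
      congr 1
      refine Finset.sum_congr rfl fun j _ => ?_
      ring
    rwa [hzero] at hsum
  -- g is constant
  have hgc : ContinuousOn g (Set.Icc 0 T) := fun t ht => (hg t ht).continuousWithinAt
  have hconst : ∀ t ∈ Set.Icc (0:ℝ) T, g t = g 0 := by
    refine constant_of_has_deriv_right_zero hgc fun x hx => ?_
    exact (hg x (Set.Ico_subset_Icc_self hx)).mono_of_mem_nhdsWithin (Icc_mem_nhdsGE_of_mem hx)
  have hgTg0 : g T = g 0 := hconst T (Set.right_mem_Icc.mpr hT.le)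
  -- endpoint values
  have hv0 : v 0 = e := by
    have hid : HasFDerivAt (fun x' => Φ 0 x')
        (ContinuousLinearMap.id ℝ (Fin d → ℝ)) x₀ := by
      have hfun : (fun x' : Fin d → ℝ => Φ 0 x') = fun x' => x' := funext hΦ0
      rw [hfun]; exact hasFDerivAt_id x₀
    have huniq := (hpart 0 x₀).unique hid
    have := congrArg (fun l : (Fin d → ℝ) →L[ℝ] (Fin d → ℝ) => l e) huniq
    simpa [hvdef] using this
  have hg0 : g 0 = a 0 i := by
    rw [hgdef]
    simp only [hv0, he, Pi.single_apply]
    simp [mul_ite]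
  have hgT : g T = fderiv ℝ L (Φ T x₀) (v T) := by
    rw [hgdef]
    conv_rhs => rw [hw (v T)]
    rw [map_sum]
    refine Finset.sum_congr rfl fun k _ => ?_
    rw [map_smul, haT k]
    simp [mul_comm]
  -- chain rule at the final time
  have hchain : HasFDerivAt (fun x => L (Φ T x))
      ((fderiv ℝ L (Φ T x₀)).comp
        ((fderiv ℝ ψ (T, x₀)).comp (ContinuousLinearMap.inr ℝ ℝ (Fin d → ℝ)))) x₀ :=
    ((hL.differentiable one_ne_zero) (Φ T x₀)).hasFDerivAt.comp x₀ (hpart T x₀)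
  rw [hchain.fderiv]
  rw [← hg0, ← hgTg0, hgT]
  simp [hvdef, he]
end

section
/- Let y₀ ∈ ℂ and let z = iθ be purely imaginary with θ ∈ ℝ and |θ| < 1. Define complex sequences (y_j), (ŷ_j) by ŷ_0 = y_0 = y₀ and, for j ≥ 0, ŷ_{j+1} = 2y_j − ŷ_j + z ŷ_j and y_{j+1} = y_j + (z/2)(ŷ_j + ŷ_{j+1}). Then the sequence (y_j)_{j∈ℕ} is bounded: there exists C > 0 with |y_j| ≤ C for all j ∈ ℕ. (Stability of the reversible Heun method on the linear test equation: purely imaginary λΔt of modulus less than one lies in the region of stability.) -/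
/-- **Stability of the reversible Heun method on the linear test equation.** For `z = iθ`
purely imaginary with `|θ| < 1`, the reversible Heun iterates
`ŷ_{j+1} = 2y_j − ŷ_j + z ŷ_j`, `y_{j+1} = y_j + (z/2)(ŷ_j + ŷ_{j+1})` started from
`y_0 = ŷ_0 = y₀` remain bounded. -/
theorem reversible_heun_stable_on_imaginary_interval
    (y₀ : ℂ) (θ : ℝ) (hθ : |θ| < 1)
    (y yhat : ℕ → ℂ)
    (hy0 : y 0 = y₀) (hyhat0 : yhat 0 = y₀)
    (hyhat : ∀ j, yhat (j + 1) = 2 * y j - yhat j + (θ * Complex.I) * yhat j)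
    (hy : ∀ j, y (j + 1) = y j + (θ * Complex.I / 2) * (yhat j + yhat (j + 1))) :
    ∃ C > 0, ∀ j, ‖y j‖ ≤ C := by
  have hθ2 : θ ^ 2 < 1 := by nlinarith [abs_lt.mp hθ]
  set s : ℝ := Real.sqrt (1 - θ ^ 2) with hs
  have hs2 : s ^ 2 = 1 - θ ^ 2 := Real.sq_sqrt (by linarith)
  have hspos : 0 < s := Real.sqrt_pos.mpr (by linarith)
  have hsc : (s : ℂ) ^ 2 = 1 - (θ : ℂ) ^ 2 := by exact_mod_cast congrArg (Complex.ofReal) hs2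
  set a : ℂ := (1 + (s : ℂ)) / 2 with ha
  set b : ℂ := (1 - (s : ℂ)) / 2 with hb
  set u : ℕ → ℂ := fun j => y j - a * yhat j with hu
  set v : ℕ → ℂ := fun j => y j - b * yhat j with hv
  have hustep : ∀ j, u (j + 1) = ((θ : ℂ) * Complex.I - s) * u j := by
    intro j
    simp only [hu, ha]
    rw [hy j, hyhat j]
    linear_combination (-(yhat j) / 2) * hsc + ((θ:ℂ)^2 * yhat j / 2) * Complex.I_sq
  have hvstep : ∀ j, v (j + 1) = ((θ : ℂ) * Complex.I + s) * v j := by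
    intro j
    simp only [hv, hb]
    rw [hy j, hyhat j]
    linear_combination (-(yhat j) / 2) * hsc + ((θ:ℂ)^2 * yhat j / 2) * Complex.I_sq
  have habs1 : ‖(θ : ℂ) * Complex.I - s‖ = 1 := by
    have : Complex.normSq ((θ : ℂ) * Complex.I - s) = 1 := by
      simp [Complex.normSq_apply]
      nlinarith [hs2]
    rw [Complex.norm_def, this, Real.sqrt_one]
  have habs2 : ‖(θ : ℂ) * Complex.I + s‖ = 1 := by
    have : Complex.normSq ((θ : ℂ) * Complex.I + s) = 1 := by
      simp [Complex.normSq_apply]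
      nlinarith [hs2]
    rw [Complex.norm_def, this, Real.sqrt_one]
  have huabs : ∀ j, ‖u j‖ = ‖u 0‖ := by
    intro j
    induction j with
    | zero => rfl
    | succ n ih => rw [hustep n, norm_mul, habs1, one_mul, ih]
  have hvabs : ∀ j, ‖v j‖ = ‖v 0‖ := by
    intro j
    induction j with
    | zero => rfl
    | succ n ih => rw [hvstep n, norm_mul, habs2, one_mul, ih]
  refine ⟨(‖a‖ * ‖v 0‖ + ‖b‖ * ‖u 0‖) / s + 1,
    by positivity, fun j => ?_⟩
  have hkey : (s : ℂ) * y j = a * v j - b * u j := by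
    simp only [hu, hv, ha, hb]; ring
  have habs : s * ‖y j‖ ≤
      ‖a‖ * ‖v 0‖ + ‖b‖ * ‖u 0‖ := by
    have h1 : ‖(s : ℂ) * y j‖ = s * ‖y j‖ := by
      rw [norm_mul, Complex.norm_of_nonneg hspos.le]
    calc s * ‖y j‖ = ‖a * v j - b * u j‖ := by rw [← h1, hkey]
      _ ≤ ‖a * v j‖ + ‖b * u j‖ := norm_sub_le _ _
      _ = ‖a‖ * ‖v 0‖ + ‖b‖ * ‖u 0‖ := by
          rw [norm_mul, norm_mul, huabs j, hvabs j]
  calc ‖y j‖ = s * ‖y j‖ / s := by field_simp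
    _ ≤ (‖a‖ * ‖v 0‖ + ‖b‖ * ‖u 0‖) / s := by
        exact (div_le_div_iff_of_pos_right hspos).mpr habs
    _ ≤ _ := by linarith
end

section
/- Let y₀ ∈ ℂ with y₀ ≠ 0, and let z ∈ ℂ be such that z does not lie in the imaginary interval [−i, i], i.e. either Re(z) ≠ 0 or |Im(z)| > 1. Define complex sequences (y_j), (ŷ_j) by ŷ_0 = y_0 = y₀ and, for j ≥ 0, ŷ_{j+1} = 2y_j − ŷ_j + z ŷ_j and y_{j+1} = y_j + (z/2)(ŷ_j + ŷ_{j+1}). Then the sequence (y_j)_{j∈ℕ} is unbounded: for every C > 0 there exists j ∈ ℕ with |y_j| > C. (Instability of the reversible Heun method on the linear test equation outside the imaginary interval [−i, i].) -/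
/-- **Instability of the reversible Heun method outside the imaginary interval `[−i, i]`.**
If `y₀ ≠ 0` and `z ∈ ℂ` has `Re(z) ≠ 0` or `|Im(z)| > 1`, then the reversible Heun iterates
`ŷ_{j+1} = 2y_j − ŷ_j + z ŷ_j`, `y_{j+1} = y_j + (z/2)(ŷ_j + ŷ_{j+1})` started from
`y_0 = ŷ_0 = y₀` are unbounded. -/
theorem reversible_heun_unstable_outside_imaginary_interval
    (y₀ : ℂ) (hy₀ : y₀ ≠ 0) (z : ℂ) (hz : z.re ≠ 0 ∨ 1 < |z.im|)
    (y yhat : ℕ → ℂ)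
    (hy0 : y 0 = y₀) (hyhat0 : yhat 0 = y₀)
    (hyhat : ∀ j, yhat (j + 1) = 2 * y j - yhat j + z * yhat j)
    (hy : ∀ j, y (j + 1) = y j + (z / 2) * (yhat j + yhat (j + 1))) :
    ∀ C : ℝ, 0 < C → ∃ j, C < ‖y j‖ := by
  intro C hC
  -- z ≠ 0
  have hz0 : z ≠ 0 := by rintro rfl; simp at hz; linarith
  -- square root of z^2+1, ordered so that |z-w| ≤ |z+w|
  obtain ⟨w₀, hw₀⟩ := IsAlgClosed.exists_pow_nat_eq (z ^ 2 + 1) (n := 2) (by norm_num)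
  obtain ⟨w, hw, hord⟩ : ∃ w : ℂ, w ^ 2 = z ^ 2 + 1 ∧
      ‖z - w‖ ≤ ‖z + w‖ := by
    rcases le_total (‖z - w₀‖) (‖z + w₀‖) with h | h
    · exact ⟨w₀, hw₀, h⟩
    · refine ⟨-w₀, by rw [neg_pow]; simpa using hw₀, ?_⟩
      simpa [sub_neg_eq_add, ← sub_eq_add_neg] using h
  -- w ≠ 0
  have hwne : w ≠ 0 := by
    rintro rfl
    have h1 : z ^ 2 = -1 := by linear_combination -hw
    have hre : z.re ^ 2 - z.im ^ 2 = -1 := by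
      have := congrArg Complex.re h1
      simpa [pow_two, Complex.mul_re] using this
    have him : z.re * z.im + z.im * z.re = 0 := by
      have := congrArg Complex.im h1
      simpa [pow_two, Complex.mul_im] using this
    rcases hz with h | h
    · have : z.im = 0 := by
        rcases mul_eq_zero.1 (by linarith : z.re * z.im = 0) with h' | h'
        · exact absurd h' h
        · exact h'
      rw [this] at hre; nlinarith [sq_nonneg z.re]
    · nlinarith [sq_abs z.im, abs_nonneg z.im, sq_nonneg z.re]
  -- w + 1 ≠ 0
  have hw1 : w + 1 ≠ 0 := by
    intro h
    have hwm : w = -1 := by linear_combination h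
    have : z ^ 2 = 0 := by rw [hwm] at hw; linear_combination -hw
    exact hz0 (pow_eq_zero_iff (by norm_num)|>.1 this)
  -- product of eigenvalues is -1
  have hprod : (z + w) * (z - w) = -1 := by linear_combination -hw
  have habsprod : ‖z + w‖ * ‖z - w‖ = 1 := by
    rw [← norm_mul, hprod]; simp
  have hM1 : 1 ≤ ‖z + w‖ := by
    nlinarith [norm_nonneg (z + w),
      norm_nonneg (z - w)]
  -- |z+w| > 1
  have hμ : 1 < ‖z + w‖ := by
    rcases lt_or_eq_of_le hM1 with h | h
    · exact h
    exfalso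
    have hMe : ‖z + w‖ = 1 := h.symm
    have hmu0 : z + w ≠ 0 := by
      intro h0; rw [h0] at hMe; simp at hMe
    have hconj : (z + w) * (starRingEnd ℂ) (z + w) = 1 := by
      rw [Complex.mul_conj]
      norm_cast
      rw [Complex.normSq_eq_norm_sq, hMe]; norm_num
    have hν : z - w = -(starRingEnd ℂ) (z + w) := by
      exact mul_left_cancel₀ hmu0 (by linear_combination hprod + hconj :
        (z + w) * (z - w) = (z + w) * (-(starRingEnd ℂ) (z + w)))
    have h2z : 2 * z = (z + w) - (starRingEnd ℂ) (z + w) := by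
      linear_combination hν
    have hre : z.re = 0 := by
      have := congrArg Complex.re h2z
      simp [Complex.sub_re, Complex.conj_re] at this
      linarith
    have him : z.im = (z + w).im := by
      have := congrArg Complex.im h2z
      simp [Complex.sub_im, Complex.conj_im, Complex.add_im] at this ⊢
      linarith
    rcases hz with h' | h'
    · exact h' hre
    · have : |z.im| ≤ 1 := by
        rw [him, ← hMe]; exact Complex.abs_im_le_norm _
      linarith
  -- eigen-sequences
  have hu : ∀ j, 2 * y j + (w - 1) * yhat j = (z + w) ^ j * ((w + 1) * y₀) := by
    intro j
    induction j with
    | zero => simp [hy0, hyhat0]; ring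
    | succ j ih =>
      have e1 := hy j
      have e2 := hyhat j
      linear_combination 2 * e1 + (w - 1 + z) * e2 + (z + w) * ih - yhat j * hw
  have hv : ∀ j, 2 * y j + (-w - 1) * yhat j = (z - w) ^ j * ((-w + 1) * y₀) := by
    intro j
    induction j with
    | zero => simp [hy0, hyhat0]; ring
    | succ j ih =>
      have e1 := hy j
      have e2 := hyhat j
      linear_combination 2 * e1 + (-w - 1 + z) * e2 + (z - w) * ih - yhat j * hw
  have key : ∀ j, 4 * w * y j =
      (w + 1) ^ 2 * y₀ * (z + w) ^ j - (w - 1) ^ 2 * y₀ * (z - w) ^ j := by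
    intro j
    linear_combination (w + 1) * hu j + (w - 1) * hv j
  -- set up real constants
  set M := ‖z + w‖ with hMdef
  set N := ‖z - w‖ with hNdef
  set A := ‖(w + 1) ^ 2 * y₀‖ with hAdef
  set B := ‖(w - 1) ^ 2 * y₀‖ with hBdef
  set W := ‖w‖ with hWdef
  have hA : 0 < A := by
    apply norm_pos_iff.2
    exact mul_ne_zero (pow_ne_zero _ hw1) hy₀
  have hW : 0 < W := norm_pos_iff.2 hwne
  have hB : 0 ≤ B := norm_nonneg _
  have hN1 : N ≤ 1 := by nlinarith
  have hN0 : 0 ≤ N := norm_nonneg _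
  obtain ⟨j, hj⟩ := pow_unbounded_of_one_lt ((4 * C * W + B) / A) hμ
  refine ⟨j, ?_⟩
  have hlow : A * M ^ j - B * N ^ j ≤ 4 * W * ‖y j‖ := by
    have h1 : ‖4 * w * y j‖ = 4 * W * ‖y j‖ := by
      rw [norm_mul, norm_mul]; simp [hWdef]
    have h2 : ‖(w + 1) ^ 2 * y₀ * (z + w) ^ j‖ = A * M ^ j := by
      rw [norm_mul, norm_pow]
    have h3 : ‖(w - 1) ^ 2 * y₀ * (z - w) ^ j‖ = B * N ^ j := by
      rw [norm_mul, norm_pow]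
    calc A * M ^ j - B * N ^ j
        = ‖(w + 1) ^ 2 * y₀ * (z + w) ^ j‖
          - ‖(w - 1) ^ 2 * y₀ * (z - w) ^ j‖ := by rw [h2, h3]
      _ ≤ ‖(w + 1) ^ 2 * y₀ * (z + w) ^ j
          - (w - 1) ^ 2 * y₀ * (z - w) ^ j‖ := by
          exact norm_sub_norm_le
            ((w + 1) ^ 2 * y₀ * (z + w) ^ j) ((w - 1) ^ 2 * y₀ * (z - w) ^ j)
      _ = ‖4 * w * y j‖ := by rw [← key j]
      _ = 4 * W * ‖y j‖ := h1
  have hNj : N ^ j ≤ 1 := pow_le_one₀ hN0 hN1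
  have hAMj : 4 * C * W + B < A * M ^ j := by
    rw [div_lt_iff₀ hA] at hj; linarith
  have : 4 * C * W < 4 * W * ‖y j‖ := by
    nlinarith [mul_le_mul_of_nonneg_left hNj hB]
  linarith [(mul_lt_mul_iff_right₀ (by linarith : (0:ℝ) < 4 * W)).1 (by linarith : 4 * W * C < 4 * W * ‖y j‖)]
end

section
/- Let T > 0 and let f : ℝ × ℝ^d → ℝ^d be twice continuously differentiable with f and its first and second derivatives bounded. Let y : [0,T] → ℝ^d solve y'(t) = f(t, y(t)). Fix t ∈ [0,T) and initialise an asynchronous leapfrog step from the exact state (y, v) = (y(t), y'(t)): for step size Δt ∈ (0, T − t], define ŷ = y + vΔt/2, v̂ = f(t + Δt/2, ŷ), y⁺ = y + v̂ Δt, v⁺ = 2v̂ − v. Then there exists a constant C > 0, depending only on f (not on t or Δt), such that ‖y⁺ − y(t + Δt)‖ ≤ C Δt³ and ‖v⁺ − y'(t + Δt)‖ ≤ C Δt². (The asynchronous leapfrog method is a second-order method: the local truncation error in y is O(Δt³) and in v is O(Δt²).) -/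
set_option maxHeartbeats 1000000

lemma alf_taylor1 {E : Type*} [NormedAddCommGroup E] [NormedSpace ℝ E]
    {g g' : ℝ → E} {s : Set ℝ} (hs : Convex ℝ s)
    (hg : ∀ u ∈ s, HasDerivWithinAt g (g' u) s u)
    {c x : ℝ} (hc : c ∈ s) (hx : x ∈ s) {K : ℝ}
    (hK : ∀ u ∈ s, ‖g' u - g' c‖ ≤ K) :
    ‖g x - g c - (x - c) • g' c‖ ≤ K * ‖x - c‖ := by
  have hψ : ∀ u ∈ s, HasDerivWithinAt (fun u => g u - u • g' c) (g' u - g' c) s u := by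
    intro u hu
    have h2 : HasDerivWithinAt (fun u : ℝ => u • g' c) ((1:ℝ) • g' c) s u :=
      ((hasDerivAt_id u).smul_const (g' c)).hasDerivWithinAt
    rw [one_smul] at h2
    exact (hg u hu).sub h2
  have := hs.norm_image_sub_le_of_norm_hasDerivWithin_le hψ hK hc hx
  have heq : g x - x • g' c - (g c - c • g' c) = g x - g c - (x - c) • g' c := by
    rw [sub_smul]; abel
  rwa [heq] at this

/-- **The asynchronous leapfrog method is a second-order method.** For a C² vector field `f`
that is bounded with bounded first and second derivatives, a single asynchronous leapfrog
step started from the exact state `(y(t), y'(t))` of a solution `y` of `y' = f(t, y(t))` has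
local truncation error `O(Δt³)` in `y` and `O(Δt²)` in `v`, with a constant depending only
on `f`. Here `ŷ = y + vΔt/2`, `v̂ = f(t + Δt/2, ŷ)`, `y⁺ = y + v̂Δt`, `v⁺ = 2v̂ − v`. -/
theorem asynchronous_leapfrog_local_truncation_error
    (d : ℕ) (f : ℝ → (Fin d → ℝ) → (Fin d → ℝ))
    (hf : ContDiff ℝ 2 (Function.uncurry f))
    (hbdd : ∃ B : ℝ, ∀ i : ℕ, i ≤ 2 → ∀ q : ℝ × (Fin d → ℝ),
      ‖iteratedFDeriv ℝ i (Function.uncurry f) q‖ ≤ B) :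
    ∃ C > 0, ∀ T : ℝ, 0 < T →
      ∀ y : ℝ → Fin d → ℝ,
        (∀ t ∈ Set.Icc (0:ℝ) T, HasDerivWithinAt y (f t (y t)) (Set.Icc 0 T) t) →
        ∀ t ∈ Set.Ico (0:ℝ) T, ∀ Δt : ℝ, 0 < Δt → Δt ≤ T - t →
          ‖(y t + Δt • f (t + Δt / 2) (y t + (Δt / 2) • f t (y t))) - y (t + Δt)‖
              ≤ C * Δt ^ 3 ∧
          ‖((2:ℝ) • f (t + Δt / 2) (y t + (Δt / 2) • f t (y t)) - f t (y t))
              - f (t + Δt) (y (t + Δt))‖ ≤ C * Δt ^ 2 := by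
  classical
  obtain ⟨B, hB⟩ := hbdd
  set F := Function.uncurry f with hFdef
  have hB0 : 0 ≤ B := le_trans (norm_nonneg _) (hB 0 (by norm_num) (0, 0))
  -- pointwise bounds
  have hF0 : ∀ q, ‖F q‖ ≤ B := by
    intro q
    have := hB 0 (by norm_num) q
    rwa [norm_iteratedFDeriv_zero] at this
  have hF1 : ∀ q, ‖fderiv ℝ F q‖ ≤ B := by
    intro q
    have := hB 1 (by norm_num) q
    rwa [← norm_iteratedFDeriv_fderiv, norm_iteratedFDeriv_zero] at this
  have hF2 : ∀ q, ‖fderiv ℝ (fderiv ℝ F) q‖ ≤ B := by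
    intro q
    have := hB 2 (by norm_num) q
    rwa [← norm_iteratedFDeriv_fderiv, ← norm_iteratedFDeriv_fderiv,
      norm_iteratedFDeriv_zero] at this
  have hFdiff : Differentiable ℝ F := hf.differentiable (by norm_num)
  have hF'cd : ContDiff ℝ 1 (fderiv ℝ F) := hf.fderiv_right (by norm_num)
  have hF'diff : Differentiable ℝ (fderiv ℝ F) := hF'cd.differentiable one_ne_zero
  have hFlip : ∀ p q : ℝ × (Fin d → ℝ), ‖F p - F q‖ ≤ B * ‖p - q‖ := fun p q =>
    convex_univ.norm_image_sub_le_of_norm_fderiv_le (fun x _ => hFdiff x)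
      (fun x _ => hF1 x) trivial trivial
  have hF'lip : ∀ p q : ℝ × (Fin d → ℝ), ‖fderiv ℝ F p - fderiv ℝ F q‖ ≤ B * ‖p - q‖ :=
    fun p q => convex_univ.norm_image_sub_le_of_norm_fderiv_le (fun x _ => hF'diff x)
      (fun x _ => hF2 x) trivial trivial
  set M := B * (1 + B) with hMdef
  set L := B * (1 + B) ^ 2 + B ^ 2 * (1 + B) with hLdef
  have hM0 : 0 ≤ M := by positivity
  have hL0 : 0 ≤ L := by positivity
  refine ⟨B * M + 2 * L + 1, by positivity, ?_⟩
  intro T hT y hy t ht Δt hΔ hΔT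
  set s := Set.Icc (0:ℝ) T with hsdef
  set g : ℝ → Fin d → ℝ := fun u => f u (y u) with hgdef
  have hgF : ∀ u, g u = F (u, y u) := fun u => rfl
  set G : ℝ → Fin d → ℝ := fun u => fderiv ℝ F (u, y u) (1, g u) with hGdef
  have hy' : ∀ u ∈ s, HasDerivWithinAt y (g u) s u := hy
  have hg' : ∀ u ∈ s, HasDerivWithinAt g (G u) s u := by
    intro u hu
    have hc : HasDerivWithinAt (fun u => ((u : ℝ), y u)) ((1:ℝ), g u) s u :=
      HasDerivWithinAt.prodMk (hasDerivWithinAt_id u s) (hy' u hu)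
    exact (hFdiff (u, y u)).hasFDerivAt.comp_hasDerivWithinAt u hc
  have hgB : ∀ u, ‖g u‖ ≤ B := fun u => hF0 (u, y u)
  have hone : ∀ v : Fin d → ℝ, ‖((1:ℝ), v)‖ ≤ 1 + ‖v‖ := by
    intro v
    rw [Prod.norm_def]
    simp only [norm_one]
    exact max_le (by linarith [norm_nonneg v]) (by linarith)
  have hGB : ∀ u, ‖G u‖ ≤ M := by
    intro u
    calc ‖G u‖ ≤ ‖fderiv ℝ F (u, y u)‖ * ‖((1:ℝ), g u)‖ :=
          (fderiv ℝ F (u, y u)).le_opNorm _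
      _ ≤ B * (1 + B) := by
          apply mul_le_mul (hF1 _) (le_trans (hone _) (by linarith [hgB u]))
            (norm_nonneg _) hB0
  -- Lipschitz bounds along the solution
  have hylip : ∀ a ∈ s, ∀ b ∈ s, ‖y a - y b‖ ≤ B * ‖a - b‖ := fun a ha b hb =>
    (convex_Icc 0 T).norm_image_sub_le_of_norm_hasDerivWithin_le hy' (fun u _ => hgB u)
      hb ha
  have hcurve : ∀ a ∈ s, ∀ b ∈ s, ‖((a : ℝ), y a) - (b, y b)‖ ≤ (1 + B) * ‖a - b‖ := by
    intro a ha b hb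
    rw [Prod.mk_sub_mk, Prod.norm_def]
    have h1 : ‖a - b‖ ≤ (1 + B) * ‖a - b‖ := by nlinarith [norm_nonneg (a - b)]
    have h2 : ‖y a - y b‖ ≤ (1 + B) * ‖a - b‖ := by
      have := hylip a ha b hb; nlinarith [norm_nonneg (a - b)]
    exact max_le h1 h2
  have hglip : ∀ a ∈ s, ∀ b ∈ s, ‖g a - g b‖ ≤ M * ‖a - b‖ := by
    intro a ha b hb
    calc ‖g a - g b‖ = ‖F (a, y a) - F (b, y b)‖ := by rw [hgF, hgF]
      _ ≤ B * ‖((a : ℝ), y a) - (b, y b)‖ := hFlip _ _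
      _ ≤ B * ((1 + B) * ‖a - b‖) := by
          exact mul_le_mul_of_nonneg_left (hcurve a ha b hb) hB0
      _ = M * ‖a - b‖ := by rw [hMdef]; ring
  have hGlip : ∀ a ∈ s, ∀ b ∈ s, ‖G a - G b‖ ≤ L * ‖a - b‖ := by
    intro a ha b hb
    have hdecomp : G a - G b =
        (fderiv ℝ F (a, y a) - fderiv ℝ F (b, y b)) ((1:ℝ), g a)
          + fderiv ℝ F (b, y b) (((1:ℝ), g a) - ((1:ℝ), g b)) := by
      simp only [hGdef, ContinuousLinearMap.sub_apply, map_sub]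
      abel
    rw [hdecomp]
    have h1 : ‖(fderiv ℝ F (a, y a) - fderiv ℝ F (b, y b)) ((1:ℝ), g a)‖
        ≤ (B * ((1 + B) * ‖a - b‖)) * (1 + B) := by
      calc ‖(fderiv ℝ F (a, y a) - fderiv ℝ F (b, y b)) ((1:ℝ), g a)‖
          ≤ ‖fderiv ℝ F (a, y a) - fderiv ℝ F (b, y b)‖ * ‖((1:ℝ), g a)‖ :=
            ContinuousLinearMap.le_opNorm _ _
        _ ≤ (B * ((1 + B) * ‖a - b‖)) * (1 + B) := by
            apply mul_le_mul _ (le_trans (hone _) (by linarith [hgB a])) (norm_nonneg _)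
              (by positivity)
            exact le_trans (hF'lip _ _) (mul_le_mul_of_nonneg_left (hcurve a ha b hb) hB0)
    have h2 : ‖fderiv ℝ F (b, y b) (((1:ℝ), g a) - ((1:ℝ), g b))‖
        ≤ B * (M * ‖a - b‖) := by
      calc ‖fderiv ℝ F (b, y b) (((1:ℝ), g a) - ((1:ℝ), g b))‖
          ≤ ‖fderiv ℝ F (b, y b)‖ * ‖((1:ℝ), g a) - ((1:ℝ), g b)‖ :=
            ContinuousLinearMap.le_opNorm _ _
        _ ≤ B * (M * ‖a - b‖) := by
            apply mul_le_mul (hF1 _) _ (norm_nonneg _) hB0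
            have : (((1:ℝ), g a) - ((1:ℝ), g b)) = ((0:ℝ), g a - g b) := by
              rw [Prod.mk_sub_mk]; simp
            rw [this, Prod.norm_def]
            simp only [norm_zero]
            exact max_le (by positivity) (hglip a ha b hb)
    calc ‖(fderiv ℝ F (a, y a) - fderiv ℝ F (b, y b)) ((1:ℝ), g a)
          + fderiv ℝ F (b, y b) (((1:ℝ), g a) - ((1:ℝ), g b))‖
        ≤ (B * ((1 + B) * ‖a - b‖)) * (1 + B) + B * (M * ‖a - b‖) :=
          le_trans (norm_add_le _ _) (add_le_add h1 h2)
      _ = L * ‖a - b‖ := by rw [hLdef, hMdef]; ring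
  -- the relevant interval
  obtain ⟨ht0, htT⟩ := ht
  set J := Set.Icc t (t + Δt) with hJdef
  have hJs : J ⊆ s := Set.Icc_subset_Icc ht0 (by linarith)
  have hyJ : ∀ u ∈ J, HasDerivWithinAt y (g u) J u := fun u hu =>
    (hy' u (hJs hu)).mono hJs
  have hgJ : ∀ u ∈ J, HasDerivWithinAt g (G u) J u := fun u hu =>
    (hg' u (hJs hu)).mono hJs
  have htJ : t ∈ J := Set.left_mem_Icc.2 (by linarith)
  have ht'J : t + Δt ∈ J := Set.right_mem_Icc.2 (by linarith)
  have hmJ : t + Δt / 2 ∈ J := ⟨by linarith, by linarith⟩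
  have hnormJ : ∀ u ∈ J, ‖u - t‖ ≤ Δt := by
    intro u hu
    rw [Real.norm_eq_abs, abs_of_nonneg (by linarith [hu.1])]
    linarith [hu.2]
  have hnormJm : ∀ u ∈ J, ‖u - (t + Δt / 2)‖ ≤ Δt := by
    intro u hu
    rw [Real.norm_eq_abs, abs_le]
    constructor <;> [linarith [hu.1]; linarith [hu.2]]
  set m := t + Δt / 2 with hmdef
  -- E1 : ‖ŷ - y m‖
  have hE1 : ‖(y t + (Δt / 2) • g t) - y m‖ ≤ M * Δt * (Δt / 2) := by
    have hK : ∀ u ∈ J, ‖g u - g t‖ ≤ M * Δt := fun u hu =>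
      le_trans (hglip u (hJs hu) t (hJs htJ))
        (mul_le_mul_of_nonneg_left (hnormJ u hu) hM0)
    have := alf_taylor1 (convex_Icc _ _) hyJ htJ hmJ hK
    have heq : y m - y t - (m - t) • g t = -((y t + (Δt / 2) • g t) - y m) := by
      have : m - t = Δt / 2 := by rw [hmdef]; ring
      rw [this]; abel
    rw [heq, norm_neg] at this
    refine le_trans this ?_
    have : ‖m - t‖ = Δt / 2 := by
      rw [hmdef]; rw [show t + Δt / 2 - t = Δt / 2 by ring,
        Real.norm_eq_abs, abs_of_pos (by linarith)]
    rw [this]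
  -- E2 : ‖v̂ - g m‖
  have hE2 : ‖F (m, y t + (Δt / 2) • g t) - g m‖ ≤ B * (M * Δt * (Δt / 2)) := by
    have h := hFlip (m, y t + (Δt / 2) • g t) (m, y m)
    rw [← hgF m] at h
    refine le_trans h ?_
    apply mul_le_mul_of_nonneg_left _ hB0
    rw [Prod.mk_sub_mk, Prod.norm_def]
    simp only [sub_self, norm_zero]
    exact max_le (by positivity) hE1
  -- Taylor expansions of g on J
  have hgTm : ∀ x ∈ J, ‖g x - g m - (x - m) • G m‖ ≤ L * Δt * ‖x - m‖ := by
    intro x hx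
    exact alf_taylor1 (convex_Icc _ _) hgJ hmJ hx (fun u hu =>
      le_trans (hGlip u (hJs hu) m (hJs hmJ))
        (mul_le_mul_of_nonneg_left (hnormJm u hu) hL0))
  have hgTt : ∀ x ∈ J, ‖g x - g t - (x - t) • G t‖ ≤ L * Δt * ‖x - t‖ := by
    intro x hx
    exact alf_taylor1 (convex_Icc _ _) hgJ htJ hx (fun u hu =>
      le_trans (hGlip u (hJs hu) t (hJs htJ))
        (mul_le_mul_of_nonneg_left (hnormJ u hu) hL0))
  -- second-order Taylor for y
  have hE3 : ‖y (t + Δt) - y t - Δt • g t - (Δt ^ 2 / 2) • G t‖ ≤ L * Δt ^ 2 * Δt := by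
    have hψ : ∀ u ∈ J, HasDerivWithinAt
        (fun u => y u - (u - t) • g t - ((u - t) ^ 2 / 2) • G t)
        (g u - g t - (u - t) • G t) J u := by
      intro u hu
      have h1 : HasDerivWithinAt (fun u : ℝ => (u - t) • g t) ((1:ℝ) • g t) J u := by
        exact (((hasDerivAt_id u).sub_const t).smul_const (g t)).hasDerivWithinAt
      have hsc : HasDerivAt (fun u : ℝ => (u - t) ^ 2 / 2) (u - t) u := by
        have := (((hasDerivAt_id u).sub_const t).pow 2)
        simpa using this.div_const 2
      have h2 : HasDerivWithinAt (fun u : ℝ => ((u - t) ^ 2 / 2) • G t)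
          ((u - t) • G t) J u := (hsc.smul_const (G t)).hasDerivWithinAt
      have := ((hyJ u hu).sub h1).sub h2
      rwa [one_smul] at this
    have hbound : ∀ u ∈ J, ‖g u - g t - (u - t) • G t‖ ≤ L * Δt * Δt := fun u hu =>
      le_trans (hgTt u hu) (mul_le_mul_of_nonneg_left (hnormJ u hu) (by positivity))
    have key := (convex_Icc t (t + Δt)).norm_image_sub_le_of_norm_hasDerivWithin_le hψ hbound
      htJ ht'J
    refine le_trans (le_of_eq ?_) (le_trans key (le_of_eq ?_))
    · congr 1
      show y (t + Δt) - y t - Δt • g t - (Δt ^ 2 / 2) • G t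
          = (y (t + Δt) - (t + Δt - t) • g t - ((t + Δt - t) ^ 2 / 2) • G t)
            - (y t - (t - t) • g t - ((t - t) ^ 2 / 2) • G t)
      rw [show t + Δt - t = Δt from by ring, sub_self]
      norm_num
      abel
    · rw [show t + Δt - t = Δt from by ring, Real.norm_eq_abs, abs_of_pos hΔ]
      ring
  -- key algebraic decompositions
  have hgoal1 : (y t + Δt • f m (y t + (Δt / 2) • f t (y t))) - y (t + Δt)
      = Δt • (F (m, y t + (Δt / 2) • g t) - g m)
        + Δt • (g m - g t - (m - t) • G t)
        - (y (t + Δt) - y t - Δt • g t - (Δt ^ 2 / 2) • G t) := by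
    show (y t + Δt • F (m, y t + (Δt / 2) • g t)) - y (t + Δt) = _
    rw [show m - t = Δt / 2 from by rw [hmdef]; ring]
    module
  have hgoal2 : ((2:ℝ) • f m (y t + (Δt / 2) • f t (y t)) - f t (y t)) - f (t + Δt) (y (t + Δt))
      = (2:ℝ) • (F (m, y t + (Δt / 2) • g t) - g m)
        - (g (t + Δt) - g m - ((t + Δt) - m) • G m)
        - (g t - g m - (t - m) • G m) := by
    show ((2:ℝ) • F (m, y t + (Δt / 2) • g t) - g t) - g (t + Δt) = _
    rw [show (t + Δt) - m = Δt / 2 from by rw [hmdef]; ring,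
      show t - m = -(Δt / 2) from by rw [hmdef]; ring]
    module
  have hnm1 : ‖m - t‖ = Δt / 2 := by
    rw [hmdef, show t + Δt / 2 - t = Δt / 2 from by ring, Real.norm_eq_abs,
      abs_of_pos (by linarith)]
  have hnm2 : ‖(t + Δt) - m‖ = Δt / 2 := by
    rw [hmdef, show t + Δt - (t + Δt / 2) = Δt / 2 from by ring, Real.norm_eq_abs,
      abs_of_pos (by linarith)]
  have hnm3 : ‖t - m‖ = Δt / 2 := by
    rw [hmdef, show t - (t + Δt / 2) = -(Δt / 2) from by ring, norm_neg, Real.norm_eq_abs,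
      abs_of_pos (by linarith)]
  have habs : ‖Δt‖ = Δt := by rw [Real.norm_eq_abs, abs_of_pos hΔ]
  constructor
  · rw [hgoal1]
    calc ‖Δt • (F (m, y t + (Δt / 2) • g t) - g m)
          + Δt • (g m - g t - (m - t) • G t)
          - (y (t + Δt) - y t - Δt • g t - (Δt ^ 2 / 2) • G t)‖
        ≤ ‖Δt • (F (m, y t + (Δt / 2) • g t) - g m)‖
          + ‖Δt • (g m - g t - (m - t) • G t)‖
          + ‖y (t + Δt) - y t - Δt • g t - (Δt ^ 2 / 2) • G t‖ := by
          exact le_trans (norm_sub_le _ _) (by gcongr; exact norm_add_le _ _)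
      _ ≤ Δt * (B * (M * Δt * (Δt / 2))) + Δt * (L * Δt * (Δt / 2)) + L * Δt ^ 2 * Δt := by
          refine add_le_add (add_le_add ?_ ?_) hE3
          · rw [norm_smul, habs]
            exact mul_le_mul_of_nonneg_left hE2 (le_of_lt hΔ)
          · rw [norm_smul, habs]
            refine mul_le_mul_of_nonneg_left ?_ (le_of_lt hΔ)
            exact le_trans (hgTt m hmJ) (by rw [hnm1])
      _ ≤ (B * M + 2 * L + 1) * Δt ^ 3 := by
          have h3 : (0:ℝ) < Δt ^ 3 := pow_pos hΔ 3
          nlinarith [mul_nonneg (mul_nonneg hB0 hM0) h3.le, mul_nonneg hL0 h3.le, h3]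
  · rw [hgoal2]
    calc ‖(2:ℝ) • (F (m, y t + (Δt / 2) • g t) - g m)
          - (g (t + Δt) - g m - ((t + Δt) - m) • G m)
          - (g t - g m - (t - m) • G m)‖
        ≤ ‖(2:ℝ) • (F (m, y t + (Δt / 2) • g t) - g m)‖
          + ‖g (t + Δt) - g m - ((t + Δt) - m) • G m‖
          + ‖g t - g m - (t - m) • G m‖ := by
          exact le_trans (norm_sub_le _ _) (by gcongr; exact norm_sub_le _ _)
      _ ≤ 2 * (B * (M * Δt * (Δt / 2))) + L * Δt * (Δt / 2) + L * Δt * (Δt / 2) := by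
          refine add_le_add (add_le_add ?_ ?_) (le_trans (hgTm t htJ) (by rw [hnm3]))
          · rw [norm_smul]
            simp only [Real.norm_ofNat]
            exact mul_le_mul_of_nonneg_left hE2 (by norm_num)
          · exact le_trans (hgTm (t + Δt) ht'J) (by rw [hnm2])
      _ ≤ (B * M + 2 * L + 1) * Δt ^ 2 := by
          have h2 : (0:ℝ) < Δt ^ 2 := pow_pos hΔ 2
          nlinarith [mul_nonneg (mul_nonneg hB0 hM0) h2.le, mul_nonneg hL0 h2.le, h2]
end

section
/- Let T > 0, d ∈ ℕ and C > 0. Let (x_n)_{n∈ℕ} be a sequence of continuously differentiable functions x_n : [0,T] → ℝ^d such that for every n, sup_{t∈[0,T]} ‖x_n(t)‖ + sup_{t∈[0,T]} ‖x_n'(t)‖ + TV(x_n'; [0,T]) ≤ C, where TV denotes total variation on [0,T]. Then there exist a subsequence (x_{n_k}) and a Lipschitz continuous function x : [0,T] → ℝ^d of bounded variation such that sup_{t∈[0,T]} ‖x_{n_k}(t) − x(t)‖ → 0 and TV(x_{n_k} − x; [0,T]) → 0 as k → ∞. (A family of paths that is bounded in sup norm, with derivatives bounded in sup norm and of uniformly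 bounded variation, is relatively compact with respect to the norm ‖·‖_∞ + |·|_BV.) -/
open Filter

open Set MeasureTheory


lemma evar_le_of_incr {E : Type*} [NormedAddCommGroup E] {f : ℝ → E} {s : Set ℝ}
    {H : ℝ → ℝ} {M : ℝ}
    (hd : ∀ a ∈ s, ∀ b ∈ s, a ≤ b → dist (f a) (f b) ≤ H b - H a)
    (hHM : ∀ a ∈ s, ∀ b ∈ s, a ≤ b → H b - H a ≤ M) :
    eVariationOn f s ≤ ENNReal.ofReal M := by
  rw [eVariationOn]
  refine iSup_le ?_
  rintro ⟨m, u, hu, hus⟩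
  calc ∑ i ∈ Finset.range m, edist (f (u (i+1))) (f (u i))
      = ENNReal.ofReal (∑ i ∈ Finset.range m, dist (f (u (i+1))) (f (u i))) := by
        rw [ENNReal.ofReal_sum_of_nonneg (fun i _ => dist_nonneg)]
        exact Finset.sum_congr rfl fun i _ => (edist_dist _ _)
    _ ≤ ENNReal.ofReal M := by
        apply ENNReal.ofReal_le_ofReal
        calc ∑ i ∈ Finset.range m, dist (f (u (i+1))) (f (u i))
            ≤ ∑ i ∈ Finset.range m, (H (u (i+1)) - H (u i)) :=
              Finset.sum_le_sum fun i _ => by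
                rw [dist_comm]; exact hd _ (hus i) _ (hus (i+1)) (hu (Nat.le_succ i))
          _ = H (u m) - H (u 0) := Finset.sum_range_sub (fun i => H (u i)) m
          _ ≤ M := hHM _ (hus 0) _ (hus m) (hu (Nat.zero_le m))

lemma le_biSup_of_mem {S : Set ℝ} {g : ℝ → ℝ} (hM : ∃ M, ∀ t ∈ S, g t ≤ M)
    {t : ℝ} (ht : t ∈ S) : g t ≤ ⨆ t ∈ S, g t := by
  obtain ⟨M, hM⟩ := hM
  have bdd : BddAbove (Set.range fun s => ⨆ _ : s ∈ S, g s) := by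
    refine ⟨max M 0, ?_⟩
    rintro _ ⟨s, rfl⟩
    by_cases hs : s ∈ S
    · simp only []
      rw [ciSup_pos (p := s ∈ S) (f := fun _ => g s) hs]
      exact le_max_of_le_left (hM s hs)
    · haveI : IsEmpty (s ∈ S) := ⟨hs⟩
      simp only []
      rw [Real.iSup_of_isEmpty]
      exact le_max_right _ _
  calc g t = ⨆ _ : t ∈ S, g t := (ciSup_pos (p := t ∈ S) (f := fun _ => g t) ht).symm
    _ ≤ ⨆ s ∈ S, g s := le_ciSup bdd t

lemma helly_component {T : ℝ} (hT : 0 < T) {u : ℕ → ℝ} (hu : ∀ j, u j ∈ Set.Icc 0 T)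
    (hdense : ∀ ⦃s t : ℝ⦄, 0 ≤ s → t ≤ T → s < t → ∃ j, s < u j ∧ u j < t)
    {h : ℕ → ℝ → ℝ} (hmono : ∀ k, MonotoneOn (h k) (Set.Icc 0 T))
    {B : ℝ} (hB : ∀ k, ∀ t ∈ Set.Icc 0 T, |h k t| ≤ B)
    {G : ℕ → ℝ} (hG : ∀ j, Tendsto (fun k => h k (u j)) atTop (nhds (G j))) :
    ∃ g : ℝ → ℝ, Monotone g ∧
      ∀ t ∈ Set.Ioo 0 T, ContinuousAt g t → Tendsto (fun k => h k t) atTop (nhds (g t)) := by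
  have hGB : ∀ j, |G j| ≤ B := fun j => by
    have h1 : G j ≤ B :=
      le_of_tendsto (hG j) (Eventually.of_forall fun k => (abs_le.1 (hB k _ (hu j))).2)
    have h2 : -B ≤ G j :=
      ge_of_tendsto (hG j) (Eventually.of_forall fun k => (abs_le.1 (hB k _ (hu j))).1)
    exact abs_le.2 ⟨h2, h1⟩
  have hne : ∀ t : ℝ, t < T → (G '' {j | t < u j}).Nonempty := by
    intro t ht
    by_cases h0 : 0 ≤ t
    · obtain ⟨j, hj1, _⟩ := hdense h0 le_rfl ht
      exact ⟨G j, j, hj1, rfl⟩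
    · exact ⟨G 0, 0, lt_of_lt_of_le (lt_of_not_ge h0) (hu 0).1, rfl⟩
  have hbdd : ∀ t : ℝ, BddBelow (G '' {j | t < u j}) :=
    fun t => ⟨-B, by rintro y ⟨j, _, rfl⟩; exact (abs_le.1 (hGB j)).1⟩
  have hub : ∀ t : ℝ, t < T → sInf (G '' {j | t < u j}) ≤ B := by
    intro t ht
    obtain ⟨y, hy⟩ := hne t ht
    obtain ⟨j, hj, rfl⟩ := hy
    exact le_trans (csInf_le (hbdd t) ⟨j, hj, rfl⟩) (abs_le.1 (hGB j)).2
  refine ⟨fun t => if t < T then sInf (G '' {j | t < u j}) else B + 1, ?_, ?_⟩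
  · -- monotone
    intro a b hab
    by_cases hb : b < T
    · have ha : a < T := lt_of_le_of_lt hab hb
      simp only [if_pos ha, if_pos hb]
      exact csInf_le_csInf (hbdd a) (hne b hb)
        (Set.image_mono fun j hj => lt_of_le_of_lt hab hj)
    · by_cases ha : a < T
      · simp only [if_pos ha, if_neg hb]
        linarith [hub a ha]
      · simp only [if_neg ha, if_neg hb, le_refl]
  · -- convergence at continuity points
    intro t ht hcont
    have hgt : (if t < T then sInf (G '' {j | t < u j}) else B + 1) = sInf (G '' {j | t < u j}) :=
      if_pos ht.2
    rw [Metric.tendsto_atTop]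
    intro ε hε
    -- left point s
    obtain ⟨δ, hδ, hδ'⟩ := Metric.continuousAt_iff.1 hcont (ε/2) (half_pos hε)
    set s := max (t - δ/2) (t/2) with hs
    have hs0 : 0 < s := lt_max_of_lt_right (half_pos ht.1)
    have hst : s < t := max_lt (by linarith) (by linarith [ht.1])
    have hsd : dist s t < δ := by
      rw [Real.dist_eq, abs_of_nonpos (by linarith)]
      have : t - δ/2 ≤ s := le_max_left _ _
      linarith
    have hgs := hδ' hsd
    rw [hgt] at hgs
    rw [if_pos (hst.trans ht.2), Real.dist_eq] at hgs
    have hgs' : sInf (G '' {j | t < u j}) - ε/2 < sInf (G '' {j | s < u j}) := by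
      have := (abs_lt.1 hgs).1; linarith
    obtain ⟨j1, hj1s, hj1t⟩ := hdense hs0.le ht.2.le hst
    have hGj1 : sInf (G '' {j | t < u j}) - ε/2 < G j1 :=
      lt_of_lt_of_le hgs' (csInf_le (hbdd s) ⟨j1, hj1s, rfl⟩)
    obtain ⟨y, ⟨j2, hj2, rfl⟩, hy2⟩ := Real.lt_sInf_add_pos (hne t ht.2) (half_pos hε)
    have e1 := Metric.tendsto_atTop.1 (hG j1) (ε/2) (half_pos hε)
    have e2 := Metric.tendsto_atTop.1 (hG j2) (ε/2) (half_pos hε)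
    obtain ⟨N1, hN1⟩ := e1
    obtain ⟨N2, hN2⟩ := e2
    refine ⟨max N1 N2, fun k hk => ?_⟩
    have hk1 := hN1 k (le_trans (le_max_left _ _) hk)
    have hk2 := hN2 k (le_trans (le_max_right _ _) hk)
    rw [Real.dist_eq] at hk1 hk2 ⊢
    have htS : t ∈ Set.Icc 0 T := ⟨ht.1.le, ht.2.le⟩
    have l1 : h k (u j1) ≤ h k t := hmono k (hu j1) htS hj1t.le
    have l2 : h k t ≤ h k (u j2) := hmono k htS (hu j2) hj2.le
    beta_reduce
    rw [hgt]
    have a1 := (abs_lt.1 hk1).1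
    have a2 := (abs_lt.1 hk2).2
    rw [abs_lt]
    constructor <;> [linarith; linarith]


/-- **Relative compactness of uniformly bounded families of paths with derivatives of
uniformly bounded variation.** If continuously differentiable paths `x n : [0,T] → ℝ^d`
satisfy `sup‖x n‖ + sup‖(x n)'‖ + TV((x n)'; [0,T]) ≤ C` uniformly in `n`, then some
subsequence converges, both uniformly on `[0,T]` and in bounded-variation seminorm, to a
Lipschitz continuous path of bounded variation. -/
theorem bounded_derivative_variation_paths_relatively_compact
    (T : ℝ) (hT : 0 < T) (d : ℕ) (C : ℝ) (hC : 0 < C)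
    (x x' : ℕ → ℝ → Fin d → ℝ)
    (hderiv : ∀ n, ∀ t ∈ Set.Icc (0:ℝ) T,
      HasDerivWithinAt (x n) (x' n t) (Set.Icc 0 T) t)
    (hcont : ∀ n, ContinuousOn (x' n) (Set.Icc (0:ℝ) T))
    (hBV : ∀ n, BoundedVariationOn (x' n) (Set.Icc (0:ℝ) T))
    (hbound : ∀ n,
      (⨆ t ∈ Set.Icc (0:ℝ) T, ‖x n t‖) + (⨆ t ∈ Set.Icc (0:ℝ) T, ‖x' n t‖)
        + (eVariationOn (x' n) (Set.Icc (0:ℝ) T)).toReal ≤ C) :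
    ∃ φ : ℕ → ℕ, StrictMono φ ∧
      ∃ (xlim : ℝ → Fin d → ℝ) (K : NNReal),
        LipschitzOnWith K xlim (Set.Icc (0:ℝ) T) ∧
        BoundedVariationOn xlim (Set.Icc (0:ℝ) T) ∧
        TendstoUniformlyOn (fun k => x (φ k)) xlim atTop (Set.Icc (0:ℝ) T) ∧
        Tendsto (fun k => eVariationOn (fun t => x (φ k) t - xlim t) (Set.Icc (0:ℝ) T))
          atTop (nhds 0) := by
  have h0S : (0:ℝ) ∈ Set.Icc (0:ℝ) T := ⟨le_rfl, hT.le⟩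
  have hTS : T ∈ Set.Icc (0:ℝ) T := ⟨hT.le, le_rfl⟩
  -- continuity of x n
  have hxc : ∀ n, ContinuousOn (x n) (Set.Icc (0:ℝ) T) :=
    fun n t ht => (hderiv n t ht).continuousWithinAt
  -- split the bound into three
  have hsups : ∀ n, (⨆ t ∈ Set.Icc (0:ℝ) T, ‖x n t‖) ≤ C ∧
      (⨆ t ∈ Set.Icc (0:ℝ) T, ‖x' n t‖) ≤ C ∧
      (eVariationOn (x' n) (Set.Icc (0:ℝ) T)).toReal ≤ C := by
    intro n
    have h1 : (0:ℝ) ≤ ⨆ t ∈ Set.Icc (0:ℝ) T, ‖x n t‖ :=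
      Real.iSup_nonneg fun t => Real.iSup_nonneg fun _ => norm_nonneg _
    have h2 : (0:ℝ) ≤ ⨆ t ∈ Set.Icc (0:ℝ) T, ‖x' n t‖ :=
      Real.iSup_nonneg fun t => Real.iSup_nonneg fun _ => norm_nonneg _
    have h3 : (0:ℝ) ≤ (eVariationOn (x' n) (Set.Icc (0:ℝ) T)).toReal := ENNReal.toReal_nonneg
    refine ⟨?_, ?_, ?_⟩ <;> [skip; skip; skip] <;> linarith [hbound n]
  -- pointwise bounds
  have hxb : ∀ n, ∀ t ∈ Set.Icc (0:ℝ) T, ‖x n t‖ ≤ C := by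
    intro n t ht
    have hb := le_biSup_of_mem (g := fun t => ‖x n t‖)
      (isCompact_Icc.exists_bound_of_continuousOn (hxc n)) ht
    exact hb.trans (hsups n).1
  have hx'b : ∀ n, ∀ t ∈ Set.Icc (0:ℝ) T, ‖x' n t‖ ≤ C := by
    intro n t ht
    have hb := le_biSup_of_mem (g := fun t => ‖x' n t‖)
      (isCompact_Icc.exists_bound_of_continuousOn (hcont n)) ht
    exact hb.trans (hsups n).2.1
  have hvarb : ∀ n, eVariationOn (x' n) (Set.Icc (0:ℝ) T) ≤ ENNReal.ofReal C := by
    intro n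
    rw [← ENNReal.ofReal_toReal (hBV n)]
    exact ENNReal.ofReal_le_ofReal (hsups n).2.2
  -- componentwise bounded variation
  have hvari : ∀ n (i : Fin d),
      eVariationOn (fun t => x' n t i) (Set.Icc (0:ℝ) T) ≤ ENNReal.ofReal C := by
    intro n i
    have hl := ((LipschitzWith.eval (α := fun _ : Fin d => ℝ) i).lipschitzOnWith
      (s := Set.univ)).comp_eVariationOn_le (g := x' n) (s := Set.Icc (0:ℝ) T)
      (Set.mapsTo_univ _ _)
    exact hl.trans (by simpa using hvarb n)
  have hBVi : ∀ n (i : Fin d),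
      LocallyBoundedVariationOn (fun t => x' n t i) (Set.Icc (0:ℝ) T) := by
    intro n i
    exact (BoundedVariationOn.locallyBoundedVariationOn
      (ne_top_of_le_ne_top ENNReal.ofReal_ne_top (hvari n i)))
  -- the monotone pieces
  set P : ℕ → Fin d → ℝ → ℝ :=
    fun n i => variationOnFromTo (fun t => x' n t i) (Set.Icc (0:ℝ) T) 0 with hP
  have hPmono : ∀ n i, MonotoneOn (P n i) (Set.Icc (0:ℝ) T) :=
    fun n i => variationOnFromTo.monotoneOn (hBVi n i) h0S
  have hQmono : ∀ n i, MonotoneOn (fun t => P n i t - x' n t i) (Set.Icc (0:ℝ) T) :=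
    fun n i => variationOnFromTo.sub_self_monotoneOn (hBVi n i) h0S
  have hx'ib : ∀ n i, ∀ t ∈ Set.Icc (0:ℝ) T, |x' n t i| ≤ C := by
    intro n i t ht
    exact le_trans (by simpa using norm_le_pi_norm (x' n t) i) (hx'b n t ht)
  have hPb : ∀ n i, ∀ t ∈ Set.Icc (0:ℝ) T, |P n i t| ≤ C := by
    intro n i t ht
    have h0 : 0 ≤ P n i t := variationOnFromTo.nonneg_of_le _ _ ht.1
    have h1 : P n i t ≤ C := by
      rw [hP]
      simp only
      rw [variationOnFromTo.eq_of_le _ _ ht.1]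
      refine ENNReal.toReal_le_of_le_ofReal hC.le ?_
      exact le_trans (eVariationOn.mono _ Set.inter_subset_left) (hvari n i)
    rw [abs_le]; exact ⟨by linarith, h1⟩
  -- dense sequence in the interval
  haveI : Nonempty (Set.Icc (0:ℝ) T) := ⟨⟨0, h0S⟩⟩
  set u : ℕ → ℝ := fun j => (TopologicalSpace.denseSeq (Set.Icc (0:ℝ) T) j : ℝ) with hudef
  have huS : ∀ j, u j ∈ Set.Icc (0:ℝ) T := fun j => (TopologicalSpace.denseSeq (Set.Icc (0:ℝ) T) j).2
  have hdense : ∀ ⦃s t : ℝ⦄, 0 ≤ s → t ≤ T → s < t → ∃ j, s < u j ∧ u j < t := by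
    intro s t hs ht hst
    have hd := TopologicalSpace.denseRange_denseSeq (Set.Icc (0:ℝ) T)
    have hopen : IsOpen {y : Set.Icc (0:ℝ) T | (y:ℝ) ∈ Set.Ioo s t} :=
      isOpen_Ioo.preimage continuous_subtype_val
    have hne : {y : Set.Icc (0:ℝ) T | (y:ℝ) ∈ Set.Ioo s t}.Nonempty :=
      ⟨⟨(s+t)/2, ⟨by linarith, by linarith⟩⟩, ⟨by linarith, by linarith⟩⟩
    obtain ⟨j, hj⟩ := hd.exists_mem_open hopen hne
    exact ⟨j, hj.1, hj.2⟩
  -- the big countable family of reals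
  set F : ℕ → ((Fin d × Bool × ℕ) ⊕ Fin d) → ℝ := fun n idx =>
    match idx with
    | .inl (i, true, j) => P n i (u j)
    | .inl (i, false, j) => P n i (u j) - x' n (u j) i
    | .inr i => x n 0 i
    with hF
  have hFb : ∀ n idx, F n idx ∈ Set.Icc (-(2*C)) (2*C) := by
    intro n idx
    rw [Set.mem_Icc, ← abs_le]
    match idx with
    | .inl (i, true, j) => exact le_trans (hPb n i _ (huS j)) (by linarith)
    | .inl (i, false, j) =>
        calc |P n i (u j) - x' n (u j) i| ≤ |P n i (u j)| + |x' n (u j) i| := abs_sub _ _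
          _ ≤ 2*C := by linarith [hPb n i _ (huS j), hx'ib n i _ (huS j)]
    | .inr i =>
        exact le_trans (le_trans (by simpa using norm_le_pi_norm (x n 0) i) (hxb n 0 h0S))
          (by linarith)
  obtain ⟨G, -, φ, hφ, hFG⟩ :=
    (isCompact_univ_pi fun _ : ((Fin d × Bool × ℕ) ⊕ Fin d) =>
      isCompact_Icc (a := -(2*C)) (b := 2*C)).tendsto_subseq
      (fun n => Set.mem_univ_pi.2 fun idx => hFb n idx)
  have hGpt : ∀ idx, Tendsto (fun k => F (φ k) idx) atTop (nhds (G idx)) :=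
    fun idx => tendsto_pi_nhds.1 hFG idx
  -- limit of initial values
  set a : Fin d → ℝ := fun i => G (.inr i) with ha
  have haconv : Tendsto (fun k => x (φ k) 0) atTop (nhds a) :=
    tendsto_pi_nhds.2 fun i => hGpt (.inr i)
  -- Helly limits for each component
  have hhp : ∀ i : Fin d, ∃ g : ℝ → ℝ, Monotone g ∧
      ∀ t ∈ Set.Ioo 0 T, ContinuousAt g t →
        Tendsto (fun k => P (φ k) i t) atTop (nhds (g t)) :=
    fun i => helly_component hT huS hdense (fun k => hPmono (φ k) i)
      (fun k t ht => hPb (φ k) i t ht) (fun j => hGpt (.inl (i, true, j)))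
  have hhq : ∀ i : Fin d, ∃ g : ℝ → ℝ, Monotone g ∧
      ∀ t ∈ Set.Ioo 0 T, ContinuousAt g t →
        Tendsto (fun k => P (φ k) i t - x' (φ k) t i) atTop (nhds (g t)) := by
    intro i
    refine helly_component hT huS hdense (fun k => hQmono (φ k) i)
      (B := 2*C) (fun k t ht => ?_) (fun j => hGpt (.inl (i, false, j)))
    calc |P (φ k) i t - x' (φ k) t i| ≤ |P (φ k) i t| + |x' (φ k) t i| := abs_sub _ _
      _ ≤ 2*C := by linarith [hPb (φ k) i t ht, hx'ib (φ k) i t ht]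
  choose gp hgpm hgpc using hhp
  choose gq hgqm hgqc using hhq
  -- bad set
  set Dbad : Set ℝ :=
    (⋃ i, {t | ¬ContinuousAt (gp i) t}) ∪ (⋃ i, {t | ¬ContinuousAt (gq i) t}) with hDbad
  have hDcount : Dbad.Countable :=
    Set.Countable.union
      (Set.countable_iUnion fun i => (hgpm i).countable_not_continuousAt)
      (Set.countable_iUnion fun i => (hgqm i).countable_not_continuousAt)
  -- the limit derivative
  set v : ℝ → Fin d → ℝ := fun t i => max (-C) (min C (gp i t - gq i t)) with hv
  have hvb : ∀ t, ‖v t‖ ≤ C := by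
    intro t
    rw [pi_norm_le_iff_of_nonneg hC.le]
    intro i
    rw [Real.norm_eq_abs, abs_le]
    constructor
    · exact le_max_left _ _
    · exact max_le (by linarith) (min_le_left _ _)
  have hconv : ∀ t ∈ Set.Ioo (0:ℝ) T, t ∉ Dbad →
      Tendsto (fun k => x' (φ k) t) atTop (nhds (v t)) := by
    intro t ht htD
    rw [tendsto_pi_nhds]
    intro i
    have hcp : ContinuousAt (gp i) t := by
      by_contra hcc
      exact htD (Or.inl (Set.mem_iUnion.2 ⟨i, hcc⟩))
    have hcq : ContinuousAt (gq i) t := by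
      by_contra hcc
      exact htD (Or.inr (Set.mem_iUnion.2 ⟨i, hcc⟩))
    have h1 := hgpc i t ht hcp
    have h2 := hgqc i t ht hcq
    have h3 : Tendsto (fun k => x' (φ k) t i) atTop (nhds (gp i t - gq i t)) := by
      have := h1.sub h2
      simpa using this
    have htS : t ∈ Set.Icc (0:ℝ) T := ⟨ht.1.le, ht.2.le⟩
    have hmem : gp i t - gq i t ∈ Set.Icc (-C) C := by
      constructor
      · exact ge_of_tendsto h3 (Eventually.of_forall fun k =>
          (abs_le.1 (hx'ib (φ k) i t htS)).1)
      · exact le_of_tendsto h3 (Eventually.of_forall fun k =>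
          (abs_le.1 (hx'ib (φ k) i t htS)).2)
    have hvt : v t i = gp i t - gq i t := by
      rw [hv]
      simp only
      rw [min_eq_right hmem.2, max_eq_right hmem.1]
    rw [hvt]
    exact h3
  -- interval inclusion
  have hsub : ∀ {c e : ℝ}, c ∈ Set.Icc (0:ℝ) T → e ∈ Set.Icc (0:ℝ) T →
      Set.uIcc c e ⊆ Set.Icc (0:ℝ) T := by
    intro c e hc he
    rw [← Set.uIcc_of_le hT.le]
    exact Set.uIcc_subset_uIcc (by rwa [Set.uIcc_of_le hT.le]) (by rwa [Set.uIcc_of_le hT.le])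
  -- integrability
  have hvmeas : Measurable v := by
    refine measurable_pi_lambda _ fun i => ?_
    exact measurable_const.max (measurable_const.min
      (((hgpm i).measurable).sub ((hgqm i).measurable)))
  have hvint : ∀ c e : ℝ, IntervalIntegrable v volume c e := by
    intro c e
    constructor <;>
    · exact Integrable.mono' (integrableOn_const measure_Ioc_lt_top.ne enorm_ne_top)
        hvmeas.aestronglyMeasurable (ae_of_all _ fun t => hvb t)
  have hx'int : ∀ n {c e : ℝ}, c ∈ Set.Icc (0:ℝ) T → e ∈ Set.Icc (0:ℝ) T →
      IntervalIntegrable (x' n) volume c e :=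
    fun n c e hc he => ((hcont n).mono (hsub hc he)).intervalIntegrable
  -- FTC
  have hx_eq : ∀ n, ∀ t ∈ Set.Icc (0:ℝ) T, x n t = x n 0 + ∫ s in (0:ℝ)..t, x' n s := by
    intro n t ht
    have hder : ∀ z ∈ Set.Ioo (0:ℝ) t, HasDerivWithinAt (x n) (x' n z) (Set.Ioi z) z := by
      intro z hz
      have hzS : z ∈ Set.Icc (0:ℝ) T := ⟨hz.1.le, (hz.2.trans_le ht.2).le⟩
      exact ((hderiv n z hzS).hasDerivAt
        (Icc_mem_nhds hz.1 (hz.2.trans_le ht.2))).hasDerivWithinAt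
    have heq := intervalIntegral.integral_eq_sub_of_hasDeriv_right_of_le ht.1
      ((hxc n).mono (Set.Icc_subset_Icc le_rfl ht.2)) hder (hx'int n h0S ht)
    rw [heq]; abel
  -- the limit path
  set xlim : ℝ → Fin d → ℝ := fun t => a + ∫ s in (0:ℝ)..t, v s with hxlim
  have hxlim_sub : ∀ s t : ℝ, xlim t - xlim s = ∫ r in s..t, v r := by
    intro s t
    rw [hxlim]
    simp only
    rw [← intervalIntegral.integral_interval_sub_left (hvint 0 t) (hvint 0 s)]
    abel
  have hxlip : ∀ s t : ℝ, dist (xlim s) (xlim t) ≤ C * |t - s| := by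
    intro s t
    rw [dist_eq_norm, norm_sub_rev, hxlim_sub]
    exact intervalIntegral.norm_integral_le_of_norm_le_const fun r _ => hvb r
  have hlip : LipschitzOnWith C.toNNReal xlim (Set.Icc (0:ℝ) T) := by
    rw [lipschitzOnWith_iff_dist_le_mul]
    intro p _ q _
    have := hxlip p q
    rw [Real.coe_toNNReal _ hC.le, Real.dist_eq, abs_sub_comm]
    exact this
  have hbv : eVariationOn xlim (Set.Icc (0:ℝ) T) ≤ ENNReal.ofReal (C*T) := by
    refine evar_le_of_incr (H := fun t => C * t) (fun p hp q hq hpq => ?_) (fun p hp q hq hpq => ?_)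
    · calc dist (xlim p) (xlim q) ≤ C * |q - p| := hxlip p q
        _ = C*q - C*p := by rw [abs_of_nonneg (by linarith)]; ring
    · beta_reduce
      nlinarith [hp.1, hq.2, hC.le]
  -- the key integral quantities
  set NRM : ℕ → ℝ → ℝ := fun k s => ‖x' (φ k) s - v s‖ with hNRM
  have hNint : ∀ k {c e : ℝ}, c ∈ Set.Icc (0:ℝ) T → e ∈ Set.Icc (0:ℝ) T →
      IntervalIntegrable (NRM k) volume c e :=
    fun k c e hc he => ((hx'int (φ k) hc he).sub (hvint c e)).norm
  set HH : ℕ → ℝ → ℝ := fun k t => ∫ s in (0:ℝ)..t, NRM k s with hHH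
  set I : ℕ → ℝ := fun k => HH k T with hIdef
  have hHHincr : ∀ k, ∀ p ∈ Set.Icc (0:ℝ) T, ∀ q ∈ Set.Icc (0:ℝ) T, p ≤ q →
      HH k q - HH k p = ∫ s in p..q, NRM k s := by
    intro k p hp q hq hpq
    rw [hHH]
    simp only
    rw [← intervalIntegral.integral_interval_sub_left (hNint k h0S hq) (hNint k h0S hp)]
  have hDdist : ∀ k, ∀ p ∈ Set.Icc (0:ℝ) T, ∀ q ∈ Set.Icc (0:ℝ) T, p ≤ q →
      dist (x (φ k) p - xlim p) (x (φ k) q - xlim q) ≤ HH k q - HH k p := by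
    intro k p hp q hq hpq
    have hx2 : x (φ k) q - x (φ k) p = ∫ s in p..q, x' (φ k) s := by
      rw [hx_eq (φ k) q hq, hx_eq (φ k) p hp,
        ← intervalIntegral.integral_interval_sub_left (hx'int (φ k) h0S hq)
          (hx'int (φ k) h0S hp)]
      abel
    have hx3 : (x (φ k) q - xlim q) - (x (φ k) p - xlim p)
        = ∫ s in p..q, (x' (φ k) s - v s) := by
      rw [intervalIntegral.integral_sub (hx'int (φ k) hp hq) (hvint p q), ← hx2,
        ← hxlim_sub p q]
      abel
    rw [dist_eq_norm', hx3, hHHincr k p hp q hq hpq]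
    exact intervalIntegral.norm_integral_le_integral_norm hpq
  have hHposI : ∀ k, ∀ p ∈ Set.Icc (0:ℝ) T, ∀ q ∈ Set.Icc (0:ℝ) T, p ≤ q →
      HH k q - HH k p ≤ I k := by
    intro k p hp q hq hpq
    have n1 : 0 ≤ HH k p := by
      rw [hHH]
      exact intervalIntegral.integral_nonneg hp.1 (fun s _ => norm_nonneg _)
    have n2 : HH k q ≤ HH k T := by
      have h5 := hHHincr k q hq T hTS hq.2
      have n3 : 0 ≤ ∫ s in q..T, NRM k s :=
        intervalIntegral.integral_nonneg hq.2 (fun s _ => norm_nonneg _)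
      linarith
    have : I k = HH k T := rfl
    linarith
  have hIk0 : ∀ k, (0:ℝ) ≤ I k := by
    intro k
    have : I k = ∫ s in (0:ℝ)..T, NRM k s := rfl
    rw [this]
    exact intervalIntegral.integral_nonneg hT.le (fun s _ => norm_nonneg _)
  have hvar_le : ∀ k, eVariationOn (fun t => x (φ k) t - xlim t) (Set.Icc (0:ℝ) T)
      ≤ ENNReal.ofReal (I k) := by
    intro k
    exact evar_le_of_incr (fun p hp q hq hpq => hDdist k p hp q hq hpq)
      (fun p hp q hq hpq => hHposI k p hp q hq hpq)
  -- dominated convergence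
  have hbadnull : ∀ᵐ s ∂(volume.restrict (Set.Ioc (0:ℝ) T)),
      Tendsto (fun k => NRM k s) atTop (nhds 0) := by
    have hz : volume (Dbad ∪ {T} : Set ℝ) = 0 :=
      (hDcount.union (Set.countable_singleton T)).measure_zero _
    have h1 : ∀ᵐ s ∂(volume : Measure ℝ), s ∉ (Dbad ∪ {T} : Set ℝ) :=
      measure_eq_zero_iff_ae_notMem.1 hz
    filter_upwards [ae_restrict_of_ae h1, ae_restrict_mem measurableSet_Ioc] with s hs1 hs2
    have hsO : s ∈ Set.Ioo (0:ℝ) T :=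
      ⟨hs2.1, lt_of_le_of_ne hs2.2 (fun h => hs1 (Or.inr (by simp [h])))⟩
    have hsD : s ∉ Dbad := fun h => hs1 (Or.inl h)
    have h6 := ((hconv s hsO hsD).sub (tendsto_const_nhds (x := v s))).norm
    simpa using h6
  have hNmeas : ∀ k, AEStronglyMeasurable (NRM k) (volume.restrict (Set.Ioc (0:ℝ) T)) := by
    intro k
    have h1 : ContinuousOn (x' (φ k)) (Set.Ioc (0:ℝ) T) :=
      (hcont (φ k)).mono Set.Ioc_subset_Icc_self
    exact ((h1.aestronglyMeasurable measurableSet_Ioc).sub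
      hvmeas.aestronglyMeasurable).norm
  have hNbound : ∀ k, ∀ᵐ s ∂(volume.restrict (Set.Ioc (0:ℝ) T)), ‖NRM k s‖ ≤ 2*C := by
    intro k
    filter_upwards [ae_restrict_mem measurableSet_Ioc] with s hs
    have hsS : s ∈ Set.Icc (0:ℝ) T := Set.Ioc_subset_Icc_self hs
    rw [norm_norm]
    calc ‖x' (φ k) s - v s‖ ≤ ‖x' (φ k) s‖ + ‖v s‖ := norm_sub_le _ _
      _ ≤ 2*C := by linarith [hx'b (φ k) s hsS, hvb s]
  have hItendsto : Tendsto I atTop (nhds 0) := by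
    have hint := MeasureTheory.tendsto_integral_of_dominated_convergence
      (μ := volume.restrict (Set.Ioc (0:ℝ) T)) (F := fun k s => NRM k s)
      (f := fun _ => (0:ℝ)) (bound := fun _ => 2*C) hNmeas
      (integrableOn_const measure_Ioc_lt_top.ne enorm_ne_top) hNbound hbadnull
    rw [integral_zero] at hint
    have heq : I = fun k => ∫ s in Set.Ioc (0:ℝ) T, NRM k s :=
      funext fun k => intervalIntegral.integral_of_le hT.le
    rw [heq]
    exact hint
  -- assemble
  refine ⟨φ, hφ, xlim, C.toNNReal, hlip,
    ne_top_of_le_ne_top ENNReal.ofReal_ne_top hbv, ?_, ?_⟩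
  · -- uniform convergence
    have hxlim0 : xlim 0 = a := by
      rw [hxlim]
      simp
    have hub2 : ∀ k, ∀ t ∈ Set.Icc (0:ℝ) T,
        dist (xlim t) (x (φ k) t) ≤ ‖x (φ k) 0 - a‖ + I k := by
      intro k t ht
      have h1 := hDdist k 0 h0S t ht ht.1
      have h2 : HH k t - HH k 0 ≤ I k := hHposI k 0 h0S t ht ht.1
      rw [hxlim0] at h1
      rw [dist_eq_norm']
      set A := x (φ k) t - xlim t with hA
      set B := x (φ k) 0 - a with hB
      have h4 : A = B + (A - B) := by abel
      have h6 : ‖A‖ ≤ ‖B‖ + ‖A - B‖ := by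
        calc ‖A‖ = ‖B + (A - B)‖ := by rw [← h4]
          _ ≤ ‖B‖ + ‖A - B‖ := norm_add_le _ _
      have h7 : ‖A - B‖ = dist B A := (dist_eq_norm' B A).symm
      rw [h7] at h6
      linarith
    rw [Metric.tendstoUniformlyOn_iff]
    intro ε hε
    have h1 : Tendsto (fun k => ‖x (φ k) 0 - a‖ + I k) atTop (nhds 0) := by
      have h2 : Tendsto (fun k => ‖x (φ k) 0 - a‖) atTop (nhds 0) := by
        have h3 := (haconv.sub (tendsto_const_nhds (x := a))).norm
        simpa using h3
      simpa using h2.add hItendsto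
    filter_upwards [h1.eventually_lt_const hε] with k hk t ht
    exact lt_of_le_of_lt (hub2 k t ht) hk
  · -- variation convergence
    have hof : Tendsto (fun k => ENNReal.ofReal (I k)) atTop (nhds 0) := by
      have := ENNReal.tendsto_ofReal hItendsto
      simpa using this
    exact tendsto_of_tendsto_of_tendsto_of_le_of_le tendsto_const_nhds hof
      (fun k => zero_le) (fun k => hvar_le k)
end

section
/- The LipSwish activation function ρ : ℝ → ℝ defined by ρ(x) = 0.909 · x · σ(x), where σ(x) = 1/(1 + e^{−x}) is the sigmoid function, is Lipschitz continuous with Lipschitz constant at most 1: for all x, y ∈ ℝ, |ρ(x) − ρ(y)| ≤ |x − y|. -/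
lemma lipswish_log_eleven_le : Real.log 11 ≤ 12/5 := by
  rw [Real.log_le_iff_le_exp (by norm_num)]
  have h : (11:ℝ)^(5:ℕ) ≤ Real.exp (12/5) ^ (5:ℕ) := by
    have he : Real.exp (12/5) ^ (5:ℕ) = Real.exp 1 ^ (12:ℕ) := by
      rw [← Real.exp_nat_mul, ← Real.exp_nat_mul]; norm_num
    rw [he]
    have h1 : (2.7182818283:ℝ) ^ (12:ℕ) ≤ Real.exp 1 ^ (12:ℕ) :=
      pow_le_pow_left₀ (by norm_num) Real.exp_one_gt_d9.le 12
    nlinarith [h1]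
  exact le_of_pow_le_pow_left₀ (by norm_num) (Real.exp_pos _).le h

lemma lipswish_key (t : ℝ) (ht : 0 < t) :
    |t * (t + 1 + Real.log t)| ≤ (1000/909) * (t+1)^2 := by
  have hlog_ub : Real.log t ≤ t/11 + 7/5 := by
    have h1 : Real.log (t/11) ≤ t/11 - 1 := Real.log_le_sub_one_of_pos (by positivity)
    rw [Real.log_div ht.ne' (by norm_num)] at h1
    have := lipswish_log_eleven_le
    linarith
  have hlog_lb : 1 - 1/t ≤ Real.log t := by
    have h1 : Real.log (1/t) ≤ 1/t - 1 := Real.log_le_sub_one_of_pos (by positivity)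
    rw [Real.log_div one_ne_zero ht.ne', Real.log_one] at h1
    linarith
  have hinv : t * (1/t) = 1 := by field_simp
  rw [abs_le]
  constructor
  · nlinarith [mul_le_mul_of_nonneg_left hlog_lb ht.le, sq_nonneg (t+1), sq_nonneg t]
  · nlinarith [sq_nonneg (t - 2497/230), mul_le_mul_of_nonneg_left hlog_ub ht.le]

/-- **The LipSwish activation function `ρ(x) = 0.909 · x · σ(x)`, with `σ` the sigmoid,
is Lipschitz with constant at most 1.** -/
theorem lipswish_lipschitz_constant_le_one (x y : ℝ) :
    |0.909 * (x * (1 / (1 + Real.exp (-x)))) - 0.909 * (y * (1 / (1 + Real.exp (-y))))|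
      ≤ |x - y| := by
  set f : ℝ → ℝ := fun z => 0.909 * (z * (1 / (1 + Real.exp (-z)))) with hf
  have hD : ∀ z : ℝ, (0:ℝ) < 1 + Real.exp (-z) := fun z => by positivity
  have hderiv : ∀ z : ℝ, HasDerivAt f
      (0.909 * ((1 + Real.exp (-z) + z * Real.exp (-z)) / (1 + Real.exp (-z))^2)) z := by
    intro z
    have h1 : HasDerivAt (fun w : ℝ => 1 + Real.exp (-w)) (Real.exp (-z) * (-1)) z :=
      ((hasDerivAt_neg z).exp).const_add 1
    have h2 := h1.inv (hD z).ne'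
    have h3 := (hasDerivAt_id z).mul h2
    have h4 := h3.const_mul (0.909 : ℝ)
    convert h4 using 2 with w
    · rfl
    · rfl
    · simp [hf, one_div]
    · have := (hD z).ne'
      simp only [Pi.inv_apply, id]
      field_simp
  have hbound : ∀ z : ℝ, |deriv f z| ≤ 1 := by
    intro z
    rw [(hderiv z).deriv]
    set t := Real.exp z with htdef
    have ht : 0 < t := Real.exp_pos z
    have hE : Real.exp (-z) = 1/t := by rw [Real.exp_neg]; simp [htdef, one_div]
    have hz : z = Real.log t := (Real.log_exp z).symm
    have heq : 0.909 * ((1 + Real.exp (-z) + z * Real.exp (-z)) / (1 + Real.exp (-z))^2)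
        = (909/1000) * (t * (t + 1 + Real.log t)) / (t+1)^2 := by
      rw [hE, ← hz]
      have h1 : (0:ℝ) < t + 1 := by linarith
      field_simp
      ring
    rw [heq, abs_div, abs_mul]
    have h2 : |(t+1)^2| = (t+1)^2 := abs_of_pos (by positivity)
    have h3 : |(909/1000 : ℝ)| = 909/1000 := by norm_num
    rw [h2, h3]
    rw [div_le_one (by positivity)]
    have := lipswish_key t ht
    nlinarith
  have hlip : LipschitzWith 1 f := by
    apply lipschitzWith_of_nnnorm_deriv_le (fun z => (hderiv z).differentiableAt)
    intro z
    rw [← NNReal.coe_le_coe, coe_nnnorm, Real.norm_eq_abs, NNReal.coe_one]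
    exact hbound z
  have := hlip.dist_le_mul x y
  simpa [Real.dist_eq, hf] using this
end
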